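/- arXiv:1405.0595 — 4 statements merged into one kernel-verified Lean document; each statement's English description precedes it below -/
import Mathlib

section
/- Let X₁, X₂ be independent random variables with P(Xᵢ > u) ∼ Lᵢ · u^{αᵢ} · exp(−u²/2) as u → ∞, where L₁, L₂ are positive constants and α₁, α₂ ∈ ℝ. Then P(X₁ + X₂ > u) ∼ L₁ L₂ √π · (u/2)^{α₁+α₂+1} · exp(−u²/4) as u → ∞. -/
open MeasureTheory ProbabilityTheory Filter
open scoped Topology
open Set

noncomputable def gh (L a x : ℝ) : ℝ := L * x ^ a * Real.exp (-x ^ 2 / 2)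

lemma gh_pos {L a : ℝ} (hL : 0 < L) {x : ℝ} (hx : 0 < x) : 0 < gh L a x := by
  unfold gh; positivity

lemma gh_hasDerivAt {L a : ℝ} {x : ℝ} (hx : 0 < x) :
    HasDerivAt (gh L a) ((a / x - x) * gh L a x) x := by
  have h1 : HasDerivAt (fun y : ℝ => L * y ^ a) (L * (a * x ^ (a - 1))) x :=
    (Real.hasDerivAt_rpow_const (Or.inl hx.ne')).const_mul L
  have h0 : HasDerivAt (fun y : ℝ => -y ^ 2 / 2) (-x) x := by
    have := ((hasDerivAt_pow 2 x).neg.div_const 2)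
    simpa using this.congr_deriv (by ring)
  have h2 : HasDerivAt (fun y : ℝ => Real.exp (-y ^ 2 / 2))
      (Real.exp (-x ^ 2 / 2) * (-x)) x := (Real.hasDerivAt_exp _).comp x h0
  have := h1.mul h2
  unfold gh
  refine this.congr_deriv ?_
  have hxa : x ^ (a - 1) = x ^ a / x := by
    rw [Real.rpow_sub hx, Real.rpow_one]
  rw [hxa]
  field_simp
  ring

lemma gh_continuousOn (L a : ℝ) : ContinuousOn (gh L a) (Ioi 0) := by
  intro x hx
  exact ((gh_hasDerivAt (L := L) (a := a) hx).continuousAt).continuousWithinAt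

lemma phi_hasDerivAt {L a u x : ℝ} (h : 0 < u - x) :
    HasDerivAt (fun y => gh L a (u - y)) (((u-x) - a/(u-x)) * gh L a (u - x)) x := by
  have h1 := gh_hasDerivAt (L := L) (a := a) h
  have h2 : HasDerivAt (fun y : ℝ => u - y) (-1) x := (hasDerivAt_id x).const_sub u
  have := h1.comp x h2
  refine this.congr_deriv ?_
  ring

-- continuity of clamped psi
lemma psi_clamp_continuous (L a u U : ℝ) (hU : 0 < U) :
    Continuous (fun s => (max (u - s) U - a/(max (u - s) U)) * gh L a (max (u - s) U)) := by
  have hmax : Continuous (fun s : ℝ => max (u - s) U) :=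
    (continuous_const.sub continuous_id).max continuous_const
  have hin : ∀ s : ℝ, max (u - s) U ∈ Ioi (0:ℝ) := fun s =>
    lt_of_lt_of_le hU (le_max_right _ _)
  have hco : ContinuousOn (fun v : ℝ => (v - a/v) * gh L a v) (Ioi 0) := by
    apply ContinuousOn.mul
    · exact continuousOn_id.sub (continuousOn_const.div continuousOn_id
        (fun v hv => ne_of_gt hv))
    · exact gh_continuousOn L a
  exact hco.comp_continuous hmax hin

lemma rpow_le_exp_mul {a q : ℝ} (ha : 0 ≤ a) (hq : 0 ≤ q) : a ^ q ≤ Real.exp (q * a) := by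
  rcases eq_or_lt_of_le ha with h | h
  · rcases eq_or_lt_of_le hq with hq0 | hq0
    · simp [← hq0, ← h]
    · rw [← h, Real.zero_rpow hq0.ne']
      positivity
  · calc a ^ q = Real.exp (q * Real.log a) := by
          rw [Real.rpow_def_of_pos h, mul_comm]
       _ ≤ Real.exp (q * a) := by
          apply Real.exp_le_exp.2
          apply mul_le_mul_of_nonneg_left _ hq
          calc Real.log a ≤ a - 1 := Real.log_le_sub_one_of_pos h
            _ ≤ a := by linarith

lemma rpow_base_bound {z β t : ℝ} (hz0 : 0 < z) (hz2 : z ≤ 2) (hzi : z⁻¹ ≤ 1 + |t|) :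
    z ^ β ≤ (Real.exp (2*|β|) + Real.exp |β|) * Real.exp (|β| * |t|) := by
  have hb : β ≤ |β| := le_abs_self β
  have hb0 : 0 ≤ |β| := abs_nonneg β
  rcases le_or_gt 1 z with h1 | h1
  · have h2 : z ^ β ≤ z ^ |β| := Real.rpow_le_rpow_of_exponent_le h1 hb
    have h3 : z ^ |β| ≤ Real.exp (|β| * z) := rpow_le_exp_mul hz0.le hb0
    have h4 : Real.exp (|β| * z) ≤ Real.exp (2*|β|) := by
      apply Real.exp_le_exp.2; nlinarith
    calc z ^ β ≤ Real.exp (2*|β|) := h2.trans (h3.trans h4)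
      _ ≤ (Real.exp (2*|β|) + Real.exp |β|) * Real.exp (|β| * |t|) := by
          nlinarith [Real.one_le_exp (by positivity : (0:ℝ) ≤ |β| * |t|),
            Real.exp_pos (2*|β|), Real.exp_pos |β|]
  · have h2 : z ^ β ≤ z ^ (-|β|) := Real.rpow_le_rpow_of_exponent_ge hz0 h1.le (neg_abs_le β)
    have h3 : z ^ (-|β|) = (z⁻¹) ^ |β| := by
      rw [Real.rpow_neg hz0.le, ← Real.inv_rpow hz0.le]
    have h4 : (z⁻¹) ^ |β| ≤ Real.exp (|β| * (1 + |t|)) := by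
      calc (z⁻¹) ^ |β| ≤ Real.exp (|β| * z⁻¹) := rpow_le_exp_mul (by positivity) hb0
        _ ≤ _ := by
            apply Real.exp_le_exp.2
            exact mul_le_mul_of_nonneg_left hzi hb0
    calc z ^ β ≤ Real.exp (|β| * (1 + |t|)) := (h2.trans_eq h3).trans h4
      _ = Real.exp |β| * Real.exp (|β| * |t|) := by
          rw [← Real.exp_add]; ring_nf
      _ ≤ _ := by
          nlinarith [Real.exp_pos (2*|β|), Real.exp_pos |β|,
            Real.exp_pos (|β| * |t|)]

set_option maxHeartbeats 1000000 in
lemma dct_main (p q U : ℝ) (hU1 : 1 ≤ U) (hU2 : 2*(|p|+|q|+1) ≤ U^2) :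
    Tendsto (fun u : ℝ => ∫ t, (Ioc (U - u/2) (u/2 - U)).indicator
      (fun t => (1 - 2*t/u) ^ q * (1 + 2*t/u) ^ (p+1) * (1 - p/(u/2+t)^2)
        * Real.exp (-t^2)) t) atTop (𝓝 (Real.sqrt Real.pi)) := by
  obtain ⟨c, hc⟩ : ∃ c : ℝ, c = |q| + |p+1| := ⟨_, rfl⟩
  obtain ⟨B, hB⟩ : ∃ B : ℝ,
      B = (Real.exp (2*|q|) + Real.exp |q|) * (Real.exp (2*|p+1|) + Real.exp |p+1|) * 2 :=
    ⟨_, rfl⟩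
  have hsqrt : Real.sqrt Real.pi = ∫ t : ℝ, Real.exp (-t^2) := by
    have := integral_gaussian 1
    simp only [one_mul, div_one] at this
    rw [← this]
    congr 1
    ext t
    norm_num
  rw [hsqrt]
  apply tendsto_integral_filter_of_dominated_convergence
    (bound := fun t => B * Real.exp (c * |t| - t^2))
  · -- measurability
    filter_upwards with u
    apply AEStronglyMeasurable.indicator _ measurableSet_Ioc
    apply Measurable.aestronglyMeasurable
    fun_prop
  · -- bound
    filter_upwards [eventually_ge_atTop (2*U)] with u hu
    filter_upwards with t
    rw [Set.indicator_apply]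
    split_ifs with ht
    · -- t ∈ Ioc (U - u/2) (u/2 - U)
      have hU0 : 0 < U := lt_of_lt_of_le one_pos hU1
      have hu0 : 0 < u := by nlinarith
      have h1 : 0 < u/2 - t := by
        rcases ht with ⟨ht1, ht2⟩; nlinarith
      have h1' : U ≤ u/2 - t := by rcases ht with ⟨ht1, ht2⟩; linarith
      have h2' : U ≤ u/2 + t := by rcases ht with ⟨ht1, ht2⟩; linarith
      have h2 : 0 < u/2 + t := lt_of_lt_of_le hU0 h2'
      have hz1 : (0:ℝ) < 1 - 2*t/u := by
        rw [sub_pos, div_lt_one hu0]; nlinarith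
      have hz2 : (0:ℝ) < 1 + 2*t/u := by
        have h := (lt_div_iff₀ hu0).2 (by nlinarith : (-1)*u < 2*t)
        linarith
      have hz1le : 1 - 2*t/u ≤ 2 := by
        have h := (le_div_iff₀ hu0).2 (by nlinarith : (-1)*u ≤ 2*t)
        linarith
      have hz2le : 1 + 2*t/u ≤ 2 := by
        have h := (div_le_one hu0).2 (by nlinarith : 2*t ≤ u)
        linarith
      have habs := abs_nonneg t
      have hle := le_abs_self t
      have hge := neg_abs_le t
      have hz1inv : (1 - 2*t/u)⁻¹ ≤ 1 + |t| := by
        have he : 1 - 2*t/u = (u - 2*t)/u := by field_simp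
        rw [he, inv_div]
        rw [div_le_iff₀ (by nlinarith : (0:ℝ) < u - 2*t)]
        nlinarith
      have hz2inv : (1 + 2*t/u)⁻¹ ≤ 1 + |t| := by
        have he : 1 + 2*t/u = (u + 2*t)/u := by field_simp
        rw [he, inv_div]
        rw [div_le_iff₀ (by nlinarith : (0:ℝ) < u + 2*t)]
        nlinarith
      have hb1 := rpow_base_bound hz1 hz1le hz1inv (β := q)
      have hb2 := rpow_base_bound hz2 hz2le hz2inv (β := p+1)
      have hb3 : |1 - p/(u/2+t)^2| ≤ 2 := by
        have hsq : U^2 ≤ (u/2+t)^2 := pow_le_pow_left₀ hU0.le h2' 2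
        have hU2' : |p| ≤ U^2 := by
          have h1 := abs_nonneg q
          have h2 := abs_nonneg p
          linarith
        have hb : |p/(u/2+t)^2| ≤ 1 := by
          rw [abs_div, abs_of_nonneg (by positivity : (0:ℝ) ≤ (u/2+t)^2)]
          rw [div_le_one (by positivity)]
          linarith
        calc |1 - p/(u/2+t)^2| ≤ |(1:ℝ)| + |p/(u/2+t)^2| := abs_sub _ _
          _ ≤ 2 := by rw [abs_one]; linarith
      rw [Real.norm_eq_abs]
      have hexp : Real.exp (c * |t| - t^2)
          = Real.exp (|q| * |t|) * Real.exp (|p+1| * |t|) * Real.exp (-t^2) := by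
        rw [← Real.exp_add, ← Real.exp_add, hc]; ring_nf
      have hcq : 0 ≤ (Real.exp (2*|q|) + Real.exp |q|) * Real.exp (|q| * |t|) := by positivity
      have hcp : 0 ≤ (Real.exp (2*|p+1|) + Real.exp |p+1|) * Real.exp (|p+1| * |t|) := by
        positivity
      calc |(1 - 2*t/u) ^ q * (1 + 2*t/u) ^ (p+1) * (1 - p/(u/2+t)^2) * Real.exp (-t^2)|
          = (1 - 2*t/u) ^ q * (1 + 2*t/u) ^ (p+1) * |1 - p/(u/2+t)^2| * Real.exp (-t^2) := by
            rw [abs_mul, abs_mul, abs_mul,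
              abs_of_nonneg (Real.rpow_nonneg hz1.le q),
              abs_of_nonneg (Real.rpow_nonneg hz2.le (p+1)),
              abs_of_nonneg (Real.exp_pos _).le]
        _ ≤ ((Real.exp (2*|q|) + Real.exp |q|) * Real.exp (|q| * |t|))
            * ((Real.exp (2*|p+1|) + Real.exp |p+1|) * Real.exp (|p+1| * |t|))
            * 2 * Real.exp (-t^2) := by
            have hx1 := Real.rpow_nonneg hz1.le q
            have hx2 := Real.rpow_nonneg hz2.le (p+1)
            have habs3 := abs_nonneg (1 - p/(u/2+t)^2)
            apply mul_le_mul_of_nonneg_right _ (Real.exp_pos _).le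
            calc (1 - 2*t/u) ^ q * (1 + 2*t/u) ^ (p+1) * |1 - p/(u/2+t)^2|
                ≤ ((Real.exp (2*|q|) + Real.exp |q|) * Real.exp (|q| * |t|))
                  * ((Real.exp (2*|p+1|) + Real.exp |p+1|) * Real.exp (|p+1| * |t|)) * 2 := by
                  apply mul_le_mul (mul_le_mul hb1 hb2 hx2 hcq) hb3 habs3
                  positivity
              _ = _ := by ring
        _ = B * Real.exp (c * |t| - t^2) := by rw [hexp, hB]; ring
    · rw [Real.norm_eq_abs, abs_zero, hB]; positivity
  · -- integrability of the bound
    have hmono : ∀ t : ℝ, B * Real.exp (c * |t| - t^2)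
        ≤ (B * Real.exp (c^2/2)) * Real.exp (-(1/2) * t^2) := by
      intro t
      have hB0 : 0 ≤ B := by rw [hB]; positivity
      have h : Real.exp (c * |t| - t^2) ≤ Real.exp (c^2/2) * Real.exp (-(1/2) * t^2) := by
        rw [← Real.exp_add]
        apply Real.exp_le_exp.2
        rcases abs_cases t with ⟨h, _⟩ | ⟨h, _⟩ <;> rw [h] <;>
          [nlinarith [sq_nonneg (t - c)]; nlinarith [sq_nonneg (t + c)]]
      calc B * Real.exp (c * |t| - t^2) ≤ B * (Real.exp (c^2/2) * Real.exp (-(1/2) * t^2)) :=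
            mul_le_mul_of_nonneg_left h hB0
        _ = (B * Real.exp (c^2/2)) * Real.exp (-(1/2) * t^2) := by ring
    apply Integrable.mono' ((integrable_exp_neg_mul_sq (by norm_num : (0:ℝ) < 1/2)).const_mul
      (B * Real.exp (c^2/2)))
    · apply Measurable.aestronglyMeasurable; fun_prop
    · filter_upwards with t
      rw [Real.norm_eq_abs, abs_of_nonneg (by rw [hB]; positivity)]
      exact hmono t
  · -- pointwise convergence
    filter_upwards with t
    have hind : ∀ᶠ u : ℝ in atTop, (Ioc (U - u/2) (u/2 - U)).indicator
        (fun t => (1 - 2*t/u) ^ q * (1 + 2*t/u) ^ (p+1) * (1 - p/(u/2+t)^2)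
          * Real.exp (-t^2)) t
        = (1 - 2*t/u) ^ q * (1 + 2*t/u) ^ (p+1) * (1 - p/(u/2+t)^2) * Real.exp (-t^2) := by
      filter_upwards [eventually_ge_atTop (2*(U + |t| + 1))] with u hu
      apply Set.indicator_of_mem
      constructor
      · have := neg_abs_le t; nlinarith
      · have := le_abs_self t; nlinarith
    rw [tendsto_congr' hind]
    have hbase : Tendsto (fun u : ℝ => 2*t/u) atTop (𝓝 0) := by
      simpa using (tendsto_const_nhds (x := 2*t)).div_atTop tendsto_id
    have h1 : Tendsto (fun u : ℝ => (1 - 2*t/u) ^ q) atTop (𝓝 1) := by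
      have hb : Tendsto (fun u : ℝ => 1 - 2*t/u) atTop (𝓝 1) := by
        simpa using (tendsto_const_nhds (x := (1:ℝ))).sub hbase
      have hcont : ContinuousAt (fun z : ℝ => z ^ q) 1 :=
        Real.continuousAt_rpow_const 1 q (Or.inl one_ne_zero)
      simpa [Function.comp_def] using hcont.tendsto.comp hb
    have h2 : Tendsto (fun u : ℝ => (1 + 2*t/u) ^ (p+1)) atTop (𝓝 1) := by
      have hb : Tendsto (fun u : ℝ => 1 + 2*t/u) atTop (𝓝 1) := by
        simpa using (tendsto_const_nhds (x := (1:ℝ))).add hbase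
      have hcont : ContinuousAt (fun z : ℝ => z ^ (p+1)) 1 :=
        Real.continuousAt_rpow_const 1 (p+1) (Or.inl one_ne_zero)
      simpa [Function.comp_def] using hcont.tendsto.comp hb
    have h3 : Tendsto (fun u : ℝ => 1 - p/(u/2+t)^2) atTop (𝓝 1) := by
      have hb : Tendsto (fun u : ℝ => p/(u/2+t)^2) atTop (𝓝 0) := by
        apply Tendsto.div_atTop (tendsto_const_nhds (x := p))
        have hlin : Tendsto (fun u : ℝ => u/2 + t) atTop atTop :=
          tendsto_atTop_add_const_right _ t (tendsto_id.atTop_div_const (by norm_num))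
        exact (tendsto_pow_atTop (by norm_num : (2:ℕ) ≠ 0)).comp hlin
      simpa using (tendsto_const_nhds (x := (1:ℝ))).sub hb
    have := ((h1.mul h2).mul h3).mul (tendsto_const_nhds (x := Real.exp (-t^2)))
    simpa using this

lemma stieltjes_fubini (ν : Measure ℝ) [IsFiniteMeasure ν] {a b : ℝ} (hab : a ≤ b)
    {φ ψ : ℝ → ℝ} (hd : ∀ x ∈ Icc a b, HasDerivAt φ (ψ x) x)
    (hψ : Continuous ψ) :
    ∫ x in Ioc a b, φ x ∂ν
      = φ a * (ν (Ioc a b)).toReal + ∫ s in a..b, ψ s * (ν (Ioc s b)).toReal := by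
  -- the primitive
  set G : ℝ → ℝ := fun x => ∫ s in a..x, ψ s with hG
  have hGcont : Continuous G := intervalIntegral.continuous_primitive
    (fun c d => hψ.intervalIntegrable c d) a
  have hFTC : ∀ x ∈ Icc a b, φ x = φ a + G x := by
    intro x hx
    have : ∫ s in a..x, ψ s = φ x - φ a := by
      apply intervalIntegral.integral_eq_sub_of_hasDerivAt
      · intro y hy
        apply hd
        rw [uIcc_of_le hx.1] at hy
        exact ⟨hy.1, hy.2.trans hx.2⟩
      · exact hψ.intervalIntegrable a x
    simp [hG, this]
  -- bound for ψ on Icc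
  obtain ⟨M, hM⟩ : ∃ M, ∀ s ∈ Icc a b, |ψ s| ≤ M := by
    obtain ⟨M, hM⟩ := (isCompact_Icc (a := a) (b := b)).exists_bound_of_continuousOn
      hψ.continuousOn
    exact ⟨M, fun s hs => hM s hs⟩
  have hM0 : 0 ≤ M := le_trans (abs_nonneg _) (hM a ⟨le_refl a, hab⟩)
  -- step 2 : split the integral
  have hsplit : ∫ x in Ioc a b, φ x ∂ν
      = φ a * (ν (Ioc a b)).toReal + ∫ x in Ioc a b, G x ∂ν := by
    have h1 : ∫ x in Ioc a b, φ x ∂ν = ∫ x in Ioc a b, (φ a + G x) ∂ν := by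
      apply setIntegral_congr_fun measurableSet_Ioc
      intro x hx
      exact hFTC x ⟨le_of_lt hx.1, hx.2⟩
    rw [h1, integral_add (integrable_const _)]
    · simp [mul_comm, Measure.real]
    · apply Integrable.mono' (integrable_const (M * |b - a|))
        (hGcont.aestronglyMeasurable)
      filter_upwards [ae_restrict_mem (measurableSet_Ioc (a := a) (b := b))] with x hx
      have h2 : ‖G x‖ ≤ M * |x - a| := by
        apply intervalIntegral.norm_integral_le_of_norm_le_const
        intro s hs
        rw [uIoc_of_le (le_of_lt hx.1)] at hs
        exact hM s ⟨le_of_lt hs.1, hs.2.trans hx.2⟩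
      refine h2.trans (mul_le_mul_of_nonneg_left ?_ hM0)
      rw [abs_of_nonneg (by linarith [hx.1.le] : (0:ℝ) ≤ x - a),
        abs_of_nonneg (by linarith : (0:ℝ) ≤ b - a)]
      linarith [hx.2]
  rw [hsplit]
  congr 1
  -- step 3 : Fubini
  set f : ℝ × ℝ → ℝ := ({p : ℝ × ℝ | p.2 < p.1}).indicator (fun p => ψ p.2) with hf
  have hset : MeasurableSet {p : ℝ × ℝ | p.2 < p.1} :=
    measurableSet_lt measurable_snd measurable_fst
  have hfm : AEStronglyMeasurable f ((ν.restrict (Ioc a b)).prod (volume.restrict (Ioc a b))) :=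
    (((hψ.comp continuous_snd).stronglyMeasurable).indicator hset).aestronglyMeasurable
  have hae2 : ∀ᵐ p ∂((ν.restrict (Ioc a b)).prod (volume.restrict (Ioc a b))),
      p.2 ∈ Ioc a b := by
    rw [ae_iff]
    have : {p : ℝ × ℝ | ¬ p.2 ∈ Ioc a b} = (univ : Set ℝ) ×ˢ (Ioc a b)ᶜ := by
      ext p; simp
    rw [this, Measure.prod_prod]
    simp [Measure.restrict_apply (measurableSet_Ioc (a := a) (b := b)).compl]
  have hfi : Integrable f ((ν.restrict (Ioc a b)).prod (volume.restrict (Ioc a b))) := by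
    apply Integrable.mono' (integrable_const M) hfm
    filter_upwards [hae2] with p hp
    simp only [hf, indicator_apply]
    split_ifs
    · exact hM p.2 ⟨le_of_lt hp.1, hp.2⟩
    · simpa using hM0
  have hswap := MeasureTheory.integral_integral_swap (f := fun x s => f (x, s)) hfi
  -- LHS of swap equals ∫ G dν on Ioc a b
  have hL : ∫ x in Ioc a b, (∫ s in Ioc a b, f (x, s)) ∂ν = ∫ x in Ioc a b, G x ∂ν := by
    apply setIntegral_congr_fun measurableSet_Ioc
    intro x hx
    have : (fun s => f (x, s)) = (Iio x).indicator ψ := by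
      ext s
      rw [hf]
      by_cases hlt : s < x
      · rw [indicator_of_mem (by exact hlt : (x, s) ∈ {p : ℝ × ℝ | p.2 < p.1}),
          indicator_of_mem (by exact hlt)]
      · rw [indicator_of_notMem (by exact hlt), indicator_of_notMem (by exact hlt)]
    have h' : ∀ s, f (x, s) = (Iio x).indicator ψ s := fun s => congrFun this s
    simp only [h']
    rw [integral_indicator measurableSet_Iio,
      Measure.restrict_restrict measurableSet_Iio]
    have : Iio x ∩ Ioc a b = Ioo a x := by
      ext s
      simp only [mem_inter_iff, mem_Iio, mem_Ioc, mem_Ioo]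
      constructor
      · rintro ⟨h1, h2, h3⟩; exact ⟨h2, h1⟩
      · rintro ⟨h1, h2⟩; exact ⟨h2, h1, le_trans (le_of_lt h2) hx.2⟩
    rw [this, hG]
    show ∫ s in Ioo a x, ψ s = ∫ s in a..x, ψ s
    rw [intervalIntegral.integral_of_le (le_of_lt hx.1), integral_Ioc_eq_integral_Ioo]
  -- RHS of swap
  have hR : ∫ s in Ioc a b, (∫ x in Ioc a b, f (x, s) ∂ν) =
      ∫ s in a..b, ψ s * (ν (Ioc s b)).toReal := by
    rw [intervalIntegral.integral_of_le hab]
    apply setIntegral_congr_fun measurableSet_Ioc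
    intro s hs
    have : (fun x => f (x, s)) = (Ioi s).indicator (fun _ => ψ s) := by
      ext x
      rw [hf]
      by_cases hlt : s < x
      · rw [indicator_of_mem (by exact hlt : (x, s) ∈ {p : ℝ × ℝ | p.2 < p.1}),
          indicator_of_mem (by exact hlt)]
      · rw [indicator_of_notMem (by exact hlt), indicator_of_notMem (by exact hlt)]
    have h' : ∀ x, f (x, s) = (Ioi s).indicator (fun _ => ψ s) x := fun x => congrFun this x
    simp only [h']
    rw [integral_indicator measurableSet_Ioi,
      Measure.restrict_restrict measurableSet_Ioi]
    have : Ioi s ∩ Ioc a b = Ioc s b := by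
      ext x
      simp only [mem_inter_iff, mem_Ioi, mem_Ioc]
      constructor
      · rintro ⟨h1, h2, h3⟩; exact ⟨h1, h3⟩
      · rintro ⟨h1, h2⟩; exact ⟨h1, lt_trans hs.1 h1, h2⟩
    rw [this, setIntegral_const, smul_eq_mul, mul_comm]; rfl
  rw [← hL, ← hR]
  simpa using hswap

lemma lap_tendsto (L₁ L₂ p q U : ℝ) (hL₁ : 0 < L₁) (hL₂ : 0 < L₂)
    (hU1 : 1 ≤ U) (hU2 : 2*(|p|+|q|+1) ≤ U^2) :
    Tendsto (fun u : ℝ => (∫ x in U..(u-U), gh L₂ q (u-x) * ((x - p/x) * gh L₁ p x)) /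
      (L₁ * L₂ * Real.sqrt Real.pi * (u/2) ^ (p+q+1) * Real.exp (-u^2/4)))
      atTop (𝓝 1) := by
  have hπ : (0:ℝ) < Real.sqrt Real.pi := Real.sqrt_pos.2 Real.pi_pos
  have hmain := dct_main p q U hU1 hU2
  have hfinal : Tendsto (fun u : ℝ => (∫ t, (Ioc (U - u/2) (u/2 - U)).indicator
      (fun t => (1 - 2*t/u) ^ q * (1 + 2*t/u) ^ (p+1) * (1 - p/(u/2+t)^2)
        * Real.exp (-t^2)) t) / Real.sqrt Real.pi) atTop (𝓝 1) := by
    have := hmain.div_const (Real.sqrt Real.pi)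
    rwa [div_self hπ.ne'] at this
  apply hfinal.congr'
  filter_upwards [eventually_ge_atTop (2*U + 1)] with u hu
  have hU0 : (0:ℝ) < U := lt_of_lt_of_le one_pos hU1
  have hu0 : (0:ℝ) < u := by linarith
  have hu2 : (0:ℝ) < u/2 := by linarith
  -- key identity
  have key : ∫ x in U..(u-U), gh L₂ q (u-x) * ((x - p/x) * gh L₁ p x)
      = (L₁ * L₂ * (u/2) ^ (p+q+1) * Real.exp (-u^2/4)) *
        ∫ t, (Ioc (U - u/2) (u/2 - U)).indicator
          (fun t => (1 - 2*t/u) ^ q * (1 + 2*t/u) ^ (p+1) * (1 - p/(u/2+t)^2)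
            * Real.exp (-t^2)) t := by
    have hsub : ∫ x in U..(u-U), gh L₂ q (u-x) * ((x - p/x) * gh L₁ p x)
        = ∫ t in (U - u/2)..(u/2 - U),
            gh L₂ q (u-(t + u/2)) * (((t + u/2) - p/(t + u/2)) * gh L₁ p (t + u/2)) := by
      rw [intervalIntegral.integral_comp_add_right
        (fun x => gh L₂ q (u-x) * ((x - p/x) * gh L₁ p x)) (u/2)]
      congr 1 <;> ring
    rw [hsub, integral_indicator measurableSet_Ioc,
      intervalIntegral.integral_of_le (by linarith : U - u/2 ≤ u/2 - U),
      ← integral_const_mul]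
    apply setIntegral_congr_fun measurableSet_Ioc
    intro t ht
    have h1 : (0:ℝ) < u/2 - t := by rcases ht with ⟨ht1, ht2⟩; linarith
    have h2 : (0:ℝ) < t + u/2 := by rcases ht with ⟨ht1, ht2⟩; linarith
    have hz1 : (0:ℝ) ≤ 1 - 2*t/u := by
      rw [sub_nonneg, div_le_one hu0]; rcases ht with ⟨ht1, ht2⟩; linarith
    have hz2 : (0:ℝ) ≤ 1 + 2*t/u := by
      have h := (le_div_iff₀ hu0).2 (by rcases ht with ⟨ht1, ht2⟩; linarith : (-1)*u ≤ 2*t)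
      linarith
    have e1 : u - (t + u/2) = u/2 - t := by ring
    have e2 : u/2 - t = (u/2) * (1 - 2*t/u) := by field_simp
    have e3 : t + u/2 = (u/2) * (1 + 2*t/u) := by field_simp; ring
    have e4 : (u/2 - t) ^ q = (u/2) ^ q * (1 - 2*t/u) ^ q := by
      rw [e2, Real.mul_rpow hu2.le hz1]
    have e5 : (t + u/2) ^ (p+1) = (u/2) ^ (p+1) * (1 + 2*t/u) ^ (p+1) := by
      rw [e3, Real.mul_rpow hu2.le hz2]
    have e6 : (t + u/2) ^ p * ((t + u/2) - p/(t + u/2))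
        = (u/2) ^ (p+1) * (1 + 2*t/u) ^ (p+1) * (1 - p/(t + u/2)^2) := by
      have h7 : (t + u/2) ^ (p+1) = (t + u/2) ^ p * (t + u/2) := by
        rw [Real.rpow_add_one h2.ne']
      have h8' : ∀ y : ℝ, y ≠ 0 → y - p/y = y * (1 - p/y^2) := by
        intro y hy; field_simp
      rw [h8' _ h2.ne', ← mul_assoc, ← h7, e5]
    have e7 : Real.exp (-(u/2 - t)^2/2) * Real.exp (-(t + u/2)^2/2)
        = Real.exp (-u^2/4) * Real.exp (-t^2) := by
      rw [← Real.exp_add, ← Real.exp_add]; congr 1; ring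
    have e8 : (u/2) ^ q * (u/2) ^ (p+1) = (u/2) ^ (p+q+1) := by
      rw [← Real.rpow_add hu2, show q + (p+1) = p+q+1 by ring]
    have e9 : u/2 + t = t + u/2 := by ring
    calc gh L₂ q (u-(t + u/2)) * (((t + u/2) - p/(t + u/2)) * gh L₁ p (t + u/2))
        = L₁ * L₂ * ((t + u/2) ^ p * ((t + u/2) - p/(t + u/2))) * ((u/2) ^ q * (1 - 2*t/u) ^ q)
          * (Real.exp (-(u/2 - t)^2/2) * Real.exp (-(t + u/2)^2/2)) := by
          simp only [gh]; rw [e1, e4]; ring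
      _ = L₁ * L₂ * ((u/2) ^ (p+1) * (1 + 2*t/u) ^ (p+1) * (1 - p/(t + u/2)^2))
          * ((u/2) ^ q * (1 - 2*t/u) ^ q)
          * (Real.exp (-u^2/4) * Real.exp (-t^2)) := by rw [e6, e7]
      _ = L₁ * L₂ * ((u/2) ^ q * (u/2) ^ (p+1)) * Real.exp (-u^2/4)
          * ((1 - 2*t/u) ^ q * (1 + 2*t/u) ^ (p+1) * (1 - p/(t + u/2)^2) * Real.exp (-t^2)) := by
          ring
      _ = L₁ * L₂ * (u/2) ^ (p+q+1) * Real.exp (-u^2/4)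
          * ((1 - 2*t/u) ^ q * (1 + 2*t/u) ^ (p+1) * (1 - p/(u/2+t)^2) * Real.exp (-t^2)) := by
          rw [e8, e9]
  rw [key]
  rw [show L₁ * L₂ * Real.sqrt Real.pi * (u/2) ^ (p+q+1) * Real.exp (-u^2/4)
      = Real.sqrt Real.pi * (L₁ * L₂ * (u/2) ^ (p+q+1) * Real.exp (-u^2/4)) by ring]
  have hA : L₁ * L₂ * (u/2) ^ (p+q+1) * Real.exp (-u^2/4) ≠ 0 := by
    have : (0:ℝ) < (u/2) ^ (p+q+1) := Real.rpow_pos_of_pos hu2 _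
    positivity
  rw [mul_comm (L₁ * L₂ * (u/2) ^ (p+q+1) * Real.exp (-u^2/4)), mul_div_mul_right _ _ hA]

lemma err_tendsto (L C α β V : ℝ) (hL : 0 < L) (hC : 0 < C) (hV : 0 ≤ V) :
    Tendsto (fun u : ℝ => gh L α (u - V) / (C * (u/2) ^ β * Real.exp (-u^2/4)))
      atTop (𝓝 0) := by
  have hlim : Tendsto (fun u : ℝ => (L/C) * (u ^ (|α|+|β|) * Real.exp (-u))) atTop (𝓝 0) := by
    have := tendsto_rpow_mul_exp_neg_mul_atTop_nhds_zero (|α|+|β|) 1 one_pos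
    simp only [neg_mul, one_mul] at this
    simpa using this.const_mul (L/C)
  apply squeeze_zero' _ _ hlim
  · filter_upwards [eventually_ge_atTop (V + 1)] with u hu
    have h1 : (0:ℝ) < u - V := by linarith
    have h2 : (0:ℝ) < u := by linarith
    have hd : (0:ℝ) < C * (u/2) ^ β * Real.exp (-u^2/4) := by
      have : (0:ℝ) < (u/2) ^ β := Real.rpow_pos_of_pos (by linarith) β
      positivity
    exact div_nonneg (gh_pos hL h1).le hd.le
  · filter_upwards [eventually_ge_atTop (4*(V+1) + 2)] with u hu
    have h1 : (0:ℝ) < u - V := by linarith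
    have h1' : (1:ℝ) ≤ u - V := by linarith
    have h2 : (0:ℝ) < u := by linarith
    have h2' : (1:ℝ) ≤ u := by linarith
    have h3 : (1:ℝ) ≤ u/2 := by linarith
    have h3' : (0:ℝ) < u/2 := by linarith
    have hR : (0:ℝ) < (u/2) ^ β := Real.rpow_pos_of_pos h3' β
    have hd : (0:ℝ) < C * (u/2) ^ β * Real.exp (-u^2/4) := by positivity
    rw [div_le_iff₀ hd]
    -- bound the rpow factors
    have hb1 : (u - V) ^ α ≤ u ^ |α| := by
      rcases le_or_gt 0 α with h | h
      · calc (u - V) ^ α ≤ u ^ α := Real.rpow_le_rpow h1.le (by linarith) h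
          _ ≤ u ^ |α| := Real.rpow_le_rpow_of_exponent_le h2' (le_abs_self α)
      · calc (u - V) ^ α ≤ 1 := Real.rpow_le_one_of_one_le_of_nonpos h1' h.le
          _ ≤ u ^ |α| := Real.one_le_rpow h2' (abs_nonneg α)
    have hb2 : (1:ℝ) ≤ u ^ |β| * (u/2) ^ β := by
      have ha : (u/2) ^ β ≥ (u/2) ^ (-|β|) :=
        Real.rpow_le_rpow_of_exponent_le h3 (neg_abs_le β)
      have hb : (u/2) ^ (-|β|) ≥ u ^ (-|β|) := by
        rw [Real.rpow_neg h2.le, Real.rpow_neg h3'.le]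
        exact inv_anti₀ (Real.rpow_pos_of_pos h3' _)
          (Real.rpow_le_rpow h3'.le (by linarith) (abs_nonneg β))
      have hc : u ^ |β| * u ^ (-|β|) = 1 := by
        rw [← Real.rpow_add h2]; simp
      calc (1:ℝ) = u ^ |β| * u ^ (-|β|) := hc.symm
        _ ≤ u ^ |β| * (u/2) ^ β := by
            apply mul_le_mul_of_nonneg_left (le_trans hb ha) (Real.rpow_nonneg h2.le _)
    have hb3 : Real.exp (-(u-V)^2/2) ≤ Real.exp (-u) * Real.exp (-u^2/4) := by
      rw [← Real.exp_add]
      apply Real.exp_le_exp.2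
      nlinarith
    have key : gh L α (u - V) = L * ((u-V) ^ α * Real.exp (-(u-V)^2/2)) := by
      unfold gh; ring
    rw [key]
    have step1 : (u-V) ^ α * Real.exp (-(u-V)^2/2)
        ≤ u ^ |α| * (Real.exp (-u) * Real.exp (-u^2/4)) := by
      apply mul_le_mul hb1 hb3 (Real.exp_pos _).le (Real.rpow_nonneg h2.le _)
    have step2 : u ^ |α| * (Real.exp (-u) * Real.exp (-u^2/4))
        ≤ (u ^ |α| * (Real.exp (-u) * Real.exp (-u^2/4))) * (u ^ |β| * (u/2) ^ β) := by
      apply le_mul_of_one_le_right _ hb2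
      positivity
    calc L * ((u-V) ^ α * Real.exp (-(u-V)^2/2))
        ≤ L * ((u ^ |α| * (Real.exp (-u) * Real.exp (-u^2/4))) * (u ^ |β| * (u/2) ^ β)) := by
          apply mul_le_mul_of_nonneg_left (step1.trans step2) hL.le
      _ = L/C * (u ^ |α| * u ^ |β| * Real.exp (-u)) * (C * (u/2) ^ β * Real.exp (-u^2/4)) := by
          field_simp
      _ = L/C * (u ^ (|α|+|β|) * Real.exp (-u)) * (C * (u/2) ^ β * Real.exp (-u^2/4)) := by
          rw [← Real.rpow_add h2]

lemma final_arith_low (ε ε0 x : ℝ) (hε : 0 < ε) (hε2 : ε ≤ 1/2) (hε3 : ε ≤ ε0/24)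
    (hε0 : 0 < ε0) (h4 : (1-ε)*((1-ε)*(1-ε) - 2*ε*ε) ≤ x) : -ε0 < x - 1 := by
  nlinarith

lemma final_arith_up (ε ε0 x : ℝ) (hε : 0 < ε) (hε2 : ε ≤ 1/2) (hε3 : ε ≤ ε0/24)
    (hε0 : 0 < ε0) (h6 : x ≤ (1+ε)*ε + ((1+ε)*((1+ε)*(1+ε) + 2*ε*ε) + (1+ε)*ε)) :
    x - 1 < ε0 := by
  have hq : ε*ε ≤ ε/2 := by nlinarith
  have hc : ε*ε*ε ≤ ε/4 := by nlinarith
  nlinarith [hq, hc]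

set_option maxHeartbeats 4000000 in
/-- Tail asymptotics for the sum of two independent Gaussian-like risks with constant
slowly-varying terms: P(X₁ + X₂ > u) ∼ L₁L₂√π · (u/2)^{α₁+α₂+1} · exp(−u²/4). -/
theorem sum_two_gaussian_like_const_tail {Ω : Type*} [MeasurableSpace Ω] (μ : Measure Ω)
    [IsProbabilityMeasure μ] (X₁ X₂ : Ω → ℝ)
    (hm₁ : Measurable X₁) (hm₂ : Measurable X₂)
    (hind : IndepFun X₁ X₂ μ)
    (L₁ L₂ α₁ α₂ : ℝ) (hL₁ : 0 < L₁) (hL₂ : 0 < L₂)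
    (htail₁ : Tendsto (fun u : ℝ => (μ {ω | X₁ ω > u}).toReal /
        (L₁ * u ^ α₁ * Real.exp (-u ^ 2 / 2))) atTop (𝓝 1))
    (htail₂ : Tendsto (fun u : ℝ => (μ {ω | X₂ ω > u}).toReal /
        (L₂ * u ^ α₂ * Real.exp (-u ^ 2 / 2))) atTop (𝓝 1)) :
    Tendsto (fun u : ℝ => (μ {ω | X₁ ω + X₂ ω > u}).toReal /
        (L₁ * L₂ * Real.sqrt Real.pi * (u / 2) ^ (α₁ + α₂ + 1) * Real.exp (-u ^ 2 / 4)))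
      atTop (𝓝 1) := by
  haveI hp₁ : IsProbabilityMeasure (μ.map X₁) := Measure.isProbabilityMeasure_map hm₁.aemeasurable
  haveI hp₂ : IsProbabilityMeasure (μ.map X₂) := Measure.isProbabilityMeasure_map hm₂.aemeasurable
  -- tail functions
  set F₁ : ℝ → ℝ := fun v => ((μ.map X₁) (Ioi v)).toReal with hF₁def
  set F₂ : ℝ → ℝ := fun v => ((μ.map X₂) (Ioi v)).toReal with hF₂def
  have hF₁eq : ∀ v : ℝ, (μ {ω | X₁ ω > v}).toReal = F₁ v := by
    intro v; simp only [hF₁def]; rw [Measure.map_apply hm₁ measurableSet_Ioi]; rfl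
  have hF₂eq : ∀ v : ℝ, (μ {ω | X₂ ω > v}).toReal = F₂ v := by
    intro v; simp only [hF₂def]; rw [Measure.map_apply hm₂ measurableSet_Ioi]; rfl
  have htail₁' : Tendsto (fun v : ℝ => F₁ v / gh L₁ α₁ v) atTop (𝓝 1) := by
    apply htail₁.congr
    intro v; rw [hF₁eq]; rfl
  have htail₂' : Tendsto (fun v : ℝ => F₂ v / gh L₂ α₂ v) atTop (𝓝 1) := by
    apply htail₂.congr
    intro v; rw [hF₂eq]; rfl
  have hF₁le : ∀ v : ℝ, F₁ v ≤ 1 := by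
    intro v
    rw [hF₁def]
    exact ENNReal.toReal_le_of_le_ofReal one_pos.le (by simpa using prob_le_one)
  have hF₂le : ∀ v : ℝ, F₂ v ≤ 1 := by
    intro v
    rw [hF₂def]
    exact ENNReal.toReal_le_of_le_ofReal one_pos.le (by simpa using prob_le_one)
  have hF₁0 : ∀ v : ℝ, 0 ≤ F₁ v := fun v => ENNReal.toReal_nonneg
  have hF₂0 : ∀ v : ℝ, 0 ≤ F₂ v := fun v => ENNReal.toReal_nonneg
  -- the goal, metric form
  rw [Metric.tendsto_nhds]
  intro ε0 hε0
  set ε : ℝ := min (ε0/24) (1/2) with hεdef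
  have hε : 0 < ε := lt_min (by linarith) (by norm_num)
  have hε2 : ε ≤ 1/2 := min_le_right _ _
  have hε3 : ε ≤ ε0/24 := min_le_left _ _
  -- choose U
  have hev₁ : ∀ᶠ v : ℝ in atTop, |F₁ v / gh L₁ α₁ v - 1| < ε := by
    have := Metric.tendsto_nhds.mp htail₁' ε hε
    simpa [Real.dist_eq] using this
  have hev₂ : ∀ᶠ v : ℝ in atTop, |F₂ v / gh L₂ α₂ v - 1| < ε := by
    have := Metric.tendsto_nhds.mp htail₂' ε hε
    simpa [Real.dist_eq] using this
  obtain ⟨U₀, hU₀⟩ := eventually_atTop.1 (hev₁.and hev₂)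
  set U : ℝ := max U₀ (max 1 (2*(|α₁|+|α₂|+1))) with hUdef
  have hU1 : 1 ≤ U := le_trans (le_max_left _ _) (le_max_right _ _)
  have hU0 : 0 < U := lt_of_lt_of_le one_pos hU1
  have hUsq : 2*(|α₁|+|α₂|+1) ≤ U^2 := by
    have h1 : 2*(|α₁|+|α₂|+1) ≤ U := le_trans (le_max_right _ _) (le_max_right _ _)
    nlinarith
  have hUa₁ : |α₁| ≤ U^2 := by
    have h1 := abs_nonneg α₂; have h2 := abs_nonneg α₁; linarith
  have hUa₂ : |α₂| ≤ U^2 := by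
    have h1 := abs_nonneg α₂; have h2 := abs_nonneg α₁; linarith
  -- tail sandwich for v ≥ U
  have htails : ∀ v : ℝ, U ≤ v →
      ((1-ε) * gh L₁ α₁ v ≤ F₁ v ∧ F₁ v ≤ (1+ε) * gh L₁ α₁ v) ∧
      ((1-ε) * gh L₂ α₂ v ≤ F₂ v ∧ F₂ v ≤ (1+ε) * gh L₂ α₂ v) := by
    intro v hv
    have hv0 : 0 < v := lt_of_lt_of_le hU0 hv
    have hg₁ : 0 < gh L₁ α₁ v := gh_pos hL₁ hv0
    have hg₂ : 0 < gh L₂ α₂ v := gh_pos hL₂ hv0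
    have h := hU₀ v (le_trans (le_max_left _ _) hv)
    obtain ⟨ha, hb⟩ := h
    rw [abs_lt] at ha hb
    constructor
    · constructor
      · rw [← sub_nonneg]
        have h1 : 1 - ε ≤ F₁ v / gh L₁ α₁ v := by linarith [ha.1]
        have := mul_le_mul_of_nonneg_right h1 hg₁.le
        rw [div_mul_cancel₀ _ hg₁.ne'] at this
        linarith
      · have h1 : F₁ v / gh L₁ α₁ v ≤ 1 + ε := by linarith [ha.2]
        have := mul_le_mul_of_nonneg_right h1 hg₁.le
        rw [div_mul_cancel₀ _ hg₁.ne'] at this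
        linarith
    · constructor
      · have h1 : 1 - ε ≤ F₂ v / gh L₂ α₂ v := by linarith [hb.1]
        have := mul_le_mul_of_nonneg_right h1 hg₂.le
        rw [div_mul_cancel₀ _ hg₂.ne'] at this
        linarith
      · have h1 : F₂ v / gh L₂ α₂ v ≤ 1 + ε := by linarith [hb.2]
        have := mul_le_mul_of_nonneg_right h1 hg₂.le
        rw [div_mul_cancel₀ _ hg₂.ne'] at this
        linarith
  -- limits for the fixed U
  have hsqrtπ : 0 < Real.sqrt Real.pi := Real.sqrt_pos.2 Real.pi_pos
  have hCpos : 0 < L₁ * L₂ * Real.sqrt Real.pi := by positivity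
  have hJH := lap_tendsto L₁ L₂ α₁ α₂ U hL₁ hL₂ hU1 hUsq
  have hE₁ := err_tendsto L₂ (L₁ * L₂ * Real.sqrt Real.pi) α₂ (α₁+α₂+1) U hL₂ hCpos hU0.le
  have hE₂ := err_tendsto L₁ (L₁ * L₂ * Real.sqrt Real.pi) α₁ (α₁+α₂+1) U hL₁ hCpos hU0.le
  have hE₃ : Tendsto (fun u : ℝ => gh L₂ α₂ U * (gh L₁ α₁ (u - U) /
      (L₁ * L₂ * Real.sqrt Real.pi * (u/2) ^ (α₁+α₂+1) * Real.exp (-u^2/4))))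
      atTop (𝓝 0) := by
    simpa using hE₂.const_mul (gh L₂ α₂ U)
  have hevJ : ∀ᶠ u : ℝ in atTop,
      |(∫ x in U..(u-U), gh L₂ α₂ (u-x) * ((x - α₁/x) * gh L₁ α₁ x)) /
        (L₁ * L₂ * Real.sqrt Real.pi * (u/2) ^ (α₁+α₂+1) * Real.exp (-u^2/4)) - 1| < ε := by
    have := Metric.tendsto_nhds.mp hJH ε hε
    simpa [Real.dist_eq] using this
  have hevE₁ : ∀ᶠ u : ℝ in atTop, |gh L₂ α₂ (u - U) /
      (L₁ * L₂ * Real.sqrt Real.pi * (u/2) ^ (α₁+α₂+1) * Real.exp (-u^2/4))| < ε := by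
    have := Metric.tendsto_nhds.mp hE₁ ε hε
    simpa only [Real.dist_eq, sub_zero] using this
  have hevE₂ : ∀ᶠ u : ℝ in atTop, |gh L₁ α₁ (u - U) /
      (L₁ * L₂ * Real.sqrt Real.pi * (u/2) ^ (α₁+α₂+1) * Real.exp (-u^2/4))| < ε := by
    have := Metric.tendsto_nhds.mp hE₂ ε hε
    simpa only [Real.dist_eq, sub_zero] using this
  have hevE₃ : ∀ᶠ u : ℝ in atTop, |gh L₂ α₂ U * (gh L₁ α₁ (u - U) /
      (L₁ * L₂ * Real.sqrt Real.pi * (u/2) ^ (α₁+α₂+1) * Real.exp (-u^2/4)))| < ε := by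
    have := Metric.tendsto_nhds.mp hE₃ ε hε
    simpa only [Real.dist_eq, sub_zero] using this
  filter_upwards [hevJ, hevE₁, hevE₂, hevE₃, eventually_ge_atTop (2*U+2)]
    with u hJu hE₁u hE₂u hE₃u hu
  -- basic facts about u
  have hb : U ≤ u - U := by linarith
  have hu0 : (0:ℝ) < u := by linarith
  have huU : (0:ℝ) < u - U := by linarith
  have hH : (0:ℝ) < L₁ * L₂ * Real.sqrt Real.pi * (u/2) ^ (α₁+α₂+1) * Real.exp (-u^2/4) := by
    have h := Real.rpow_pos_of_pos (by linarith : (0:ℝ) < u/2) (α₁+α₂+1)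
    positivity
  -- convolution identity
  have hprod : μ.map (fun ω => (X₁ ω, X₂ ω)) = (μ.map X₁).prod (μ.map X₂) :=
    (indepFun_iff_map_prod_eq_prod_map_map hm₁.aemeasurable hm₂.aemeasurable).1 hind
  have hid : μ {ω | X₁ ω + X₂ ω > u} = ∫⁻ x, (μ.map X₂) (Ioi (u - x)) ∂(μ.map X₁) := by
    have hpm : Measurable fun ω => (X₁ ω, X₂ ω) := hm₁.prodMk hm₂
    have hs : MeasurableSet {p : ℝ × ℝ | p.1 + p.2 > u} :=
      measurableSet_lt measurable_const (measurable_fst.add measurable_snd)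
    have h1 : {ω | X₁ ω + X₂ ω > u} = (fun ω => (X₁ ω, X₂ ω)) ⁻¹' {p | p.1 + p.2 > u} := rfl
    rw [h1, ← Measure.map_apply hpm hs, hprod, Measure.prod_apply hs]
    congr 1
    ext x
    congr 1
    ext y
    simp only [mem_preimage, mem_setOf_eq, mem_Ioi]
    constructor
    · intro h; linarith
    · intro h; linarith
  have hfmeas : Measurable (fun x => (μ.map X₂) (Ioi (u - x))) := by
    have hanti : Antitone (fun v : ℝ => (μ.map X₂) (Ioi v)) :=
      fun v w hvw => measure_mono (Ioi_subset_Ioi hvw)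
    exact hanti.measurable.comp (measurable_const.sub measurable_id)
  have hsplit : ∫⁻ x, (μ.map X₂) (Ioi (u - x)) ∂(μ.map X₁)
      = (∫⁻ x in Iic U, (μ.map X₂) (Ioi (u - x)) ∂(μ.map X₁))
        + ((∫⁻ x in Ioc U (u-U), (μ.map X₂) (Ioi (u - x)) ∂(μ.map X₁))
          + (∫⁻ x in Ioi (u-U), (μ.map X₂) (Ioi (u - x)) ∂(μ.map X₁))) := by
    rw [← lintegral_add_compl (fun x => (μ.map X₂) (Ioi (u - x)))
      (measurableSet_Iic (a := U)), compl_Iic]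
    congr 1
    rw [← Ioc_union_Ioi_eq_Ioi hb, lintegral_union measurableSet_Ioi
      (Ioc_disjoint_Ioi le_rfl)]
  have hIle : ∀ s : Set ℝ, ∫⁻ x in s, (μ.map X₂) (Ioi (u - x)) ∂(μ.map X₁) ≤ 1 := by
    intro s
    calc ∫⁻ x in s, (μ.map X₂) (Ioi (u - x)) ∂(μ.map X₁)
        ≤ ∫⁻ _ in s, 1 ∂(μ.map X₁) := lintegral_mono (fun x => prob_le_one)
      _ = (μ.map X₁) s := by simp
      _ ≤ 1 := prob_le_one
  have hne : ∀ s : Set ℝ, ∫⁻ x in s, (μ.map X₂) (Ioi (u - x)) ∂(μ.map X₁) ≠ ⊤ :=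
    fun s => ne_top_of_le_ne_top (by norm_num) (hIle s)
  have hPsum : (μ {ω | X₁ ω + X₂ ω > u}).toReal
      = (∫⁻ x in Iic U, (μ.map X₂) (Ioi (u - x)) ∂(μ.map X₁)).toReal
        + ((∫⁻ x in Ioc U (u-U), (μ.map X₂) (Ioi (u - x)) ∂(μ.map X₁)).toReal
          + (∫⁻ x in Ioi (u-U), (μ.map X₂) (Ioi (u - x)) ∂(μ.map X₁)).toReal) := by
    rw [hid, hsplit, ENNReal.toReal_add (hne _) (ENNReal.add_ne_top.2 ⟨hne _, hne _⟩),
      ENNReal.toReal_add (hne _) (hne _)]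
  -- bounds on the side terms
  have hT1 : (∫⁻ x in Iic U, (μ.map X₂) (Ioi (u - x)) ∂(μ.map X₁)).toReal
      ≤ (1+ε) * gh L₂ α₂ (u-U) := by
    have hmono : ∫⁻ x in Iic U, (μ.map X₂) (Ioi (u - x)) ∂(μ.map X₁)
        ≤ (μ.map X₂) (Ioi (u-U)) := by
      calc ∫⁻ x in Iic U, (μ.map X₂) (Ioi (u - x)) ∂(μ.map X₁)
          ≤ ∫⁻ _ in Iic U, (μ.map X₂) (Ioi (u-U)) ∂(μ.map X₁) := by
            apply lintegral_mono_ae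
            filter_upwards [ae_restrict_mem measurableSet_Iic] with x hx
            exact measure_mono (Ioi_subset_Ioi (by simp at hx; linarith))
        _ = (μ.map X₂) (Ioi (u-U)) * (μ.map X₁) (Iic U) := setLIntegral_const _ _
        _ ≤ (μ.map X₂) (Ioi (u-U)) * 1 := mul_le_mul_right prob_le_one _
        _ = (μ.map X₂) (Ioi (u-U)) := mul_one _
    calc (∫⁻ x in Iic U, (μ.map X₂) (Ioi (u - x)) ∂(μ.map X₁)).toReal
        ≤ F₂ (u-U) := ENNReal.toReal_mono (measure_ne_top _ _) hmono
      _ ≤ (1+ε) * gh L₂ α₂ (u-U) := ((htails (u-U) hb).2.2)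
  have hT3 : (∫⁻ x in Ioi (u-U), (μ.map X₂) (Ioi (u - x)) ∂(μ.map X₁)).toReal
      ≤ (1+ε) * gh L₁ α₁ (u-U) := by
    have hmono : ∫⁻ x in Ioi (u-U), (μ.map X₂) (Ioi (u - x)) ∂(μ.map X₁)
        ≤ (μ.map X₁) (Ioi (u-U)) := by
      calc ∫⁻ x in Ioi (u-U), (μ.map X₂) (Ioi (u - x)) ∂(μ.map X₁)
          ≤ ∫⁻ _ in Ioi (u-U), 1 ∂(μ.map X₁) := lintegral_mono (fun x => prob_le_one)
        _ = (μ.map X₁) (Ioi (u-U)) := by simp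
    calc (∫⁻ x in Ioi (u-U), (μ.map X₂) (Ioi (u - x)) ∂(μ.map X₁)).toReal
        ≤ F₁ (u-U) := ENNReal.toReal_mono (measure_ne_top _ _) hmono
      _ ≤ (1+ε) * gh L₁ α₁ (u-U) := ((htails (u-U) hb).1.2)
  have hT10 : 0 ≤ (∫⁻ x in Iic U, (μ.map X₂) (Ioi (u - x)) ∂(μ.map X₁)).toReal :=
    ENNReal.toReal_nonneg
  have hT30 : 0 ≤ (∫⁻ x in Ioi (u-U), (μ.map X₂) (Ioi (u - x)) ∂(μ.map X₁)).toReal :=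
    ENNReal.toReal_nonneg
  -- middle term as a Bochner integral
  have hT2eq : (∫⁻ x in Ioc U (u-U), (μ.map X₂) (Ioi (u - x)) ∂(μ.map X₁)).toReal
      = ∫ x in Ioc U (u-U), F₂ (u - x) ∂(μ.map X₁) := by
    simp only [hF₂def]
    exact (integral_toReal hfmeas.aemeasurable
      (ae_of_all _ fun x => measure_lt_top _ _)).symm
  -- integrability facts
  have hφcont : ContinuousOn (fun x => gh L₂ α₂ (u - x)) (Icc U (u-U)) := by
    apply (gh_continuousOn L₂ α₂).comp ((continuous_const.sub continuous_id).continuousOn)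
    intro x hx
    have : x ≤ u - U := hx.2
    simp only [mem_Ioi]
    show (0:ℝ) < u - x
    linarith
  obtain ⟨Mφ, hMφ⟩ := isCompact_Icc.exists_bound_of_continuousOn hφcont
  have hφmeas : Measurable (fun x => gh L₂ α₂ (u - x)) := by
    unfold gh; fun_prop
  have hφint : IntegrableOn (fun x => gh L₂ α₂ (u - x)) (Ioc U (u-U)) (μ.map X₁) := by
    apply Integrable.mono' (integrable_const Mφ) hφmeas.aestronglyMeasurable
    filter_upwards [ae_restrict_mem measurableSet_Ioc] with x hx
    exact hMφ x ⟨hx.1.le, hx.2⟩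
  have hF₂meas : Measurable (fun x => F₂ (u - x)) := by
    simp only [hF₂def]
    exact ENNReal.measurable_toReal.comp hfmeas
  have hF₂int : IntegrableOn (fun x => F₂ (u - x)) (Ioc U (u-U)) (μ.map X₁) := by
    apply Integrable.mono' (integrable_const 1) hF₂meas.aestronglyMeasurable
    apply ae_of_all
    intro x
    rw [Real.norm_eq_abs, abs_of_nonneg (hF₂0 _)]
    exact hF₂le _
  -- sandwich on the middle term
  have hT2up : ∫ x in Ioc U (u-U), F₂ (u - x) ∂(μ.map X₁)
      ≤ (1+ε) * ∫ x in Ioc U (u-U), gh L₂ α₂ (u - x) ∂(μ.map X₁) := by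
    rw [← integral_const_mul]
    apply setIntegral_mono_on hF₂int (hφint.const_mul _) measurableSet_Ioc
    intro x hx
    exact (htails (u-x) (by linarith [hx.2])).2.2
  have hT2low : (1-ε) * ∫ x in Ioc U (u-U), gh L₂ α₂ (u - x) ∂(μ.map X₁)
      ≤ ∫ x in Ioc U (u-U), F₂ (u - x) ∂(μ.map X₁) := by
    rw [← integral_const_mul]
    apply setIntegral_mono_on (hφint.const_mul _) hF₂int measurableSet_Ioc
    intro x hx
    exact (htails (u-x) (by linarith [hx.2])).2.1
  -- the clamped derivative
  set ψt : ℝ → ℝ := fun s => (max (u - s) U - α₂/(max (u - s) U)) * gh L₂ α₂ (max (u - s) U)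
    with hψtdef
  have hψtcont : Continuous ψt := psi_clamp_continuous L₂ α₂ u U hU0
  have hderiv : ∀ x ∈ Icc U (u-U), HasDerivAt (fun y => gh L₂ α₂ (u - y)) (ψt x) x := by
    intro x hx
    have hux : (0:ℝ) < u - x := by have := hx.2; linarith
    have hmax : max (u - x) U = u - x := max_eq_left (by have := hx.2; linarith)
    have := phi_hasDerivAt (L := L₂) (a := α₂) hux
    simpa only [hψtdef, hmax] using this
  have hψt0 : ∀ s ∈ Icc U (u-U), 0 ≤ ψt s := by
    intro s hs
    have husU : U ≤ u - s := by have := hs.2; linarith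
    have hus : (0:ℝ) < u - s := lt_of_lt_of_le hU0 husU
    have hmax : max (u - s) U = u - s := max_eq_left husU
    simp only [hψtdef, hmax]
    apply mul_nonneg _ (gh_pos hL₂ hus).le
    rw [sub_nonneg, div_le_iff₀ hus]
    have h1 : α₂ ≤ |α₂| := le_abs_self α₂
    have h2 : U^2 ≤ (u-s)^2 := pow_le_pow_left₀ hU0.le husU 2
    nlinarith
  -- Stieltjes integration by parts
  have hstj := stieltjes_fubini (μ.map X₁) hb hderiv hψtcont
  -- tail difference values
  have hτ : ∀ s ∈ Icc U (u-U), ((μ.map X₁) (Ioc s (u-U))).toReal = F₁ s - F₁ (u-U) := by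
    intro s hs
    have hadd : (μ.map X₁) (Ioc s (u-U)) + (μ.map X₁) (Ioi (u-U)) = (μ.map X₁) (Ioi s) := by
      rw [← measure_union (Ioc_disjoint_Ioi le_rfl) measurableSet_Ioi,
        Ioc_union_Ioi_eq_Ioi hs.2]
    simp only [hF₁def]
    rw [← hadd, ENNReal.toReal_add (measure_ne_top _ _) (measure_ne_top _ _)]
    ring
  have hτle1 : ∀ s : ℝ, ((μ.map X₁) (Ioc s (u-U))).toReal ≤ 1 := by
    intro s
    exact ENNReal.toReal_le_of_le_ofReal one_pos.le (by simpa using prob_le_one)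
  -- interval integrability of the main Stieltjes integrand
  obtain ⟨Mψ, hMψ⟩ := isCompact_Icc.exists_bound_of_continuousOn
    (hψtcont.continuousOn : ContinuousOn ψt (Icc U (u-U)))
  have hτmeas : Measurable (fun s => ((μ.map X₁) (Ioc s (u-U))).toReal) := by
    apply ENNReal.measurable_toReal.comp
    have hanti : Antitone (fun s : ℝ => (μ.map X₁) (Ioc s (u-U))) :=
      fun v w hvw => measure_mono (Ioc_subset_Ioc_left hvw)
    exact hanti.measurable
  have hIτ : IntervalIntegrable (fun s => ψt s * ((μ.map X₁) (Ioc s (u-U))).toReal)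
      volume U (u-U) := by
    rw [intervalIntegrable_iff_integrableOn_Ioc_of_le hb]
    apply Integrable.mono' (integrable_const Mψ)
      ((hψtcont.measurable.mul hτmeas).aestronglyMeasurable)
    filter_upwards [ae_restrict_mem measurableSet_Ioc] with s hs
    rw [Real.norm_eq_abs, Pi.mul_apply, abs_mul]
    have h1 : |ψt s| ≤ Mψ := hMψ s ⟨hs.1.le, hs.2⟩
    have h2 : |((μ.map X₁) (Ioc s (u-U))).toReal| ≤ 1 := by
      rw [abs_of_nonneg ENNReal.toReal_nonneg]; exact hτle1 s
    calc |ψt s| * |((μ.map X₁) (Ioc s (u-U))).toReal| ≤ Mψ * 1 :=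
          mul_le_mul h1 h2 (abs_nonneg _) (le_trans (abs_nonneg _) h1)
      _ = Mψ := mul_one _
  -- continuity of auxiliary integrands on the interval
  have hsubIcc : Icc U (u-U) ⊆ Ioi (0:ℝ) := fun x hx => lt_of_lt_of_le hU0 hx.1
  have hg₁cont : ContinuousOn (gh L₁ α₁) (Icc U (u-U)) := (gh_continuousOn L₁ α₁).mono hsubIcc
  have huIcc : uIcc U (u-U) = Icc U (u-U) := uIcc_of_le hb
  -- FTC a : integral of ψt
  have hFTCa : ∫ s in U..(u-U), ψt s = gh L₂ α₂ U - gh L₂ α₂ (u-U) := by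
    have h := intervalIntegral.integral_eq_sub_of_hasDerivAt (f := fun y => gh L₂ α₂ (u - y))
      (f' := ψt) (a := U) (b := u-U)
      (fun x hx => hderiv x (huIcc ▸ hx)) (hψtcont.intervalIntegrable _ _)
    rw [h]
    beta_reduce
    rw [show u - (u - U) = U by ring]
  -- FTC b : integral of the derivative of φ * g₁
  have hd2 : ∀ x ∈ Icc U (u-U), HasDerivAt (fun s => gh L₂ α₂ (u - s) * gh L₁ α₁ s)
      (ψt x * gh L₁ α₁ x + gh L₂ α₂ (u - x) * ((α₁/x - x) * gh L₁ α₁ x)) x :=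
    fun x hx => (hderiv x hx).mul (gh_hasDerivAt (lt_of_lt_of_le hU0 hx.1))
  have hint1 : IntervalIntegrable (fun s => ψt s * gh L₁ α₁ s) volume U (u-U) := by
    apply ContinuousOn.intervalIntegrable
    rw [huIcc]
    exact hψtcont.continuousOn.mul hg₁cont
  have hint2 : IntervalIntegrable
      (fun s => gh L₂ α₂ (u - s) * ((α₁/s - s) * gh L₁ α₁ s)) volume U (u-U) := by
    apply ContinuousOn.intervalIntegrable
    rw [huIcc]
    apply hφcont.mul
    apply ContinuousOn.mul _ hg₁cont
    exact (continuousOn_const.div continuousOn_id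
      (fun x hx => ne_of_gt (hsubIcc hx))).sub continuousOn_id
  have hint2' : IntervalIntegrable
      (fun s => gh L₂ α₂ (u - s) * ((s - α₁/s) * gh L₁ α₁ s)) volume U (u-U) := by
    apply ContinuousOn.intervalIntegrable
    rw [huIcc]
    apply hφcont.mul
    apply ContinuousOn.mul _ hg₁cont
    exact continuousOn_id.sub (continuousOn_const.div continuousOn_id
      (fun x hx => ne_of_gt (hsubIcc hx)))
  have hFTCb : (∫ s in U..(u-U), ψt s * gh L₁ α₁ s)
      - (∫ s in U..(u-U), gh L₂ α₂ (u - s) * ((s - α₁/s) * gh L₁ α₁ s))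
      = gh L₂ α₂ U * gh L₁ α₁ (u-U) - gh L₂ α₂ (u-U) * gh L₁ α₁ U := by
    have h := intervalIntegral.integral_eq_sub_of_hasDerivAt
      (f := fun s => gh L₂ α₂ (u - s) * gh L₁ α₁ s)
      (f' := fun x => ψt x * gh L₁ α₁ x + gh L₂ α₂ (u - x) * ((α₁/x - x) * gh L₁ α₁ x))
      (a := U) (b := u-U) (fun x hx => hd2 x (huIcc ▸ hx))
      (by
        apply ContinuousOn.intervalIntegrable
        rw [huIcc]
        apply ContinuousOn.add (hψtcont.continuousOn.mul hg₁cont)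
        apply hφcont.mul
        apply ContinuousOn.mul _ hg₁cont
        exact (continuousOn_const.div continuousOn_id
          (fun x hx => ne_of_gt (hsubIcc hx))).sub continuousOn_id)
    rw [intervalIntegral.integral_add hint1 hint2] at h
    have hneg : ∫ s in U..(u-U), gh L₂ α₂ (u - s) * ((α₁/s - s) * gh L₁ α₁ s)
        = - ∫ s in U..(u-U), gh L₂ α₂ (u - s) * ((s - α₁/s) * gh L₁ α₁ s) := by
      rw [← intervalIntegral.integral_neg]
      apply intervalIntegral.integral_congr
      intro s hs
      ring
    rw [hneg] at h
    beta_reduce at h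
    rw [show u - (u - U) = U by ring] at h
    linarith [h]
  -- comparison integrals
  have hIup' : IntervalIntegrable
      (fun s => ψt s * ((1+ε) * gh L₁ α₁ s - (1-ε) * gh L₁ α₁ (u-U))) volume U (u-U) := by
    apply ContinuousOn.intervalIntegrable
    rw [huIcc]
    exact hψtcont.continuousOn.mul ((continuousOn_const.mul hg₁cont).sub continuousOn_const)
  have hIlow' : IntervalIntegrable
      (fun s => ψt s * ((1-ε) * gh L₁ α₁ s - (1+ε) * gh L₁ α₁ (u-U))) volume U (u-U) := by
    apply ContinuousOn.intervalIntegrable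
    rw [huIcc]
    exact hψtcont.continuousOn.mul ((continuousOn_const.mul hg₁cont).sub continuousOn_const)
  have hIup : (∫ s in U..(u-U), ψt s * ((μ.map X₁) (Ioc s (u-U))).toReal)
      ≤ ∫ s in U..(u-U), ψt s * ((1+ε) * gh L₁ α₁ s - (1-ε) * gh L₁ α₁ (u-U)) := by
    apply intervalIntegral.integral_mono_on hb hIτ hIup'
    intro s hs
    apply mul_le_mul_of_nonneg_left _ (hψt0 s hs)
    rw [hτ s hs]
    have h1 := (htails s hs.1).1.2
    have h2 := (htails (u-U) hb).1.1
    linarith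
  have hIlow : (∫ s in U..(u-U), ψt s * ((1-ε) * gh L₁ α₁ s - (1+ε) * gh L₁ α₁ (u-U)))
      ≤ ∫ s in U..(u-U), ψt s * ((μ.map X₁) (Ioc s (u-U))).toReal := by
    apply intervalIntegral.integral_mono_on hb hIlow' hIτ
    intro s hs
    apply mul_le_mul_of_nonneg_left _ (hψt0 s hs)
    rw [hτ s hs]
    have h1 := (htails s hs.1).1.1
    have h2 := (htails (u-U) hb).1.2
    linarith
  have hlinUp : (∫ s in U..(u-U), ψt s * ((1+ε) * gh L₁ α₁ s - (1-ε) * gh L₁ α₁ (u-U)))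
      = (1+ε) * (∫ s in U..(u-U), ψt s * gh L₁ α₁ s)
        - ((1-ε) * gh L₁ α₁ (u-U)) * (∫ s in U..(u-U), ψt s) := by
    rw [← intervalIntegral.integral_const_mul, ← intervalIntegral.integral_const_mul,
      ← intervalIntegral.integral_sub (hint1.const_mul _)
        ((hψtcont.intervalIntegrable _ _).const_mul _)]
    apply intervalIntegral.integral_congr
    intro s hs
    ring
  have hlinLow : (∫ s in U..(u-U), ψt s * ((1-ε) * gh L₁ α₁ s - (1+ε) * gh L₁ α₁ (u-U)))
      = (1-ε) * (∫ s in U..(u-U), ψt s * gh L₁ α₁ s)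
        - ((1+ε) * gh L₁ α₁ (u-U)) * (∫ s in U..(u-U), ψt s) := by
    rw [← intervalIntegral.integral_const_mul, ← intervalIntegral.integral_const_mul,
      ← intervalIntegral.integral_sub (hint1.const_mul _)
        ((hψtcont.intervalIntegrable _ _).const_mul _)]
    apply intervalIntegral.integral_congr
    intro s hs
    ring
  have hSval : ((μ.map X₁) (Ioc U (u-U))).toReal = F₁ U - F₁ (u-U) := hτ U ⟨le_refl U, hb⟩
  have hφU0 : (0:ℝ) ≤ gh L₂ α₂ (u-U) := (gh_pos hL₂ huU).le
  -- bounds for the middle set integral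
  have hMidUp : (∫ x in Ioc U (u-U), gh L₂ α₂ (u - x) ∂(μ.map X₁))
      ≤ (1+ε) * (∫ s in U..(u-U), gh L₂ α₂ (u-s) * ((s - α₁/s) * gh L₁ α₁ s))
        + 2*ε*(gh L₂ α₂ U * gh L₁ α₁ (u-U)) := by
    rw [hstj, hSval]
    have hτUb : F₁ U - F₁ (u-U) ≤ (1+ε) * gh L₁ α₁ U - (1-ε) * gh L₁ α₁ (u-U) := by
      have h1 := (htails U (le_refl U)).1.2
      have h2 := (htails (u-U) hb).1.1
      linarith
    have step1 : gh L₂ α₂ (u-U) * (F₁ U - F₁ (u-U))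
        ≤ gh L₂ α₂ (u-U) * ((1+ε) * gh L₁ α₁ U - (1-ε) * gh L₁ α₁ (u-U)) :=
      mul_le_mul_of_nonneg_left hτUb hφU0
    have hring : gh L₂ α₂ (u-U) * ((1+ε) * gh L₁ α₁ U - (1-ε) * gh L₁ α₁ (u-U))
        + ((1+ε) * (∫ s in U..(u-U), ψt s * gh L₁ α₁ s)
          - ((1-ε) * gh L₁ α₁ (u-U)) * (∫ s in U..(u-U), ψt s))
        = (1+ε) * (∫ s in U..(u-U), gh L₂ α₂ (u-s) * ((s - α₁/s) * gh L₁ α₁ s))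
          + 2*ε*(gh L₂ α₂ U * gh L₁ α₁ (u-U)) := by
      linear_combination (1+ε) * hFTCb - ((1-ε) * gh L₁ α₁ (u-U)) * hFTCa
    linarith [hIup, hlinUp, step1]
  have hMidLow : (1-ε) * (∫ s in U..(u-U), gh L₂ α₂ (u-s) * ((s - α₁/s) * gh L₁ α₁ s))
        - 2*ε*(gh L₂ α₂ U * gh L₁ α₁ (u-U))
      ≤ ∫ x in Ioc U (u-U), gh L₂ α₂ (u - x) ∂(μ.map X₁) := by
    rw [hstj, hSval]
    have hτLb : (1-ε) * gh L₁ α₁ U - (1+ε) * gh L₁ α₁ (u-U) ≤ F₁ U - F₁ (u-U) := by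
      have h1 := (htails U (le_refl U)).1.1
      have h2 := (htails (u-U) hb).1.2
      linarith
    have step1 : gh L₂ α₂ (u-U) * ((1-ε) * gh L₁ α₁ U - (1+ε) * gh L₁ α₁ (u-U))
        ≤ gh L₂ α₂ (u-U) * (F₁ U - F₁ (u-U)) :=
      mul_le_mul_of_nonneg_left hτLb hφU0
    have hring : gh L₂ α₂ (u-U) * ((1-ε) * gh L₁ α₁ U - (1+ε) * gh L₁ α₁ (u-U))
        + ((1-ε) * (∫ s in U..(u-U), ψt s * gh L₁ α₁ s)
          - ((1+ε) * gh L₁ α₁ (u-U)) * (∫ s in U..(u-U), ψt s))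
        = (1-ε) * (∫ s in U..(u-U), gh L₂ α₂ (u-s) * ((s - α₁/s) * gh L₁ α₁ s))
          - 2*ε*(gh L₂ α₂ U * gh L₁ α₁ (u-U)) := by
      linear_combination (1-ε) * hFTCb - ((1+ε) * gh L₁ α₁ (u-U)) * hFTCa
    linarith [hIlow, hlinLow, step1]
  -- global bounds on P
  have hPup : (μ {ω | X₁ ω + X₂ ω > u}).toReal
      ≤ (1+ε) * gh L₂ α₂ (u-U)
        + ((1+ε) * ((1+ε) * (∫ s in U..(u-U), gh L₂ α₂ (u-s) * ((s - α₁/s) * gh L₁ α₁ s))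
            + 2*ε*(gh L₂ α₂ U * gh L₁ α₁ (u-U)))
          + (1+ε) * gh L₁ α₁ (u-U)) := by
    rw [hPsum]
    have hmid : (∫⁻ x in Ioc U (u-U), (μ.map X₂) (Ioi (u - x)) ∂(μ.map X₁)).toReal
        ≤ (1+ε) * ((1+ε) * (∫ s in U..(u-U), gh L₂ α₂ (u-s) * ((s - α₁/s) * gh L₁ α₁ s))
            + 2*ε*(gh L₂ α₂ U * gh L₁ α₁ (u-U))) := by
      rw [hT2eq]
      calc ∫ x in Ioc U (u-U), F₂ (u - x) ∂(μ.map X₁)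
          ≤ (1+ε) * ∫ x in Ioc U (u-U), gh L₂ α₂ (u - x) ∂(μ.map X₁) := hT2up
        _ ≤ _ := mul_le_mul_of_nonneg_left hMidUp (by linarith)
    linarith [hT1, hT3, hmid]
  have hPlow : (1-ε) * ((1-ε) * (∫ s in U..(u-U), gh L₂ α₂ (u-s) * ((s - α₁/s) * gh L₁ α₁ s))
        - 2*ε*(gh L₂ α₂ U * gh L₁ α₁ (u-U)))
      ≤ (μ {ω | X₁ ω + X₂ ω > u}).toReal := by
    rw [hPsum]
    have hmid : (1-ε) * ((1-ε) * (∫ s in U..(u-U), gh L₂ α₂ (u-s) * ((s - α₁/s) * gh L₁ α₁ s))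
          - 2*ε*(gh L₂ α₂ U * gh L₁ α₁ (u-U)))
        ≤ (∫⁻ x in Ioc U (u-U), (μ.map X₂) (Ioi (u - x)) ∂(μ.map X₁)).toReal := by
      rw [hT2eq]
      calc (1-ε) * ((1-ε) * (∫ s in U..(u-U), gh L₂ α₂ (u-s) * ((s - α₁/s) * gh L₁ α₁ s))
            - 2*ε*(gh L₂ α₂ U * gh L₁ α₁ (u-U)))
          ≤ (1-ε) * ∫ x in Ioc U (u-U), gh L₂ α₂ (u - x) ∂(μ.map X₁) :=
            mul_le_mul_of_nonneg_left hMidLow (by linarith)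
        _ ≤ _ := hT2low
    linarith [hT10, hT30, hmid]
  -- divide by the normalising function
  have hdivUp : (μ {ω | X₁ ω + X₂ ω > u}).toReal
        / (L₁ * L₂ * Real.sqrt Real.pi * (u/2) ^ (α₁+α₂+1) * Real.exp (-u^2/4))
      ≤ (1+ε) * (gh L₂ α₂ (u - U) /
          (L₁ * L₂ * Real.sqrt Real.pi * (u/2) ^ (α₁+α₂+1) * Real.exp (-u^2/4)))
        + ((1+ε) * ((1+ε) * ((∫ x in U..(u-U), gh L₂ α₂ (u-x) * ((x - α₁/x) * gh L₁ α₁ x)) /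
              (L₁ * L₂ * Real.sqrt Real.pi * (u/2) ^ (α₁+α₂+1) * Real.exp (-u^2/4)))
            + 2*ε*(gh L₂ α₂ U * (gh L₁ α₁ (u - U) /
              (L₁ * L₂ * Real.sqrt Real.pi * (u/2) ^ (α₁+α₂+1) * Real.exp (-u^2/4)))))
          + (1+ε) * (gh L₁ α₁ (u - U) /
              (L₁ * L₂ * Real.sqrt Real.pi * (u/2) ^ (α₁+α₂+1) * Real.exp (-u^2/4)))) := by
    calc (μ {ω | X₁ ω + X₂ ω > u}).toReal
          / (L₁ * L₂ * Real.sqrt Real.pi * (u/2) ^ (α₁+α₂+1) * Real.exp (-u^2/4))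
        ≤ ((1+ε) * gh L₂ α₂ (u-U)
            + ((1+ε) * ((1+ε) * (∫ s in U..(u-U), gh L₂ α₂ (u-s) * ((s - α₁/s) * gh L₁ α₁ s))
                + 2*ε*(gh L₂ α₂ U * gh L₁ α₁ (u-U)))
              + (1+ε) * gh L₁ α₁ (u-U)))
          / (L₁ * L₂ * Real.sqrt Real.pi * (u/2) ^ (α₁+α₂+1) * Real.exp (-u^2/4)) :=
          (div_le_div_iff_of_pos_right hH).2 hPup
      _ = _ := by ring
  have hdivLow : (1-ε) * ((1-ε) * ((∫ x in U..(u-U), gh L₂ α₂ (u-x) * ((x - α₁/x) * gh L₁ α₁ x)) /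
            (L₁ * L₂ * Real.sqrt Real.pi * (u/2) ^ (α₁+α₂+1) * Real.exp (-u^2/4)))
          - 2*ε*(gh L₂ α₂ U * (gh L₁ α₁ (u - U) /
            (L₁ * L₂ * Real.sqrt Real.pi * (u/2) ^ (α₁+α₂+1) * Real.exp (-u^2/4)))))
      ≤ (μ {ω | X₁ ω + X₂ ω > u}).toReal
        / (L₁ * L₂ * Real.sqrt Real.pi * (u/2) ^ (α₁+α₂+1) * Real.exp (-u^2/4)) := by
    calc (1-ε) * ((1-ε) * ((∫ x in U..(u-U), gh L₂ α₂ (u-x) * ((x - α₁/x) * gh L₁ α₁ x)) /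
            (L₁ * L₂ * Real.sqrt Real.pi * (u/2) ^ (α₁+α₂+1) * Real.exp (-u^2/4)))
          - 2*ε*(gh L₂ α₂ U * (gh L₁ α₁ (u - U) /
            (L₁ * L₂ * Real.sqrt Real.pi * (u/2) ^ (α₁+α₂+1) * Real.exp (-u^2/4)))))
        = ((1-ε) * ((1-ε) * (∫ s in U..(u-U), gh L₂ α₂ (u-s) * ((s - α₁/s) * gh L₁ α₁ s))
            - 2*ε*(gh L₂ α₂ U * gh L₁ α₁ (u-U))))
          / (L₁ * L₂ * Real.sqrt Real.pi * (u/2) ^ (α₁+α₂+1) * Real.exp (-u^2/4)) := by ring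
      _ ≤ _ := (div_le_div_iff_of_pos_right hH).2 hPlow
  -- final numeric estimate
  set j : ℝ := (∫ x in U..(u-U), gh L₂ α₂ (u-x) * ((x - α₁/x) * gh L₁ α₁ x)) /
    (L₁ * L₂ * Real.sqrt Real.pi * (u/2) ^ (α₁+α₂+1) * Real.exp (-u^2/4)) with hjdef
  set e1 : ℝ := gh L₂ α₂ (u - U) /
    (L₁ * L₂ * Real.sqrt Real.pi * (u/2) ^ (α₁+α₂+1) * Real.exp (-u^2/4)) with he1def
  set e2 : ℝ := gh L₁ α₁ (u - U) /
    (L₁ * L₂ * Real.sqrt Real.pi * (u/2) ^ (α₁+α₂+1) * Real.exp (-u^2/4)) with he2def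
  set e3 : ℝ := gh L₂ α₂ U * e2 with he3def
  rw [Real.dist_eq, abs_lt]
  have hJb := abs_lt.1 hJu
  have hE₁b := abs_lt.1 hE₁u
  have hE₂b := abs_lt.1 hE₂u
  have hE₃b := abs_lt.1 hE₃u
  have hεa : (0:ℝ) ≤ 1 - ε := by linarith
  have hεb : (0:ℝ) ≤ 1 + ε := by linarith
  have hεc : (0:ℝ) ≤ 2*ε := by linarith
  constructor
  · -- lower bound
    have h1 : (1-ε)*(1-ε) ≤ (1-ε)*j :=
      mul_le_mul_of_nonneg_left (by linarith [hJb.1]) hεa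
    have h2 : 2*ε*e3 ≤ 2*ε*ε :=
      mul_le_mul_of_nonneg_left (le_of_lt hE₃b.2) hεc
    have h3 : (1-ε)*((1-ε)*(1-ε) - 2*ε*ε) ≤ (1-ε)*((1-ε)*j - 2*ε*e3) :=
      mul_le_mul_of_nonneg_left (by linarith) hεa
    have h4 : (1-ε)*((1-ε)*(1-ε) - 2*ε*ε)
        ≤ (μ {ω | X₁ ω + X₂ ω > u}).toReal /
          (L₁ * L₂ * Real.sqrt Real.pi * (u/2) ^ (α₁+α₂+1) * Real.exp (-u^2/4)) :=
      le_trans h3 hdivLow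
    exact final_arith_low ε ε0 _ hε hε2 hε3 hε0 h4
  · -- upper bound
    have h1 : (1+ε)*e1 ≤ (1+ε)*ε :=
      mul_le_mul_of_nonneg_left (le_of_lt hE₁b.2) hεb
    have h2 : (1+ε)*e2 ≤ (1+ε)*ε :=
      mul_le_mul_of_nonneg_left (le_of_lt hE₂b.2) hεb
    have h3 : (1+ε)*j ≤ (1+ε)*(1+ε) :=
      mul_le_mul_of_nonneg_left (by linarith [hJb.2]) hεb
    have h4 : 2*ε*e3 ≤ 2*ε*ε :=
      mul_le_mul_of_nonneg_left (le_of_lt hE₃b.2) hεc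
    have h5 : (1+ε)*((1+ε)*j + 2*ε*e3) ≤ (1+ε)*((1+ε)*(1+ε) + 2*ε*ε) :=
      mul_le_mul_of_nonneg_left (by linarith) hεb
    have h6 : (μ {ω | X₁ ω + X₂ ω > u}).toReal /
          (L₁ * L₂ * Real.sqrt Real.pi * (u/2) ^ (α₁+α₂+1) * Real.exp (-u^2/4))
        ≤ (1+ε)*ε + ((1+ε)*((1+ε)*(1+ε) + 2*ε*ε) + (1+ε)*ε) := by
      linarith [hdivUp, h1, h2, h5]
    exact final_arith_up ε ε0 _ hε hε2 hε3 hε0 h6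
end

section
/- Let n = 2 and S₁, S₂ be independent [0,1]-valued random variables with P(Sᵢ > 1 − t/x)/P(Sᵢ > 1 − 1/x) → t^{γᵢ} as x → ∞ for all t > 0, where γᵢ ≥ 0. Then for λ ∈ (0,1), P(λS₁ + (1−λ)S₂ > u) ∼ λ^{−γ₁}(1−λ)^{−γ₂} · Γ(γ₁+1)Γ(γ₂+1)/Γ(γ₁+γ₂+1) · P(S₁ > u)P(S₂ > u) as u ↑ 1. -/
open MeasureTheory ProbabilityTheory Filter
open scoped Topology

open Set
private noncomputable def phi (γ x : ℝ) : ℝ := if x ≤ 0 then 0 else x ^ γ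

private lemma phi_nonneg (γ x : ℝ) : 0 ≤ phi γ x := by
  unfold phi; split
  · exact le_refl 0
  · next h => exact Real.rpow_nonneg (le_of_lt (not_le.mp h)) _

private lemma phi_of_pos {x : ℝ} (hx : 0 < x) (γ : ℝ) : phi γ x = x ^ γ := by
  unfold phi; rw [if_neg (not_le.mpr hx)]

private lemma phi_of_nonpos {x : ℝ} (hx : x ≤ 0) (γ : ℝ) : phi γ x = 0 := if_pos hx

private lemma phi_eq_rpow {γ x : ℝ} (hx : 0 ≤ x) (hγ : γ ≠ 0) : phi γ x = x ^ γ := by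
  rcases eq_or_lt_of_le hx with h | h
  · rw [← h, phi_of_nonpos le_rfl, Real.zero_rpow hγ]
  · exact phi_of_pos h γ

private lemma phi_one (γ : ℝ) : phi γ 1 = 1 := by
  rw [phi_of_pos one_pos, Real.one_rpow]

private lemma phi_zero (γ : ℝ) : phi γ 0 = 0 := phi_of_nonpos le_rfl γ

private lemma phi_mono {γ : ℝ} (hγ : 0 ≤ γ) {x y : ℝ} (h : x ≤ y) : phi γ x ≤ phi γ y := by
  rcases le_or_gt y 0 with hy | hy
  · rw [phi_of_nonpos hy, phi_of_nonpos (h.trans hy)]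
  · rw [phi_of_pos hy]
    rcases le_or_gt x 0 with hx | hx
    · rw [phi_of_nonpos hx]; exact Real.rpow_nonneg hy.le _
    · rw [phi_of_pos hx]; exact Real.rpow_le_rpow hx.le h hγ

private lemma phi_le_rpow {γ x : ℝ} (hx : 0 ≤ x) : phi γ x ≤ x ^ γ := by
  rcases eq_or_lt_of_le hx with h | h
  · rw [← h, phi_zero]; exact Real.rpow_nonneg le_rfl _
  · rw [phi_of_pos h]

private lemma phi_div {γ c : ℝ} (hc : 0 < c) (x : ℝ) : phi γ (x / c) = c ^ (-γ) * phi γ x := by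
  rcases le_or_gt x 0 with hx | hx
  · rw [phi_of_nonpos hx, phi_of_nonpos (div_nonpos_of_nonpos_of_nonneg hx hc.le), mul_zero]
  · rw [phi_of_pos hx, phi_of_pos (div_pos hx hc), Real.div_rpow hx.le hc.le,
      Real.rpow_neg hc.le, div_eq_mul_inv, mul_comm]

private lemma real_rpow_add_le {γ x y : ℝ} (hx : 0 ≤ x) (hy : 0 ≤ y) (hγ : 0 ≤ γ) (hγ1 : γ ≤ 1) :
    (x + y) ^ γ ≤ x ^ γ + y ^ γ := by
  have h := NNReal.rpow_add_le_add_rpow x.toNNReal y.toNNReal hγ hγ1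
  have hxy : (0:ℝ) ≤ x + y := by linarith
  have := NNReal.coe_le_coe.mpr h
  push_cast [NNReal.coe_rpow] at this
  rwa [Real.coe_toNNReal x hx, Real.coe_toNNReal y hy] at this

private lemma rpow_mvt {γ p q : ℝ} (hγ : 1 ≤ γ) (hp : 0 ≤ p) (hpq : p ≤ q) (hq : q ≤ 1) :
    q ^ γ - p ^ γ ≤ γ * (q - p) := by
  have key : ‖q ^ γ - p ^ γ‖ ≤ γ * ‖q - p‖ := by
    apply Convex.norm_image_sub_le_of_norm_hasDerivWithin_le
      (f := fun x : ℝ => x ^ γ) (f' := fun x : ℝ => γ * x ^ (γ - 1)) (s := Set.Icc 0 1)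
    · intro x hx
      exact (Real.hasDerivAt_rpow_const (Or.inr hγ)).hasDerivWithinAt
    · intro x hx
      rw [Real.norm_eq_abs, abs_of_nonneg (mul_nonneg (by linarith) (Real.rpow_nonneg hx.1 _))]
      have : x ^ (γ - 1) ≤ 1 := Real.rpow_le_one hx.1 hx.2 (by linarith)
      nlinarith
    · exact convex_Icc 0 1
    · exact ⟨hp, hpq.trans hq⟩
    · exact ⟨hp.trans hpq, hq⟩
  rw [Real.norm_eq_abs, Real.norm_eq_abs, abs_of_nonneg (by linarith : (0:ℝ) ≤ q - p)] at key
  calc q ^ γ - p ^ γ ≤ |q ^ γ - p ^ γ| := le_abs_self _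
    _ ≤ γ * (q - p) := key

private lemma rpow_diff_le {γ p q h : ℝ} (hγ : 0 < γ) (hp : 0 ≤ p) (hpq : p ≤ q) (hq : q ≤ 1)
    (hh : q - p ≤ h) : q ^ γ - p ^ γ ≤ h ^ γ + γ * h := by
  have hh0 : 0 ≤ h := le_trans (by linarith) hh
  rcases le_or_gt γ 1 with h1 | h1
  · have : q ^ γ ≤ p ^ γ + (q - p) ^ γ := by
      have := real_rpow_add_le hp (by linarith : (0:ℝ) ≤ q - p) hγ.le h1
      rwa [add_sub_cancel] at this
    have h2 : (q - p) ^ γ ≤ h ^ γ := Real.rpow_le_rpow (by linarith) hh hγ.le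
    nlinarith [mul_nonneg hγ.le hh0]
  · have := rpow_mvt h1.le hp hpq hq
    have h3 : (0:ℝ) ≤ h ^ γ := Real.rpow_nonneg hh0 _
    nlinarith

private lemma betaReal {u v : ℝ} (hu : 0 < u) (hv : 0 < v) :
    ∫ x in (0:ℝ)..1, x ^ (u - 1) * (1 - x) ^ (v - 1)
      = Real.Gamma u * Real.Gamma v / Real.Gamma (u + v) := by
  have h := Complex.Gamma_mul_Gamma_eq_betaIntegral (s := (u:ℂ)) (t := (v:ℂ))
    (by simpa using hu) (by simpa using hv)
  have hb : Complex.betaIntegral (u:ℂ) (v:ℂ)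
      = ((∫ x in (0:ℝ)..1, x ^ (u - 1) * (1 - x) ^ (v - 1) : ℝ) : ℂ) := by
    rw [Complex.betaIntegral, ← intervalIntegral.integral_ofReal]
    apply intervalIntegral.integral_congr
    intro x hx
    rw [Set.uIcc_of_le (zero_le_one)] at hx
    show (x:ℂ) ^ ((u:ℂ) - 1) * (1 - (x:ℂ)) ^ ((v:ℂ) - 1)
        = ((x ^ (u - 1) * (1 - x) ^ (v - 1) : ℝ) : ℂ)
    rw [Complex.ofReal_mul, Complex.ofReal_cpow hx.1 (u-1),
      Complex.ofReal_cpow (by linarith [hx.2] : (0:ℝ) ≤ 1 - x) (v-1)]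
    push_cast
    ring
  rw [hb, ← Complex.ofReal_add, Complex.Gamma_ofReal, Complex.Gamma_ofReal,
    Complex.Gamma_ofReal, ← Complex.ofReal_mul, ← Complex.ofReal_mul] at h
  have h' := Complex.ofReal_inj.mp h
  have hne : Real.Gamma (u + v) ≠ 0 := (Real.Gamma_pos_of_pos (by linarith)).ne'
  field_simp [hne]
  linarith [h']
private lemma interval_bounds (γ₁ : ℝ) {γ₂ : ℝ} (hγ₁ : 0 ≤ γ₁) (hγ₂ : 0 < γ₂) {p q : ℝ}
    (hp : 0 ≤ p) (hpq : p ≤ q) (hq : q ≤ 1) (hp1 : p < 1) :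
    phi γ₁ (1-q) * (phi γ₂ q - phi γ₂ p) ≤ (∫ x in p..q, γ₂ * x^(γ₂-1) * (1-x)^γ₁)
    ∧ (∫ x in p..q, γ₂ * x^(γ₂-1) * (1-x)^γ₁) ≤ phi γ₁ (1-p) * (phi γ₂ q - phi γ₂ p) := by
  have hw : IntervalIntegrable (fun x : ℝ => γ₂ * x^(γ₂-1)) volume p q :=
    (intervalIntegral.intervalIntegrable_rpow' (by linarith)).const_mul γ₂
  have hcont : Continuous fun x : ℝ => (1-x)^γ₁ := by
    rw [continuous_iff_continuousAt]; intro x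
    exact (Real.continuousAt_rpow_const _ _ (Or.inr hγ₁)).comp
      ((continuous_const.sub continuous_id).continuousAt)
  have hint : IntervalIntegrable (fun x : ℝ => γ₂ * x^(γ₂-1) * (1-x)^γ₁) volume p q :=
    hw.mul_continuousOn hcont.continuousOn
  have hwnn : ∀ x ∈ Set.Icc p q, 0 ≤ γ₂ * x^(γ₂-1) := fun x hx =>
    mul_nonneg hγ₂.le (Real.rpow_nonneg (hp.trans hx.1) _)
  have hwint : (∫ x in p..q, γ₂ * x ^ (γ₂ - 1)) = phi γ₂ q - phi γ₂ p := by
    rw [intervalIntegral.integral_const_mul, integral_rpow (Or.inl (by linarith))]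
    rw [phi_eq_rpow hp hγ₂.ne', phi_eq_rpow (hp.trans hpq) hγ₂.ne',
      (by ring : γ₂ - 1 + 1 = γ₂)]
    field_simp
  constructor
  · calc phi γ₁ (1-q) * (phi γ₂ q - phi γ₂ p)
        = ∫ x in p..q, γ₂ * x ^ (γ₂ - 1) * phi γ₁ (1-q) := by
          rw [intervalIntegral.integral_mul_const, hwint, mul_comm]
      _ ≤ ∫ x in p..q, γ₂ * x^(γ₂-1) * (1-x)^γ₁ := by
          apply intervalIntegral.integral_mono_on hpq (hw.mul_const _) hint
          intro x hx
          apply mul_le_mul_of_nonneg_left _ (hwnn x hx)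
          rcases le_or_gt (1-q) 0 with h0 | h0
          · rw [phi_of_nonpos h0]
            exact Real.rpow_nonneg (by linarith [hx.2, hpq.trans hq] : (0:ℝ) ≤ 1 - x) _
          · rw [phi_of_pos h0]
            exact Real.rpow_le_rpow h0.le (by linarith [hx.2]) hγ₁
  · calc (∫ x in p..q, γ₂ * x^(γ₂-1) * (1-x)^γ₁)
        ≤ ∫ x in p..q, γ₂ * x ^ (γ₂ - 1) * phi γ₁ (1-p) := by
          apply intervalIntegral.integral_mono_on hpq hint (hw.mul_const _)
          intro x hx
          apply mul_le_mul_of_nonneg_left _ (hwnn x hx)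
          rw [phi_of_pos (by linarith : 0 < 1 - p)]
          exact Real.rpow_le_rpow (by linarith [hx.2, hq] : (0:ℝ) ≤ 1 - x)
            (by linarith [hx.1]) hγ₁
      _ = phi γ₁ (1-p) * (phi γ₂ q - phi γ₂ p) := by
          rw [intervalIntegral.integral_mul_const, hwint, mul_comm]
private lemma tendsto_Tsums (γ₁ γ₂ : ℝ) (hγ₁ : 0 ≤ γ₁) (hγ₂ : 0 ≤ γ₂) :
    Tendsto (fun m : ℕ => ∑ k ∈ Finset.range m,
        phi γ₁ (1 - (k:ℝ)/(m:ℝ)) * (phi γ₂ (((k:ℝ)+1)/(m:ℝ)) - phi γ₂ ((k:ℝ)/(m:ℝ)))) atTop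
      (𝓝 (Real.Gamma (γ₁+1) * Real.Gamma (γ₂+1) / Real.Gamma (γ₁+γ₂+1)))
    ∧ Tendsto (fun m : ℕ => ∑ k ∈ Finset.range m,
        phi γ₁ (1 - ((k:ℝ)+1)/(m:ℝ)) * (phi γ₂ (((k:ℝ)+1)/(m:ℝ)) - phi γ₂ ((k:ℝ)/(m:ℝ)))) atTop
      (𝓝 (Real.Gamma (γ₁+1) * Real.Gamma (γ₂+1) / Real.Gamma (γ₁+γ₂+1))) := by
  set B := Real.Gamma (γ₁+1) * Real.Gamma (γ₂+1) / Real.Gamma (γ₁+γ₂+1) with hBdef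
  set Tu : ℕ → ℝ := fun m => ∑ k ∈ Finset.range m,
    phi γ₁ (1 - (k:ℝ)/(m:ℝ)) * (phi γ₂ (((k:ℝ)+1)/(m:ℝ)) - phi γ₂ ((k:ℝ)/(m:ℝ))) with hTu
  set Tl : ℕ → ℝ := fun m => ∑ k ∈ Finset.range m,
    phi γ₁ (1 - ((k:ℝ)+1)/(m:ℝ)) * (phi γ₂ (((k:ℝ)+1)/(m:ℝ)) - phi γ₂ ((k:ℝ)/(m:ℝ))) with hTl
  rcases hγ₂.eq_or_lt with h0 | h0
  · -- γ₂ = 0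
    have hγ₂0 : γ₂ = 0 := h0.symm
    subst hγ₂0
    have hB1 : B = 1 := by
      rw [hBdef, show (0:ℝ)+1 = 1 by norm_num, Real.Gamma_one,
        show γ₁+0+1 = γ₁+1 by ring, mul_one,
        div_self (Real.Gamma_pos_of_pos (by linarith : (0:ℝ) < γ₁+1)).ne']
    have hval_u : ∀ m : ℕ, 1 ≤ m → Tu m = 1 := by
      intro m hm
      have hm' : (0:ℝ) < (m:ℝ) := by exact_mod_cast hm
      rw [hTu]
      beta_reduce
      rw [Finset.sum_eq_single_of_mem 0 (Finset.mem_range.mpr hm)]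
      · simp only [Nat.cast_zero, zero_div, zero_add, sub_zero, phi_one, phi_zero]
        rw [phi_of_pos (by positivity : (0:ℝ) < 1/(m:ℝ)), Real.rpow_zero]
        norm_num
      · intro b _ hb0
        have hb' : (0:ℝ) < (b:ℝ)/(m:ℝ) := by
          have : 0 < b := Nat.pos_of_ne_zero hb0
          positivity
        rw [phi_of_pos (by positivity : (0:ℝ) < ((b:ℝ)+1)/(m:ℝ)), phi_of_pos hb',
          Real.rpow_zero, Real.rpow_zero, sub_self, mul_zero]
    have hval_l : ∀ m : ℕ, 1 ≤ m → Tl m = phi γ₁ (1 - 1/(m:ℝ)) := by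
      intro m hm
      have hm' : (0:ℝ) < (m:ℝ) := by exact_mod_cast hm
      rw [hTl]
      beta_reduce
      rw [Finset.sum_eq_single_of_mem 0 (Finset.mem_range.mpr hm)]
      · simp only [Nat.cast_zero, zero_div, zero_add, phi_zero]
        rw [phi_of_pos (by positivity : (0:ℝ) < 1/(m:ℝ)), Real.rpow_zero]
        norm_num
      · intro b _ hb0
        have hb' : (0:ℝ) < (b:ℝ)/(m:ℝ) := by
          have : 0 < b := Nat.pos_of_ne_zero hb0
          positivity
        rw [phi_of_pos (by positivity : (0:ℝ) < ((b:ℝ)+1)/(m:ℝ)), phi_of_pos hb',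
          Real.rpow_zero, Real.rpow_zero, sub_self, mul_zero]
    constructor
    · rw [hB1]
      refine Tendsto.congr' ?_ tendsto_const_nhds
      filter_upwards [eventually_ge_atTop 1] with m hm
      exact (hval_u m hm).symm
    · rw [hB1]
      have hb : Tendsto (fun m : ℕ => 1 - 1/(m:ℝ)) atTop (𝓝 1) := by
        simpa using (tendsto_const_nhds (x := (1:ℝ))).sub tendsto_one_div_atTop_nhds_zero_nat
      have hr : Tendsto (fun m : ℕ => (1 - 1/(m:ℝ))^γ₁) atTop (𝓝 1) := by
        have hc := ((Real.continuousAt_rpow_const 1 γ₁ (Or.inl one_ne_zero)).tendsto).comp hb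
        simpa [Real.one_rpow, Function.comp_def] using hc
      refine Tendsto.congr' ?_ hr
      filter_upwards [eventually_ge_atTop 2] with m hm
      have h2 : (0:ℝ) < 1 - 1/(m:ℝ) := by
        have hm2 : (2:ℝ) ≤ (m:ℝ) := by exact_mod_cast hm
        have : 1/(m:ℝ) ≤ 1/2 := by
          apply one_div_le_one_div_of_le <;> linarith
        linarith
      exact ((hval_l m (by omega)).trans (phi_of_pos h2 γ₁)).symm
  · -- 0 < γ₂
    have hcont : Continuous fun x : ℝ => (1-x)^γ₁ := by
      rw [continuous_iff_continuousAt]; intro x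
      exact (Real.continuousAt_rpow_const _ _ (Or.inr hγ₁)).comp
        ((continuous_const.sub continuous_id).continuousAt)
    have key : ∀ m : ℕ, 1 ≤ m →
        (Tl m ≤ B ∧ B ≤ Tu m) ∧ Tu m - Tl m ≤ (1/(m:ℝ))^γ₂ + γ₂ * (1/(m:ℝ)) := by
      intro m hm
      have hM : (0:ℝ) < (m:ℝ) := by exact_mod_cast hm
      set M := (m:ℝ) with hMdef
      -- integrability on each subinterval
      have hintk : ∀ a b : ℝ, IntervalIntegrable (fun x : ℝ => γ₂ * x^(γ₂-1) * (1-x)^γ₁) volume a b :=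
        fun a b => ((intervalIntegral.intervalIntegrable_rpow' (by linarith)).const_mul γ₂).mul_continuousOn
          hcont.continuousOn
      have hsplit : ∑ k ∈ Finset.range m,
          (∫ x in ((k:ℝ)/M)..(((k:ℝ)+1)/M), γ₂ * x^(γ₂-1) * (1-x)^γ₁)
          = ∫ x in (0:ℝ)..1, γ₂ * x^(γ₂-1) * (1-x)^γ₁ := by
        have h := intervalIntegral.sum_integral_adjacent_intervals
          (a := fun k : ℕ => (k:ℝ)/M) (n := m) (f := fun x => γ₂ * x^(γ₂-1) * (1-x)^γ₁)
          (fun k _ => hintk _ _)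
        have hb0 : ((0:ℕ):ℝ)/M = 0 := by norm_num
        have hbm : ((m:ℕ):ℝ)/M = 1 := div_self hM.ne'
        simp only [hb0, hbm] at h
        rw [← h]
        apply Finset.sum_congr rfl
        intro k _
        push_cast
        ring_nf
      have hB : (∫ x in (0:ℝ)..1, γ₂ * x^(γ₂-1) * (1-x)^γ₁) = B := by
        have : (fun x : ℝ => γ₂ * x^(γ₂-1) * (1-x)^γ₁)
            = fun x : ℝ => γ₂ * (x^(γ₂-1) * (1-x)^((γ₁+1)-1)) := by
          funext x; rw [show (γ₁+1)-1 = γ₁ by ring]; ring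
        rw [this, intervalIntegral.integral_const_mul, betaReal h0 (by linarith : (0:ℝ) < γ₁+1),
          hBdef, Real.Gamma_add_one h0.ne', show γ₂+(γ₁+1) = γ₁+γ₂+1 by ring]
        field_simp
      have hterm : ∀ k ∈ Finset.range m,
          (phi γ₁ (1 - ((k:ℝ)+1)/M) * (phi γ₂ (((k:ℝ)+1)/M) - phi γ₂ ((k:ℝ)/M))
            ≤ (∫ x in ((k:ℝ)/M)..(((k:ℝ)+1)/M), γ₂ * x^(γ₂-1) * (1-x)^γ₁))
          ∧ ((∫ x in ((k:ℝ)/M)..(((k:ℝ)+1)/M), γ₂ * x^(γ₂-1) * (1-x)^γ₁)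
            ≤ phi γ₁ (1 - (k:ℝ)/M) * (phi γ₂ (((k:ℝ)+1)/M) - phi γ₂ ((k:ℝ)/M))) := by
        intro k hk
        have hkm : (k:ℝ) < M := by show (k:ℝ) < (m:ℝ); exact_mod_cast Finset.mem_range.mp hk
        have hk1m : (k:ℝ)+1 ≤ M := by
          have h' : (k+1 : ℕ) ≤ m := Finset.mem_range.mp hk
          show (k:ℝ)+1 ≤ (m:ℝ); exact_mod_cast h'
        exact interval_bounds γ₁ hγ₁ h0 (by positivity) (by gcongr; linarith)
          (by rw [div_le_one hM]; exact hk1m) (by rw [div_lt_one hM]; exact hkm)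
      refine ⟨⟨?_, ?_⟩, ?_⟩
      · rw [← hB, ← hsplit, hTl]
        exact Finset.sum_le_sum fun k hk => (hterm k hk).1
      · rw [← hB, ← hsplit, hTu]
        exact Finset.sum_le_sum fun k hk => (hterm k hk).2
      · have hdiff : Tu m - Tl m = ∑ k ∈ Finset.range m,
            (phi γ₁ (1 - (k:ℝ)/M) - phi γ₁ (1 - ((k:ℝ)+1)/M))
              * (phi γ₂ (((k:ℝ)+1)/M) - phi γ₂ ((k:ℝ)/M)) := by
          rw [hTu, hTl, ← Finset.sum_sub_distrib]
          exact Finset.sum_congr rfl fun k _ => by ring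
        rw [hdiff]
        have hbound : ∀ k ∈ Finset.range m,
            (phi γ₁ (1 - (k:ℝ)/M) - phi γ₁ (1 - ((k:ℝ)+1)/M))
              * (phi γ₂ (((k:ℝ)+1)/M) - phi γ₂ ((k:ℝ)/M))
            ≤ (phi γ₁ (1 - (k:ℝ)/M) - phi γ₁ (1 - ((k:ℝ)+1)/M)) * ((1/M)^γ₂ + γ₂ * (1/M)) := by
          intro k hk
          have hkm : (k:ℝ) < M := by show (k:ℝ) < (m:ℝ); exact_mod_cast Finset.mem_range.mp hk
          have hk1m : (k:ℝ)+1 ≤ M := by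
            have h' : (k+1 : ℕ) ≤ m := Finset.mem_range.mp hk
            show (k:ℝ)+1 ≤ (m:ℝ); exact_mod_cast h'
          apply mul_le_mul_of_nonneg_left _ (by
            have := phi_mono hγ₁ (show 1 - ((k:ℝ)+1)/M ≤ 1 - (k:ℝ)/M by gcongr; linarith)
            linarith)
          rw [phi_eq_rpow (by positivity) h0.ne', phi_eq_rpow (by positivity) h0.ne']
          exact rpow_diff_le h0 (by positivity) (by gcongr; linarith)
            (by rw [div_le_one hM]; exact hk1m)
            (le_of_eq (by field_simp; ring))
        calc ∑ k ∈ Finset.range m, (phi γ₁ (1 - (k:ℝ)/M) - phi γ₁ (1 - ((k:ℝ)+1)/M))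
              * (phi γ₂ (((k:ℝ)+1)/M) - phi γ₂ ((k:ℝ)/M))
            ≤ ∑ k ∈ Finset.range m, (phi γ₁ (1 - (k:ℝ)/M) - phi γ₁ (1 - ((k:ℝ)+1)/M))
              * ((1/M)^γ₂ + γ₂ * (1/M)) := Finset.sum_le_sum hbound
          _ = (∑ k ∈ Finset.range m, (phi γ₁ (1 - (k:ℝ)/M) - phi γ₁ (1 - ((k:ℝ)+1)/M)))
              * ((1/M)^γ₂ + γ₂ * (1/M)) := by rw [Finset.sum_mul]
          _ ≤ (1/M)^γ₂ + γ₂ * (1/M) := by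
              have htel : ∑ k ∈ Finset.range m,
                  (phi γ₁ (1 - (k:ℝ)/M) - phi γ₁ (1 - ((k:ℝ)+1)/M)) = 1 := by
                have h := Finset.sum_range_sub' (fun k : ℕ => phi γ₁ (1 - (k:ℝ)/M)) m
                have : ∑ k ∈ Finset.range m, (phi γ₁ (1 - (k:ℝ)/M) - phi γ₁ (1 - ((k:ℝ)+1)/M))
                    = ∑ k ∈ Finset.range m,
                      ((fun k : ℕ => phi γ₁ (1 - (k:ℝ)/M)) k - (fun k : ℕ => phi γ₁ (1 - (k:ℝ)/M)) (k+1)) := by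
                  apply Finset.sum_congr rfl; intro k _; push_cast; ring_nf
                rw [this, h, show ((0:ℕ):ℝ)/M = 0 by norm_num, div_self hM.ne']
                norm_num [phi_one, phi_zero]
              rw [htel, one_mul]
    have hδ : Tendsto (fun m : ℕ => (1/(m:ℝ))^γ₂ + γ₂ * (1/(m:ℝ))) atTop (𝓝 0) := by
      have h1 : Tendsto (fun m : ℕ => ((m:ℝ))^(-γ₂)) atTop (𝓝 0) :=
        (tendsto_rpow_neg_atTop h0).comp (tendsto_natCast_atTop_atTop (R := ℝ))
      have h1' : Tendsto (fun m : ℕ => (1/(m:ℝ))^γ₂) atTop (𝓝 0) := by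
        apply h1.congr'
        filter_upwards [eventually_ge_atTop 1] with m hm
        have : (0:ℝ) ≤ (m:ℝ) := Nat.cast_nonneg m
        rw [one_div, Real.inv_rpow this, ← Real.rpow_neg this]
      simpa using h1'.add ((tendsto_one_div_atTop_nhds_zero_nat).const_mul γ₂)
    constructor
    · apply tendsto_of_tendsto_of_tendsto_of_le_of_le' tendsto_const_nhds
        (by simpa using tendsto_const_nhds.add hδ : Tendsto (fun m : ℕ => B + ((1/(m:ℝ))^γ₂ + γ₂ * (1/(m:ℝ)))) atTop (𝓝 B))
      · filter_upwards [eventually_ge_atTop 1] with m hm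
        exact ((key m hm).1).2
      · filter_upwards [eventually_ge_atTop 1] with m hm
        have h1 := ((key m hm).1).1
        have h2 := (key m hm).2
        linarith
    · apply tendsto_of_tendsto_of_tendsto_of_le_of_le'
        (by simpa using tendsto_const_nhds.sub hδ : Tendsto (fun m : ℕ => B - ((1/(m:ℝ))^γ₂ + γ₂ * (1/(m:ℝ)))) atTop (𝓝 B))
        tendsto_const_nhds
      · filter_upwards [eventually_ge_atTop 1] with m hm
        have h1 := ((key m hm).1).2
        have h2 := (key m hm).2
        linarith
      · filter_upwards [eventually_ge_atTop 1] with m hm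
        exact ((key m hm).1).1
private lemma tendsto_of_double_sandwich {α : Type*} {F : Filter α} [F.NeBot] {R : α → ℝ}
    {L U : ℕ → α → ℝ} {l u : ℕ → ℝ} {c : ℝ}
    (hb : ∀ m : ℕ, 1 ≤ m → ∀ᶠ s in F, L m s ≤ R s ∧ R s ≤ U m s)
    (hLt : ∀ m : ℕ, 1 ≤ m → Tendsto (L m) F (𝓝 (l m)))
    (hUt : ∀ m : ℕ, 1 ≤ m → Tendsto (U m) F (𝓝 (u m)))
    (hlt : Tendsto l atTop (𝓝 c)) (hut : Tendsto u atTop (𝓝 c)) :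
    Tendsto R F (𝓝 c) := by
  have hba : IsBoundedUnder (· ≤ ·) F R := by
    obtain ⟨b, hb'⟩ := (hUt 1 le_rfl).isBoundedUnder_le
    rw [eventually_map] at hb'
    exact isBoundedUnder_of_eventually_le <|
      ((hb 1 le_rfl).and hb').mono fun s hs => hs.1.2.trans hs.2
  have hbb : IsBoundedUnder (· ≥ ·) F R := by
    obtain ⟨b, hb'⟩ := (hLt 1 le_rfl).isBoundedUnder_ge
    rw [eventually_map] at hb'
    exact isBoundedUnder_of_eventually_ge <|
      ((hb 1 le_rfl).and hb').mono fun s hs => hs.2.trans hs.1.1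
  have hsup : ∀ m : ℕ, 1 ≤ m → limsup R F ≤ u m := by
    intro m hm
    rw [← (hUt m hm).limsup_eq]
    exact limsup_le_limsup ((hb m hm).mono fun s hs => hs.2)
      hbb.isCoboundedUnder_le (hUt m hm).isBoundedUnder_le
  have hinf : ∀ m : ℕ, 1 ≤ m → l m ≤ liminf R F := by
    intro m hm
    rw [← (hLt m hm).liminf_eq]
    exact liminf_le_liminf ((hb m hm).mono fun s hs => hs.1)
      (hLt m hm).isBoundedUnder_ge hba.isCoboundedUnder_ge
  have h1 : limsup R F ≤ c :=
    ge_of_tendsto hut ((eventually_ge_atTop 1).mono hsup)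
  have h2 : c ≤ liminf R F :=
    le_of_tendsto hlt ((eventually_ge_atTop 1).mono hinf)
  exact tendsto_of_le_liminf_of_limsup_le h2 h1 hba hbb
private lemma measure_sandwich {Ω : Type*} [MeasurableSpace Ω] (μ : Measure Ω) [IsProbabilityMeasure μ]
    (S₁ S₂ : Ω → ℝ) (hm₁ : Measurable S₁) (hm₂ : Measurable S₂)
    (hr₁ : ∀ ω, S₁ ω ∈ Set.Icc (0:ℝ) 1) (hr₂ : ∀ ω, S₂ ω ∈ Set.Icc (0:ℝ) 1)
    (hind : ProbabilityTheory.IndepFun S₁ S₂ μ)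
    {a b : ℝ} (ha : 0 < a) (hb : 0 < b) (hab : a + b = 1)
    {m : ℕ} (hm : 1 ≤ m) {s : ℝ} (hs : 0 < s) :
    (∑ k ∈ Finset.range m, (μ {ω | S₁ ω > 1 - ((1 - ((k:ℝ)+1)/m)/a) * s}).toReal *
        ((μ {ω | S₂ ω > 1 - (((k:ℝ)+1)/(b*m)) * s}).toReal
          - (μ {ω | S₂ ω > 1 - ((k:ℝ)/(b*m)) * s}).toReal)
      ≤ (μ {ω | a * S₁ ω + b * S₂ ω > 1 - s}).toReal)
    ∧ ((μ {ω | a * S₁ ω + b * S₂ ω > 1 - s}).toReal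
      ≤ ∑ k ∈ Finset.range m, (μ {ω | S₁ ω > 1 - ((1 - (k:ℝ)/m)/a) * s}).toReal *
        ((μ {ω | S₂ ω > 1 - (((k:ℝ)+1)/(b*m)) * s}).toReal
          - (μ {ω | S₂ ω > 1 - ((k:ℝ)/(b*m)) * s}).toReal)) := by
  have hM : (0:ℝ) < (m:ℝ) := by exact_mod_cast hm
  set t : ℕ → ℝ := fun k => ((k:ℝ)/(b*(m:ℝ))) * s with htdef
  have htmono : ∀ {j k : ℕ}, j ≤ k → t j ≤ t k := by
    intro j k hjk
    have : (j:ℝ) ≤ (k:ℝ) := by exact_mod_cast hjk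
    apply mul_le_mul_of_nonneg_right _ hs.le
    gcongr
  have htcast : ∀ k : ℕ, t (k+1) = (((k:ℝ)+1)/(b*(m:ℝ))) * s := by
    intro k; rw [htdef]; push_cast; ring
  -- slice sets
  set slc : ℕ → Set Ω := fun k => S₂ ⁻¹' Set.Ioc (1 - t (k+1)) (1 - t k) with hslcdef
  have hslcmeas : ∀ k, MeasurableSet (slc k) := fun k => hm₂ measurableSet_Ioc
  have hslice : ∀ k : ℕ, (μ (slc k)).toReal
      = (μ {ω | S₂ ω > 1 - t (k+1)}).toReal - (μ {ω | S₂ ω > 1 - t k}).toReal := by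
    intro k
    have hunion : Set.Ioc (1 - t (k+1)) (1 - t k) ∪ Set.Ioi (1 - t k) = Set.Ioi (1 - t (k+1)) :=
      Set.Ioc_union_Ioi_eq_Ioi (by linarith [htmono (Nat.le_succ k)])
    have hdisj : Disjoint (Set.Ioc (1 - t (k+1)) (1 - t k)) (Set.Ioi (1 - t k)) :=
      Set.Ioc_disjoint_Ioi le_rfl
    have hEq : {ω | S₂ ω > 1 - t (k+1)} = slc k ∪ S₂ ⁻¹' Set.Ioi (1 - t k) := by
      rw [hslcdef, ← Set.preimage_union, hunion]; rfl
    rw [hEq, measure_union (hdisj.preimage S₂) (hm₂ measurableSet_Ioi),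
      ENNReal.toReal_add (measure_ne_top μ _) (measure_ne_top μ _)]
    have : S₂ ⁻¹' Set.Ioi (1 - t k) = {ω | S₂ ω > 1 - t k} := rfl
    rw [this]; ring
  have hprod : ∀ (r : ℝ) (k : ℕ), (μ ({ω | S₁ ω > r} ∩ slc k)).toReal
      = (μ {ω | S₁ ω > r}).toReal * (μ (slc k)).toReal := by
    intro r k
    have h1 : {ω | S₁ ω > r} = S₁ ⁻¹' Set.Ioi r := rfl
    rw [h1, hslcdef,
      hind.measure_inter_preimage_eq_mul _ _ measurableSet_Ioi measurableSet_Ioc,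
      ENNReal.toReal_mul]
  constructor
  · -- lower bound
    set P : ℕ → Set Ω := fun k =>
      {ω | S₁ ω > 1 - ((1 - ((k:ℝ)+1)/m)/a) * s} ∩ slc k with hPdef
    have hPmeas : ∀ k, MeasurableSet (P k) := fun k => (hm₁ measurableSet_Ioi).inter (hslcmeas k)
    have hPdisj : (↑(Finset.range m) : Set ℕ).PairwiseDisjoint P := by
      intro i _ j _ hij
      have hkey : ∀ i j : ℕ, i < j → Disjoint (P i) (P j) := by
        intro i j hij'
        have hd : Disjoint (Set.Ioc (1 - t (i+1)) (1 - t i)) (Set.Ioc (1 - t (j+1)) (1 - t j)) := by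
          rw [Set.Ioc_disjoint_Ioc]
          have h1 : t (i+1) ≤ t j := htmono hij'
          have h2 : t i ≤ t j := htmono hij'.le
          exact le_trans inf_le_right (le_sup_of_le_left (by linarith))
        exact Disjoint.mono Set.inter_subset_right Set.inter_subset_right (hd.preimage S₂)
      rcases lt_or_gt_of_ne hij with h | h
      · exact hkey _ _ h
      · exact (hkey _ _ h).symm
    have hsub : (⋃ k ∈ Finset.range m, P k) ⊆ {ω | a * S₁ ω + b * S₂ ω > 1 - s} := by
      intro ω hω
      rw [Set.mem_iUnion₂] at hω
      obtain ⟨k, hk, hω1, hω2⟩ := hω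
      have hk1m : (k:ℝ)+1 ≤ (m:ℝ) := by
        have h' : (k+1:ℕ) ≤ m := Finset.mem_range.mp hk
        exact_mod_cast h'
      -- from hω1 : S₁ ω > 1 - ((1 - (k+1)/m)/a) * s
      have heq : ((1 - ((k:ℝ)+1)/m)/a) * s = (s - b * t (k+1)) / a := by
        rw [htcast]; field_simp
      have hs1 : a * (1 - S₁ ω) < s - b * t (k+1) := by
        have h1 : (1 : ℝ) - S₁ ω < ((1 - ((k:ℝ)+1)/m)/a) * s := by
          have := hω1; simp only [Set.mem_setOf_eq] at this; linarith
        rw [heq] at h1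
        have := (lt_div_iff₀ ha).mp h1
        linarith
      have hs2 : 1 - S₂ ω < t (k+1) := by
        have h2 : 1 - t (k+1) < S₂ ω := hω2.1
        linarith
      show a * S₁ ω + b * S₂ ω > 1 - s
      nlinarith [hb]
    calc ∑ k ∈ Finset.range m, (μ {ω | S₁ ω > 1 - ((1 - ((k:ℝ)+1)/m)/a) * s}).toReal *
          ((μ {ω | S₂ ω > 1 - (((k:ℝ)+1)/(b*m)) * s}).toReal
            - (μ {ω | S₂ ω > 1 - ((k:ℝ)/(b*m)) * s}).toReal)
        = ∑ k ∈ Finset.range m, (μ (P k)).toReal := by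
          apply Finset.sum_congr rfl
          intro k _
          rw [hPdef, hprod, hslice, htcast]
      _ = (μ (⋃ k ∈ Finset.range m, P k)).toReal := by
          rw [measure_biUnion_finset hPdisj (fun k _ => hPmeas k),
            ENNReal.toReal_sum (fun k _ => measure_ne_top μ _)]
      _ ≤ (μ {ω | a * S₁ ω + b * S₂ ω > 1 - s}).toReal :=
          ENNReal.toReal_mono (measure_ne_top μ _) (measure_mono hsub)
  · -- upper bound
    set Q : ℕ → Set Ω := fun k =>
      {ω | S₁ ω > 1 - ((1 - (k:ℝ)/m)/a) * s} ∩ slc k with hQdef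
    have hsub : {ω | a * S₁ ω + b * S₂ ω > 1 - s} ⊆ ⋃ k ∈ Finset.range m, Q k := by
      intro ω hω
      have hω' : 1 - s < a * S₁ ω + b * S₂ ω := hω
      have hX₂0 : 0 ≤ 1 - S₂ ω := by linarith [(hr₂ ω).2]
      have hX₁0 : 0 ≤ 1 - S₁ ω := by linarith [(hr₁ ω).2]
      have hX₂s : 1 - S₂ ω < s / b := by
        rw [lt_div_iff₀ hb]
        nlinarith
      set d : ℝ := s / (b * (m:ℝ)) with hddef
      have hd : 0 < d := by positivity
      set k : ℕ := ⌊(1 - S₂ ω)/d⌋₊ with hkdef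
      have hkm : k < m := by
        rw [hkdef, Nat.floor_lt (by positivity)]
        rw [div_lt_iff₀ hd]
        calc 1 - S₂ ω < s / b := hX₂s
          _ = (m:ℝ) * d := by rw [hddef]; field_simp
      have htk : ∀ j : ℕ, t j = (j:ℝ) * d := by
        intro j; rw [htdef, hddef]; field_simp
      have hlow : t k ≤ 1 - S₂ ω := by
        rw [htk]
        calc (k:ℝ) * d ≤ ((1 - S₂ ω)/d) * d := by
              apply mul_le_mul_of_nonneg_right _ hd.le
              exact Nat.floor_le (by positivity)
          _ = 1 - S₂ ω := by field_simp
      have hhigh : 1 - S₂ ω < t (k+1) := by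
        have h' := Nat.lt_floor_add_one ((1 - S₂ ω)/d)
        have h2 : 1 - S₂ ω < ((k:ℝ)+1) * d := by
          calc 1 - S₂ ω = ((1 - S₂ ω)/d) * d := by field_simp
            _ < ((k:ℝ)+1) * d := by
                apply mul_lt_mul_of_pos_right _ hd
                rw [hkdef]; push_cast; exact h'
        calc 1 - S₂ ω < ((k:ℝ)+1)*d := h2
          _ = t (k+1) := by rw [htk]; push_cast; ring
      rw [Set.mem_iUnion₂]
      refine ⟨k, Finset.mem_range.mpr hkm, ?_, ?_⟩
      · -- S₁ ω > 1 - ((1-k/m)/a) * s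
        have heq : ((1 - (k:ℝ)/m)/a) * s = (s - b * t k) / a := by
          rw [htdef]; field_simp
        show S₁ ω > 1 - ((1 - (k:ℝ)/m)/a) * s
        have h1 : a * (1 - S₁ ω) < s - b * (1 - S₂ ω) := by nlinarith
        have h2 : a * (1 - S₁ ω) < s - b * t k := by nlinarith
        have h3 : 1 - S₁ ω < (s - b * t k)/a := by
          rw [lt_div_iff₀ ha]; linarith
        rw [heq]; linarith
      · show ω ∈ slc k
        simp only [hslcdef, Set.mem_preimage, Set.mem_Ioc]
        exact ⟨by linarith, by linarith⟩
    calc (μ {ω | a * S₁ ω + b * S₂ ω > 1 - s}).toReal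
        ≤ (∑ k ∈ Finset.range m, μ (Q k)).toReal := by
          apply ENNReal.toReal_mono
          · exact (ENNReal.sum_lt_top.mpr fun k _ => measure_lt_top μ _).ne
          · exact (measure_mono hsub).trans (measure_biUnion_finset_le _ _)
      _ = ∑ k ∈ Finset.range m, (μ {ω | S₁ ω > 1 - ((1 - (k:ℝ)/m)/a) * s}).toReal *
          ((μ {ω | S₂ ω > 1 - (((k:ℝ)+1)/(b*m)) * s}).toReal
            - (μ {ω | S₂ ω > 1 - ((k:ℝ)/(b*m)) * s}).toReal) := by
          rw [ENNReal.toReal_sum (fun k _ => measure_ne_top μ _)]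
          apply Finset.sum_congr rfl
          intro k _
          rw [hQdef, hprod, hslice, htcast]
private lemma ratio_at_zero {T : ℝ → ℝ} {γ : ℝ}
    (hreg : ∀ t > 0, Tendsto (fun x : ℝ => T (t/x) / T (1/x)) atTop (𝓝 (t ^ γ)))
    {c : ℝ} (hc : 0 < c) : Tendsto (fun s => T (c*s) / T s) (𝓝[>](0:ℝ)) (𝓝 (c ^ γ)) := by
  have hinv : Tendsto (fun s : ℝ => s⁻¹) (𝓝[>](0:ℝ)) atTop := tendsto_inv_nhdsGT_zero
  have h := (hreg c hc).comp hinv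
  apply h.congr'
  filter_upwards [self_mem_nhdsWithin] with s hs
  show T (c / s⁻¹) / T (1 / s⁻¹) = T (c*s) / T s
  have hs' : s ≠ 0 := ne_of_gt hs
  have h1 : c / s⁻¹ = c * s := by field_simp
  have h2 : (1:ℝ) / s⁻¹ = s := by field_simp
  rw [h1, h2]


/-- Two-risk case: P(λS₁ + (1−λ)S₂ > u) ∼
λ^{−γ₁}(1−λ)^{−γ₂}Γ(γ₁+1)Γ(γ₂+1)/Γ(γ₁+γ₂+1) · P(S₁ > u)P(S₂ > u) as u ↑ 1. -/
theorem two_risk_weighted_sum_tail_at_one {Ω : Type*} [MeasurableSpace Ω] (μ : Measure Ω)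
    [IsProbabilityMeasure μ] (S₁ S₂ : Ω → ℝ) (hm₁ : Measurable S₁) (hm₂ : Measurable S₂)
    (hrange₁ : ∀ ω, S₁ ω ∈ Set.Icc (0 : ℝ) 1) (hrange₂ : ∀ ω, S₂ ω ∈ Set.Icc (0 : ℝ) 1)
    (hendpoint₁ : ∀ u < 1, 0 < (μ {ω | S₁ ω > u}).toReal)
    (hendpoint₂ : ∀ u < 1, 0 < (μ {ω | S₂ ω > u}).toReal)
    (hind : IndepFun S₁ S₂ μ)
    (γ₁ γ₂ : ℝ) (hγ₁ : 0 ≤ γ₁) (hγ₂ : 0 ≤ γ₂)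
    (hreg₁ : ∀ t > 0, Tendsto (fun x : ℝ =>
        (μ {ω | S₁ ω > 1 - t / x}).toReal / (μ {ω | S₁ ω > 1 - 1 / x}).toReal)
        atTop (𝓝 (t ^ γ₁)))
    (hreg₂ : ∀ t > 0, Tendsto (fun x : ℝ =>
        (μ {ω | S₂ ω > 1 - t / x}).toReal / (μ {ω | S₂ ω > 1 - 1 / x}).toReal)
        atTop (𝓝 (t ^ γ₂)))
    (lam : ℝ) (hlam : lam ∈ Set.Ioo (0 : ℝ) 1) :
    Tendsto (fun u : ℝ =>
        (μ {ω | lam * S₁ ω + (1 - lam) * S₂ ω > u}).toReal /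
          (lam ^ (-γ₁) * (1 - lam) ^ (-γ₂) *
            (Real.Gamma (γ₁ + 1) * Real.Gamma (γ₂ + 1) / Real.Gamma (γ₁ + γ₂ + 1)) *
            ((μ {ω | S₁ ω > u}).toReal * (μ {ω | S₂ ω > u}).toReal)))
      (𝓝[<] (1 : ℝ)) (𝓝 1) := by
  obtain ⟨hl0, hl1⟩ := hlam
  have hb : (0:ℝ) < 1 - lam := by linarith
  set a : ℝ := lam with hadef
  set b : ℝ := 1 - lam with hbdef
  set B : ℝ := Real.Gamma (γ₁ + 1) * Real.Gamma (γ₂ + 1) / Real.Gamma (γ₁ + γ₂ + 1) with hBdef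
  set C0 : ℝ := a ^ (-γ₁) * b ^ (-γ₂) * B with hC0def
  set G₁ : ℝ → ℝ := fun s => (μ {ω | S₁ ω > 1 - s}).toReal with hG₁def
  set G₂ : ℝ → ℝ := fun s => (μ {ω | S₂ ω > 1 - s}).toReal with hG₂def
  set H : ℝ → ℝ := fun s => (μ {ω | a * S₁ ω + b * S₂ ω > 1 - s}).toReal with hHdef
  set R : ℝ → ℝ := fun s => H s / (G₁ s * G₂ s) with hRdef
  have hG₁pos : ∀ s : ℝ, 0 < s → 0 < G₁ s := fun s hs => hendpoint₁ (1-s) (by linarith)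
  have hG₂pos : ∀ s : ℝ, 0 < s → 0 < G₂ s := fun s hs => hendpoint₂ (1-s) (by linarith)
  have hG₂0 : G₂ 0 = 0 := by
    have hempty : {ω | S₂ ω > 1 - (0:ℝ)} = (∅ : Set Ω) := by
      ext ω
      simp only [Set.mem_setOf_eq, Set.mem_empty_iff_false, iff_false, not_lt, gt_iff_lt]
      linarith [(hrange₂ ω).2]
    show (μ {ω | S₂ ω > 1 - (0:ℝ)}).toReal = 0
    rw [hempty]
    simp
  have hrat₁ : ∀ c : ℝ, 0 < c → Tendsto (fun s => G₁ (c*s) / G₁ s) (𝓝[>](0:ℝ)) (𝓝 (c ^ γ₁)) :=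
    fun c hc => ratio_at_zero hreg₁ hc
  have hrat₂ : ∀ c : ℝ, 0 < c → Tendsto (fun s => G₂ (c*s) / G₂ s) (𝓝[>](0:ℝ)) (𝓝 (c ^ γ₂)) :=
    fun c hc => ratio_at_zero hreg₂ hc
  set U : ℕ → ℝ → ℝ := fun m s => ∑ k ∈ Finset.range m,
    (G₁ (((1 - (k:ℝ)/m)/a) * s) / G₁ s) *
      (G₂ ((((k:ℝ)+1)/(b*m)) * s) / G₂ s - G₂ (((k:ℝ)/(b*m)) * s) / G₂ s) with hUdef
  set L : ℕ → ℝ → ℝ := fun m s => ∑ k ∈ Finset.range m,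
    (G₁ (((1 - ((k:ℝ)+1)/m)/a) * s) / G₁ s) *
      (G₂ ((((k:ℝ)+1)/(b*m)) * s) / G₂ s - G₂ (((k:ℝ)/(b*m)) * s) / G₂ s) with hLdef
  set Usum : ℕ → ℝ := fun m => ∑ k ∈ Finset.range m,
    phi γ₁ ((1 - (k:ℝ)/m)/a) * (phi γ₂ (((k:ℝ)+1)/(b*m)) - phi γ₂ ((k:ℝ)/(b*m))) with hUsumdef
  set Lsum : ℕ → ℝ := fun m => ∑ k ∈ Finset.range m,
    phi γ₁ ((1 - ((k:ℝ)+1)/m)/a) * (phi γ₂ (((k:ℝ)+1)/(b*m)) - phi γ₂ ((k:ℝ)/(b*m))) with hLsumdef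
  -- eventual sandwich
  have hsand : ∀ m : ℕ, 1 ≤ m → ∀ᶠ s in 𝓝[>](0:ℝ), L m s ≤ R s ∧ R s ≤ U m s := by
    intro m hm
    filter_upwards [self_mem_nhdsWithin] with s hs
    have hs' : (0:ℝ) < s := hs
    have hDpos : 0 < G₁ s * G₂ s := mul_pos (hG₁pos s hs') (hG₂pos s hs')
    have hkey := measure_sandwich μ S₁ S₂ hm₁ hm₂ hrange₁ hrange₂ hind hl0 hb
      (by ring : lam + (1 - lam) = 1) hm hs'
    constructor
    · calc L m s = (∑ k ∈ Finset.range m,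
            G₁ (((1 - ((k:ℝ)+1)/m)/a) * s) *
              (G₂ ((((k:ℝ)+1)/(b*m)) * s) - G₂ (((k:ℝ)/(b*m)) * s))) / (G₁ s * G₂ s) := by
            simp only [hLdef]
            rw [Finset.sum_div]
            exact Finset.sum_congr rfl fun k _ => by ring
        _ ≤ R s := div_le_div_of_nonneg_right hkey.1 hDpos.le
    · calc R s ≤ (∑ k ∈ Finset.range m,
            G₁ (((1 - (k:ℝ)/m)/a) * s) *
              (G₂ ((((k:ℝ)+1)/(b*m)) * s) - G₂ (((k:ℝ)/(b*m)) * s))) / (G₁ s * G₂ s) :=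
            div_le_div_of_nonneg_right hkey.2 hDpos.le
        _ = U m s := by
            simp only [hUdef]
            rw [Finset.sum_div]
            exact Finset.sum_congr rfl fun k _ => by ring
  -- per-m limits
  have hterm₂hi : ∀ (m k : ℕ), 1 ≤ m → Tendsto (fun s => G₂ ((((k:ℝ)+1)/(b*m)) * s) / G₂ s)
      (𝓝[>](0:ℝ)) (𝓝 (phi γ₂ (((k:ℝ)+1)/(b*m)))) := by
    intro m k hm
    have hM : (0:ℝ) < m := by exact_mod_cast hm
    have hd : 0 < ((k:ℝ)+1)/(b*m) := by positivity
    rw [phi_of_pos hd]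
    exact hrat₂ _ hd
  have hterm₂lo : ∀ (m k : ℕ), 1 ≤ m → Tendsto (fun s => G₂ (((k:ℝ)/(b*m)) * s) / G₂ s)
      (𝓝[>](0:ℝ)) (𝓝 (phi γ₂ ((k:ℝ)/(b*m)))) := by
    intro m k hm
    have hM : (0:ℝ) < m := by exact_mod_cast hm
    rcases Nat.eq_zero_or_pos k with rfl | hkpos
    · have hfun : (fun s : ℝ => G₂ ((((0:ℕ):ℝ)/(b*m)) * s) / G₂ s) = fun _ => (0:ℝ) := by
        funext s
        rw [show (((0:ℕ):ℝ)/(b*m)) * s = 0 by norm_num, hG₂0, zero_div]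
      rw [hfun, show phi γ₂ (((0:ℕ):ℝ)/(b*m)) = 0 by norm_num [phi_zero]]
      exact tendsto_const_nhds
    · have hk' : (0:ℝ) < (k:ℝ) := by exact_mod_cast hkpos
      have hd : 0 < (k:ℝ)/(b*m) := by positivity
      rw [phi_of_pos hd]
      exact hrat₂ _ hd
  have hUt : ∀ m : ℕ, 1 ≤ m → Tendsto (U m) (𝓝[>](0:ℝ)) (𝓝 (Usum m)) := by
    intro m hm
    have hM : (0:ℝ) < m := by exact_mod_cast hm
    have h := tendsto_finset_sum (Finset.range m) (f := fun (k : ℕ) (s : ℝ) =>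
        (G₁ (((1 - (k:ℝ)/m)/a) * s) / G₁ s) *
          (G₂ ((((k:ℝ)+1)/(b*m)) * s) / G₂ s - G₂ (((k:ℝ)/(b*m)) * s) / G₂ s))
      (a := fun k : ℕ =>
        phi γ₁ ((1 - (k:ℝ)/m)/a) * (phi γ₂ (((k:ℝ)+1)/(b*m)) - phi γ₂ ((k:ℝ)/(b*m))))
      (fun k hk => by
        have hkm : (k:ℝ) < m := by exact_mod_cast Finset.mem_range.mp hk
        have hc1 : 0 < (1 - (k:ℝ)/m)/a := by
          apply div_pos _ hl0
          rw [sub_pos, div_lt_one hM]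
          exact hkm
        have h1 : Tendsto (fun s => G₁ (((1 - (k:ℝ)/m)/a) * s) / G₁ s) (𝓝[>](0:ℝ))
            (𝓝 (phi γ₁ ((1 - (k:ℝ)/m)/a))) := by
          rw [phi_of_pos hc1]; exact hrat₁ _ hc1
        exact h1.mul ((hterm₂hi m k hm).sub (hterm₂lo m k hm)))
    exact h
  have hLt : ∀ m : ℕ, 1 ≤ m → Tendsto (L m) (𝓝[>](0:ℝ)) (𝓝 (Lsum m)) := by
    intro m hm
    have hM : (0:ℝ) < m := by exact_mod_cast hm
    have h := tendsto_finset_sum (Finset.range m) (f := fun (k : ℕ) (s : ℝ) =>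
        (G₁ (((1 - ((k:ℝ)+1)/m)/a) * s) / G₁ s) *
          (G₂ ((((k:ℝ)+1)/(b*m)) * s) / G₂ s - G₂ (((k:ℝ)/(b*m)) * s) / G₂ s))
      (a := fun k : ℕ =>
        phi γ₁ ((1 - ((k:ℝ)+1)/m)/a) * (phi γ₂ (((k:ℝ)+1)/(b*m)) - phi γ₂ ((k:ℝ)/(b*m))))
      (fun k hk => by
        have hk1m : (k:ℝ)+1 ≤ m := by
          have h' : (k+1:ℕ) ≤ m := Finset.mem_range.mp hk
          exact_mod_cast h'
        have h1 : Tendsto (fun s => G₁ (((1 - ((k:ℝ)+1)/m)/a) * s) / G₁ s) (𝓝[>](0:ℝ))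
            (𝓝 (phi γ₁ ((1 - ((k:ℝ)+1)/m)/a))) := by
          rcases lt_or_eq_of_le hk1m with hlt | heq
          · have hc1 : 0 < (1 - ((k:ℝ)+1)/m)/a := by
              apply div_pos _ hl0
              rw [sub_pos, div_lt_one hM]
              exact hlt
            rw [phi_of_pos hc1]; exact hrat₁ _ hc1
          · have hzero : (1 - ((k:ℝ)+1)/m)/a = 0 := by
              rw [← heq, div_self (by linarith : ((k:ℝ)+1) ≠ 0)]
              norm_num
            have hG₁0 : G₁ 0 = 0 := by
              have hempty : {ω | S₁ ω > 1 - (0:ℝ)} = (∅ : Set Ω) := by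
                ext ω
                simp only [Set.mem_setOf_eq, Set.mem_empty_iff_false, iff_false, not_lt, gt_iff_lt]
                linarith [(hrange₁ ω).2]
              show (μ {ω | S₁ ω > 1 - (0:ℝ)}).toReal = 0
              rw [hempty]
              simp
            have hfun : (fun s : ℝ => G₁ (((1 - ((k:ℝ)+1)/m)/a) * s) / G₁ s) = fun _ => (0:ℝ) := by
              funext s
              rw [hzero, zero_mul, hG₁0, zero_div]
            rw [hfun, hzero, phi_zero]
            exact tendsto_const_nhds
        exact h1.mul ((hterm₂hi m k hm).sub (hterm₂lo m k hm)))
    exact h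
  -- limits of the sums
  have hUsumEq : ∀ m : ℕ, Usum m = (a ^ (-γ₁) * b ^ (-γ₂)) * ∑ k ∈ Finset.range m,
      phi γ₁ (1 - (k:ℝ)/(m:ℝ)) * (phi γ₂ (((k:ℝ)+1)/(m:ℝ)) - phi γ₂ ((k:ℝ)/(m:ℝ))) := by
    intro m
    rw [Finset.mul_sum, hUsumdef]
    apply Finset.sum_congr rfl
    intro k _
    rw [show ((k:ℝ)+1)/(b*m) = (((k:ℝ)+1)/m)/b by rw [div_div, mul_comm],
      show (k:ℝ)/(b*m) = ((k:ℝ)/m)/b by rw [div_div, mul_comm],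
      phi_div hl0, phi_div hb, phi_div hb]
    ring
  have hLsumEq : ∀ m : ℕ, Lsum m = (a ^ (-γ₁) * b ^ (-γ₂)) * ∑ k ∈ Finset.range m,
      phi γ₁ (1 - ((k:ℝ)+1)/(m:ℝ)) * (phi γ₂ (((k:ℝ)+1)/(m:ℝ)) - phi γ₂ ((k:ℝ)/(m:ℝ))) := by
    intro m
    rw [Finset.mul_sum, hLsumdef]
    apply Finset.sum_congr rfl
    intro k _
    rw [show ((k:ℝ)+1)/(b*m) = (((k:ℝ)+1)/m)/b by rw [div_div, mul_comm],
      show (k:ℝ)/(b*m) = ((k:ℝ)/m)/b by rw [div_div, mul_comm],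
      phi_div hl0, phi_div hb, phi_div hb]
    ring
  have hUlim : Tendsto Usum atTop (𝓝 C0) := by
    have h := ((tendsto_Tsums γ₁ γ₂ hγ₁ hγ₂).1).const_mul (a ^ (-γ₁) * b ^ (-γ₂))
    exact Tendsto.congr (fun m => (hUsumEq m).symm) h
  have hLlim : Tendsto Lsum atTop (𝓝 C0) := by
    have h := ((tendsto_Tsums γ₁ γ₂ hγ₁ hγ₂).2).const_mul (a ^ (-γ₁) * b ^ (-γ₂))
    exact Tendsto.congr (fun m => (hLsumEq m).symm) h
  have hR : Tendsto R (𝓝[>](0:ℝ)) (𝓝 C0) :=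
    tendsto_of_double_sandwich hsand hLt hUt hLlim hUlim
  have hC0pos : 0 < C0 := by
    rw [hC0def, hBdef]
    apply mul_pos (mul_pos (Real.rpow_pos_of_pos hl0 _) (Real.rpow_pos_of_pos hb _))
    exact div_pos (mul_pos (Real.Gamma_pos_of_pos (by linarith)) (Real.Gamma_pos_of_pos (by linarith)))
      (Real.Gamma_pos_of_pos (by linarith))
  have hmap : Tendsto (fun u : ℝ => 1 - u) (𝓝[<](1:ℝ)) (𝓝[>](0:ℝ)) := by
    apply tendsto_nhdsWithin_of_tendsto_nhds_of_eventually_within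
    · have h1 : Tendsto (fun u : ℝ => 1 - u) (𝓝 (1:ℝ)) (𝓝 ((fun u : ℝ => 1 - u) 1)) :=
        (continuous_const.sub continuous_id).tendsto 1
      have h2 : ((fun u : ℝ => 1 - u) 1) = (0:ℝ) := by norm_num
      rw [h2] at h1
      exact h1.mono_left nhdsWithin_le_nhds
    · filter_upwards [self_mem_nhdsWithin] with u hu
      exact Set.mem_Ioi.mpr (by linarith [Set.mem_Iio.mp hu])
  have hcomp : Tendsto (fun u : ℝ => R (1 - u) / C0) (𝓝[<](1:ℝ)) (𝓝 (C0 / C0)) :=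
    (hR.comp hmap).div_const C0
  rw [div_self hC0pos.ne'] at hcomp
  apply hcomp.congr
  intro u
  show R (1 - u) / C0 = _
  simp only [hRdef, hHdef, hG₁def, hG₂def, sub_sub_cancel]
  rw [div_div, mul_comm]
end

section
/- Let λ₁, …, λₙ and λ₁*, …, λₙ* be nonnegative reals with Σᵢ λᵢ² = Σᵢ (λᵢ*)² = 1 and ϱ := Σᵢ λᵢλᵢ* < 1. Then the minimum of ‖s‖² = Σᵢ sᵢ² over the set {s ∈ ℝⁿ : Σᵢ λᵢsᵢ ≥ 1 and Σᵢ λᵢ*sᵢ ≥ 1} equals 2/(1+ϱ), and it is attained at the point with coordinates sᵢ = (λᵢ + λᵢ*)/(1+ϱ). -/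
open Finset

/-- The minimum of ‖s‖² over {s : Σᵢ λᵢsᵢ ≥ 1, Σᵢ λᵢ*sᵢ ≥ 1} equals 2/(1+ϱ), attained at
sᵢ = (λᵢ + λᵢ*)/(1+ϱ). -/
theorem min_norm_sq_two_halfspaces (n : ℕ) (lam lams : Fin n → ℝ)
    (hlam : ∀ i, 0 ≤ lam i) (hlams : ∀ i, 0 ≤ lams i)
    (hnorm : ∑ i, lam i ^ 2 = 1) (hnorms : ∑ i, lams i ^ 2 = 1)
    (ρ : ℝ) (hρ : ρ = ∑ i, lam i * lams i) (hρ1 : ρ < 1) :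
    IsLeast {r : ℝ | ∃ s : Fin n → ℝ,
        1 ≤ ∑ i, lam i * s i ∧ 1 ≤ ∑ i, lams i * s i ∧ r = ∑ i, s i ^ 2}
      (2 / (1 + ρ)) ∧
    (1 ≤ ∑ i, lam i * ((lam i + lams i) / (1 + ρ)) ∧
     1 ≤ ∑ i, lams i * ((lam i + lams i) / (1 + ρ)) ∧
     ∑ i, ((lam i + lams i) / (1 + ρ)) ^ 2 = 2 / (1 + ρ)) := by
  have hρ0 : 0 ≤ ρ := by
    rw [hρ]; exact Finset.sum_nonneg fun i _ => mul_nonneg (hlam i) (hlams i)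
  have hP : (0:ℝ) < 1 + ρ := by linarith
  have hPne : (1 + ρ) ≠ 0 := ne_of_gt hP
  have h1 : ∑ i, lam i * ((lam i + lams i) / (1 + ρ)) = 1 := by
    calc ∑ i, lam i * ((lam i + lams i) / (1 + ρ))
        = ∑ i, (lam i ^ 2 + lam i * lams i) / (1 + ρ) :=
          Finset.sum_congr rfl fun i _ => by ring
      _ = ((∑ i, lam i ^ 2) + ∑ i, lam i * lams i) / (1 + ρ) := by
          rw [← Finset.sum_div, Finset.sum_add_distrib]
      _ = 1 := by rw [hnorm, ← hρ]; field_simp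
  have h2 : ∑ i, lams i * ((lam i + lams i) / (1 + ρ)) = 1 := by
    calc ∑ i, lams i * ((lam i + lams i) / (1 + ρ))
        = ∑ i, (lam i * lams i + lams i ^ 2) / (1 + ρ) :=
          Finset.sum_congr rfl fun i _ => by ring
      _ = ((∑ i, lam i * lams i) + ∑ i, lams i ^ 2) / (1 + ρ) := by
          rw [← Finset.sum_div, Finset.sum_add_distrib]
      _ = 1 := by rw [hnorms, ← hρ]; field_simp; ring
  have h3 : ∑ i, ((lam i + lams i) / (1 + ρ)) ^ 2 = 2 / (1 + ρ) := by
    calc ∑ i, ((lam i + lams i) / (1 + ρ)) ^ 2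
        = ∑ i, (lam i ^ 2 + 2 * (lam i * lams i) + lams i ^ 2) / (1 + ρ) ^ 2 :=
          Finset.sum_congr rfl fun i _ => by rw [div_pow]; congr 1; ring
      _ = ((∑ i, lam i ^ 2) + 2 * (∑ i, lam i * lams i) + ∑ i, lams i ^ 2)
            / (1 + ρ) ^ 2 := by
          rw [← Finset.sum_div, Finset.sum_add_distrib, Finset.sum_add_distrib,
            ← Finset.mul_sum]
      _ = 2 / (1 + ρ) := by rw [hnorm, hnorms, ← hρ]; field_simp; ring
  refine ⟨⟨⟨fun i => (lam i + lams i) / (1 + ρ), le_of_eq h1.symm, le_of_eq h2.symm,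
      h3.symm⟩, ?_⟩, le_of_eq h1.symm, le_of_eq h2.symm, h3⟩
  rintro r ⟨s, hs1, hs2, rfl⟩
  set u : Fin n → ℝ := fun i => (lam i + lams i) / (1 + ρ) with hu
  have hus : 2 / (1 + ρ) ≤ ∑ i, u i * s i := by
    have heq : ∑ i, u i * s i
        = ((∑ i, lam i * s i) + ∑ i, lams i * s i) / (1 + ρ) := by
      calc ∑ i, u i * s i
          = ∑ i, (lam i * s i + lams i * s i) / (1 + ρ) :=
            Finset.sum_congr rfl fun i _ => by simp only [hu]; ring
        _ = ((∑ i, lam i * s i) + ∑ i, lams i * s i) / (1 + ρ) := by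
            rw [← Finset.sum_div, Finset.sum_add_distrib]
    rw [heq]
    gcongr
    · linarith
  have hsq : 0 ≤ ∑ i, (s i - u i) ^ 2 :=
    Finset.sum_nonneg fun i _ => sq_nonneg _
  have hexp : ∑ i, (s i - u i) ^ 2
      = ∑ i, s i ^ 2 - 2 * (∑ i, u i * s i) + 2 / (1 + ρ) := by
    have : ∑ i, (s i - u i) ^ 2
        = ∑ i, (s i ^ 2 - 2 * (u i * s i) + u i ^ 2) := by
      refine Finset.sum_congr rfl fun i _ => by ring
    rw [this, Finset.sum_add_distrib, Finset.sum_sub_distrib, ← Finset.mul_sum, h3]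
  linarith
end

section
/- Let X₁, …, Xₙ be independent random variables with P(Xᵢ > u) ∼ Lᵢ(u) u^{αᵢ} exp(−u²/2) as u → ∞ (Lᵢ slowly varying, αᵢ ∈ ℝ), and let λᵢ, λᵢ* > 0 satisfy Σᵢ λᵢ² = Σᵢ (λᵢ*)² = 1 and ϱ = Σᵢ λᵢλᵢ* ∈ [0,1). Set Qₙ = Σᵢ λᵢXᵢ, Wₙ = Σᵢ λᵢ*Xᵢ with distribution functions H, H*, and tᵤ = H⁻¹(1−1/u), tᵤ* = (H*)⁻¹(1−1/u). Then Qₙ and Wₙ are asymptotically independent: P(Qₙ > tᵤ, Wₙ > tᵤ*) / P(Qₙ > tᵤ) → 0 as u → ∞. -/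
open MeasureTheory ProbabilityTheory Filter Real
open scoped Topology ENNReal

lemma dyadic_le (g : ℝ → ℝ) (u₁ B : ℝ) (hu : 0 < u₁)
    (hstep : ∀ u, u₁ ≤ u → g (2*u) ≤ g u)
    (hbase : ∀ u, u₁ ≤ u → u ≤ 2*u₁ → g u ≤ B) :
    ∀ x, u₁ ≤ x → g x ≤ B := by
  have key : ∀ k : ℕ, ∀ x, u₁ ≤ x → x ≤ 2^(k+1) * u₁ → g x ≤ B := by
    intro k
    induction k with
    | zero => intro x hx hx2; exact hbase x hx (by rw [pow_one] at hx2; exact hx2)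
    | succ k ih =>
      intro x hx hx2
      by_cases hsmall : x ≤ 2*u₁
      · exact hbase x hx hsmall
      · push_neg at hsmall
        have hx1' : u₁ ≤ x/2 := by linarith
        have hx2' : x/2 ≤ 2^(k+1) * u₁ := by
          rw [div_le_iff₀ (by norm_num : (0:ℝ) < 2)]
          calc x ≤ 2^(k+1+1) * u₁ := hx2
            _ = 2^(k+1) * u₁ * 2 := by ring
        have h1 := hstep (x/2) hx1'
        rw [mul_div_cancel₀ _ (by norm_num : (2:ℝ) ≠ 0)] at h1
        exact h1.trans (ih _ hx1' hx2')
  intro x hx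
  obtain ⟨k, hk⟩ := pow_unbounded_of_one_lt (x / u₁) (one_lt_two (α := ℝ))
  refine key k x hx ?_
  rw [div_lt_iff₀ hu] at hk
  calc x ≤ 2^k * u₁ := le_of_lt hk
    _ ≤ 2^(k+1) * u₁ := by
        have : (2:ℝ)^k ≤ 2^(k+1) := by
          apply pow_le_pow_right₀ (by norm_num) (Nat.le_succ k)
        nlinarith

lemma gauss_tail_bounds (L : ℝ → ℝ) (α : ℝ) (P : ℝ → ℝ)
    (hLpos : ∀ u > 0, 0 < L u)
    (hsv2 : Tendsto (fun u => L (2*u) / L u) atTop (𝓝 1))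
    (hP : Tendsto (fun u => P u / (L u * u ^ α * Real.exp (-u^2/2))) atTop (𝓝 1))
    (hP0 : ∀ x, 0 ≤ P x) (hP1 : ∀ x, P x ≤ 1) (hPanti : Antitone P)
    (a : ℝ) (ha : 1 < a) :
    ∃ M c C, 0 < c ∧ 0 < C ∧ 1 ≤ M ∧ ∀ x, M ≤ x →
      c * Real.exp (-(a * x^2)/2) ≤ P x ∧ P x ≤ C * Real.exp (-x^2/(2*a)) := by
  have ha0 : 0 < a := lt_trans one_pos ha
  set f : ℝ → ℝ := fun u => L u * u ^ α * Real.exp (-u^2/2) with hf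
  have hfpos : ∀ u, 0 < u → 0 < f u := fun u hu =>
    mul_pos (mul_pos (hLpos u hu) (Real.rpow_pos_of_pos hu α)) (Real.exp_pos _)
  -- eventual sandwich of P by f
  have ev1 : ∀ᶠ u in atTop, f u / 2 ≤ P u ∧ P u ≤ 2 * f u := by
    have h1 : ∀ᶠ u in atTop, (1/2 : ℝ) < P u / f u :=
      hP.eventually (lt_mem_nhds (by norm_num : (1/2 : ℝ) < 1))
    have h2 : ∀ᶠ u in atTop, P u / f u < 2 :=
      hP.eventually (gt_mem_nhds (by norm_num : (1 : ℝ) < 2))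
    filter_upwards [h1, h2, eventually_gt_atTop 0] with u h1 h2 hu0
    have hfu := hfpos u hu0
    constructor
    · nlinarith [(lt_div_iff₀ hfu).mp h1]
    · nlinarith [(div_lt_iff₀ hfu).mp h2]
  have ev2 : ∀ᶠ u in atTop, L u / 2 ≤ L (2*u) ∧ L (2*u) ≤ 2 * L u := by
    have h1 : ∀ᶠ u in atTop, (1/2 : ℝ) < L (2*u) / L u :=
      hsv2.eventually (lt_mem_nhds (by norm_num : (1/2 : ℝ) < 1))
    have h2 : ∀ᶠ u in atTop, L (2*u) / L u < 2 :=
      hsv2.eventually (gt_mem_nhds (by norm_num : (1 : ℝ) < 2))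
    filter_upwards [h1, h2, eventually_gt_atTop 0] with u h1 h2 hu0
    have hLu := hLpos u hu0
    constructor
    · nlinarith [(lt_div_iff₀ hLu).mp h1]
    · nlinarith [(div_lt_iff₀ hLu).mp h2]
  have h2u : Tendsto (fun u : ℝ => 2*u) atTop atTop :=
    (tendsto_id (α := ℝ)).const_mul_atTop (by norm_num)
  have hA : (0:ℝ) < (2:ℝ)^α := Real.rpow_pos_of_pos (by norm_num) α
  -- key doubling ratio
  have ev3 : ∀ᶠ u in atTop,
      P (2*u) ≤ 8 * (2:ℝ)^α * Real.exp (-(3*u^2)/2) * P u ∧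
      (1/8) * (2:ℝ)^α * Real.exp (-(3*u^2)/2) * P u ≤ P (2*u) := by
    filter_upwards [ev1, h2u.eventually ev1, ev2, eventually_gt_atTop 0] with u h1 h1' h2 hu0
    have hG : (0:ℝ) < u ^ α * Real.exp (-u^2/2) :=
      mul_pos (Real.rpow_pos_of_pos hu0 α) (Real.exp_pos _)
    have hE : (0:ℝ) < Real.exp (-(3*u^2)/2) := Real.exp_pos _
    have hf2 : f (2*u) = ((2:ℝ)^α * Real.exp (-(3*u^2)/2)) * (L (2*u) * (u ^ α * Real.exp (-u^2/2))) := by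
      show L (2*u) * (2*u) ^ α * Real.exp (-(2*u)^2/2) = _
      rw [Real.mul_rpow (by norm_num : (0:ℝ) ≤ 2) hu0.le,
        show (-(2*u)^2/2 : ℝ) = -(3*u^2)/2 + -u^2/2 by ring, Real.exp_add]
      ring
    have hfu : f u = L u * (u ^ α * Real.exp (-u^2/2)) := by
      show L u * u ^ α * Real.exp (-u^2/2) = _; ring
    have hLu := hLpos u hu0
    have hL2u := hLpos (2*u) (by linarith)
    constructor
    · calc P (2*u) ≤ 2 * f (2*u) := h1'.2
        _ = 2 * ((2:ℝ)^α * Real.exp (-(3*u^2)/2)) * (L (2*u) * (u ^ α * Real.exp (-u^2/2))) := by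
            rw [hf2]; ring
        _ ≤ 2 * ((2:ℝ)^α * Real.exp (-(3*u^2)/2)) * ((2 * L u) * (u ^ α * Real.exp (-u^2/2))) :=
            mul_le_mul_of_nonneg_left (mul_le_mul_of_nonneg_right h2.2 hG.le) (by positivity)
        _ = 4 * (2:ℝ)^α * Real.exp (-(3*u^2)/2) * f u := by rw [hfu]; ring
        _ ≤ 4 * (2:ℝ)^α * Real.exp (-(3*u^2)/2) * (2 * P u) :=
            mul_le_mul_of_nonneg_left (by nlinarith [h1.1]) (by positivity)
        _ = 8 * (2:ℝ)^α * Real.exp (-(3*u^2)/2) * P u := by ring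
    · calc (1/8) * (2:ℝ)^α * Real.exp (-(3*u^2)/2) * P u
          ≤ (1/8) * (2:ℝ)^α * Real.exp (-(3*u^2)/2) * (2 * f u) :=
            mul_le_mul_of_nonneg_left h1.2 (by positivity)
        _ = (1/4) * ((2:ℝ)^α * Real.exp (-(3*u^2)/2)) * (L u * (u ^ α * Real.exp (-u^2/2))) := by
            rw [hfu]; ring
        _ ≤ (1/4) * ((2:ℝ)^α * Real.exp (-(3*u^2)/2)) * ((2 * L (2*u)) * (u ^ α * Real.exp (-u^2/2))) :=
            mul_le_mul_of_nonneg_left (mul_le_mul_of_nonneg_right (by linarith [h2.1]) hG.le) (by positivity)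
        _ = (1/2) * (f (2*u)) := by rw [hf2]; ring
        _ ≤ P (2*u) := by linarith [h1'.1]
  -- eventual smallness conditions
  have hq : Tendsto (fun u : ℝ => (3*u^2/2)*(1-1/a)) atTop atTop := by
    have h1 : (0:ℝ) < (3/2)*(1-1/a) := by
      have : 1/a < 1 := by rw [div_lt_one ha0]; exact ha
      nlinarith
    have h2 : Tendsto (fun u : ℝ => u^2) atTop atTop := by
      simpa using tendsto_pow_atTop (n := 2) (by norm_num)
    have := h2.const_mul_atTop h1
    refine this.congr (fun u => by ring)
  have hq2 : Tendsto (fun u : ℝ => (3*u^2/2)*(a-1)) atTop atTop := by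
    have h2 : Tendsto (fun u : ℝ => u^2) atTop atTop := by
      simpa using tendsto_pow_atTop (n := 2) (by norm_num)
    have := h2.const_mul_atTop (show (0:ℝ) < (3/2)*(a-1) by nlinarith)
    refine this.congr (fun u => by ring)
  have ev4 : ∀ᶠ u in atTop, 8 * (2:ℝ)^α ≤ Real.exp ((3*u^2/2)*(1-1/a)) :=
    (Real.tendsto_exp_atTop.comp hq).eventually_ge_atTop _
  have ev5 : ∀ᶠ u in atTop, 8 * ((2:ℝ)^α)⁻¹ ≤ Real.exp ((3*u^2/2)*(a-1)) :=
    (Real.tendsto_exp_atTop.comp hq2).eventually_ge_atTop _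
  -- extract a threshold
  obtain ⟨u₀, hu₀⟩ := eventually_atTop.mp (ev1.and (ev3.and (ev4.and ev5)))
  set u₁ : ℝ := max u₀ 1 with hu₁def
  have hu₁1 : (1:ℝ) ≤ u₁ := le_max_right _ _
  have hu₁0 : (0:ℝ) < u₁ := lt_of_lt_of_le one_pos hu₁1
  have hzone : ∀ u, u₁ ≤ u → (f u / 2 ≤ P u ∧ P u ≤ 2 * f u) ∧
      (P (2*u) ≤ 8 * (2:ℝ)^α * Real.exp (-(3*u^2)/2) * P u ∧
        (1/8) * (2:ℝ)^α * Real.exp (-(3*u^2)/2) * P u ≤ P (2*u)) ∧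
      8 * (2:ℝ)^α ≤ Real.exp ((3*u^2/2)*(1-1/a)) ∧
      8 * ((2:ℝ)^α)⁻¹ ≤ Real.exp ((3*u^2/2)*(a-1)) :=
    fun u hu => hu₀ u (le_trans (le_max_left _ _) hu)
  -- upper bound via dyadic argument
  have upper : ∀ x, u₁ ≤ x → P x ≤ Real.exp ((2*u₁)^2/(2*a)) * Real.exp (-x^2/(2*a)) := by
    have hg := dyadic_le (fun x => P x * Real.exp (x^2/(2*a))) u₁ (Real.exp ((2*u₁)^2/(2*a))) hu₁0
      (by
        intro u hu
        obtain ⟨h1, ⟨h3, _⟩, h4, _⟩ := hzone u hu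
        calc P (2*u) * Real.exp ((2*u)^2/(2*a))
            ≤ (8 * (2:ℝ)^α * Real.exp (-(3*u^2)/2) * P u) * Real.exp ((2*u)^2/(2*a)) :=
              mul_le_mul_of_nonneg_right h3 (Real.exp_pos _).le
          _ = P u * (8 * (2:ℝ)^α * (Real.exp (-(3*u^2)/2) * Real.exp ((2*u)^2/(2*a)))) := by ring
          _ ≤ P u * (Real.exp ((3*u^2/2)*(1-1/a)) * (Real.exp (-(3*u^2)/2) * Real.exp ((2*u)^2/(2*a)))) := by
              refine mul_le_mul_of_nonneg_left (mul_le_mul_of_nonneg_right h4 (by positivity)) (hP0 u)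
          _ = P u * Real.exp (u^2/(2*a)) := by
              rw [← Real.exp_add, ← Real.exp_add]
              congr 2
              field_simp
              ring)
      (by
        intro u hu hu2
        have h1 : P u ≤ 1 := hP1 u
        have h2 : Real.exp (u^2/(2*a)) ≤ Real.exp ((2*u₁)^2/(2*a)) := by
          apply Real.exp_le_exp.mpr
          apply div_le_div_of_nonneg_right _ (by positivity)
          have h3 : 0 ≤ u := le_trans hu₁0.le hu
          nlinarith
        nlinarith [Real.exp_pos (u^2/(2*a)), hP0 u])
    intro x hx
    have h := hg x hx
    have hE : Real.exp (-x^2/(2*a)) * Real.exp (x^2/(2*a)) = 1 := by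
      rw [← Real.exp_add, show (-x^2/(2*a) + x^2/(2*a) : ℝ) = 0 by ring, Real.exp_zero]
    calc P x = (P x * Real.exp (x^2/(2*a))) * Real.exp (-x^2/(2*a)) := by
          rw [mul_assoc, mul_comm (Real.exp _), hE, mul_one]
      _ ≤ Real.exp ((2*u₁)^2/(2*a)) * Real.exp (-x^2/(2*a)) :=
          mul_le_mul_of_nonneg_right h (Real.exp_pos _).le
  -- lower bound via dyadic argument
  have hc0 : 0 < f (2*u₁) / 2 := by
    have := hfpos (2*u₁) (by linarith); linarith
  have lower : ∀ x, u₁ ≤ x → f (2*u₁) / 2 * Real.exp (-(a*x^2)/2) ≤ P x := by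
    have hg := dyadic_le (fun x => -(P x * Real.exp (a*x^2/2))) u₁ (-(f (2*u₁) / 2)) hu₁0
      (by
        intro u hu
        obtain ⟨h1, ⟨_, h3⟩, _, h5⟩ := hzone u hu
        simp only [neg_le_neg_iff]
        have hone : (1:ℝ) ≤ (1/8) * (2:ℝ)^α * Real.exp ((3*u^2/2)*(a-1)) := by
          nlinarith [h5, hA, mul_inv_cancel₀ (ne_of_gt hA), Real.exp_pos ((3*u^2/2)*(a-1))]
        have h2 : (1/8) * (2:ℝ)^α * Real.exp (-(3*u^2)/2) * Real.exp (a*(2*u)^2/2)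
            = ((1/8) * (2:ℝ)^α * Real.exp ((3*u^2/2)*(a-1))) * Real.exp (a*u^2/2) := by
          rw [mul_assoc ((1/8) * (2:ℝ)^α), ← Real.exp_add, mul_assoc ((1/8) * (2:ℝ)^α),
            ← Real.exp_add]
          congr 2
          ring
        have key : Real.exp (a*u^2/2) ≤ (1/8) * (2:ℝ)^α * Real.exp (-(3*u^2)/2) * Real.exp (a*(2*u)^2/2) := by
          rw [h2]
          nlinarith [Real.exp_pos (a*u^2/2), hone]
        calc P u * Real.exp (a*u^2/2)
            ≤ P u * ((1/8) * (2:ℝ)^α * Real.exp (-(3*u^2)/2) * Real.exp (a*(2*u)^2/2)) :=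
              mul_le_mul_of_nonneg_left key (hP0 u)
          _ = ((1/8) * (2:ℝ)^α * Real.exp (-(3*u^2)/2) * P u) * Real.exp (a*(2*u)^2/2) := by ring
          _ ≤ P (2*u) * Real.exp (a*(2*u)^2/2) :=
              mul_le_mul_of_nonneg_right h3 (Real.exp_pos _).le)
      (by
        intro u hu hu2
        simp only [neg_le_neg_iff]
        have h1 : P (2*u₁) ≤ P u := hPanti hu2
        have h2 : f (2*u₁) / 2 ≤ P (2*u₁) := (hzone (2*u₁) (by linarith)).1.1
        have h3 : (1:ℝ) ≤ Real.exp (a*u^2/2) :=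
          Real.one_le_exp (div_nonneg (mul_nonneg ha0.le (sq_nonneg u)) (by norm_num))
        nlinarith [hP0 u])
    intro x hx
    have h := hg x hx
    simp only [neg_le_neg_iff] at h
    have hE : Real.exp (-(a*x^2)/2) * Real.exp (a*x^2/2) = 1 := by
      rw [← Real.exp_add, show (-(a*x^2)/2 + a*x^2/2 : ℝ) = 0 by ring, Real.exp_zero]
    calc f (2*u₁) / 2 * Real.exp (-(a*x^2)/2)
        ≤ (P x * Real.exp (a*x^2/2)) * Real.exp (-(a*x^2)/2) :=
          mul_le_mul_of_nonneg_right h (Real.exp_pos _).le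
      _ = P x := by rw [mul_assoc, mul_comm (Real.exp (a*x^2/2)), hE, mul_one]
  exact ⟨u₁, f (2*u₁) / 2, Real.exp ((2*u₁)^2/(2*a)), hc0, Real.exp_pos _, hu₁1,
    fun x hx => ⟨lower x hx, upper x hx⟩⟩

lemma exp_lintegral_bound {Ω : Type*} [MeasurableSpace Ω] (μ : Measure Ω) [IsProbabilityMeasure μ]
    (X : Ω → ℝ) (hX : Measurable X) (a C M : ℝ) (ha : 1 < a) (hC : 0 < C) (hM : 0 ≤ M)
    (htail : ∀ x, M ≤ x → (μ {ω | X ω > x}).toReal ≤ C * Real.exp (-x^2/(2*a))) :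
    ∃ B, 0 < B ∧ ∀ s, 0 ≤ s →
      Integrable (fun ω => Real.exp (s * X ω)) μ ∧
      mgf X μ s ≤ B * Real.exp (2*s + a*s^2/2) := by
  have ha0 : (0:ℝ) < a := lt_trans one_pos ha
  set C' : ℝ := max C (Real.exp (M^2/(2*a))) with hC'def
  have hC'0 : 0 < C' := lt_of_lt_of_le hC (le_max_left _ _)
  have htail' : ∀ x : ℝ, 0 ≤ x → (μ {ω | X ω > x}).toReal ≤ C' * Real.exp (-x^2/(2*a)) := by
    intro x hx
    by_cases hxM : M ≤ x
    · exact le_trans (htail x hxM)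
        (mul_le_mul_of_nonneg_right (le_max_left _ _) (Real.exp_pos _).le)
    · push_neg at hxM
      have h1 : (μ {ω | X ω > x}).toReal ≤ 1 := by
        rw [← ENNReal.toReal_one]
        exact ENNReal.toReal_mono (by norm_num) prob_le_one
      refine le_trans h1 ?_
      have h2 : (1:ℝ) ≤ Real.exp (M^2/(2*a)) * Real.exp (-x^2/(2*a)) := by
        rw [← Real.exp_add, ← Real.exp_zero]
        apply Real.exp_le_exp.mpr
        have hx2 : x^2 ≤ M^2 := by nlinarith
        have harg : M^2/(2*a) + -x^2/(2*a) = (M^2 - x^2)/(2*a) := by ring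
        rw [harg]
        apply div_nonneg (by linarith) (by linarith)
      calc (1:ℝ) ≤ Real.exp (M^2/(2*a)) * Real.exp (-x^2/(2*a)) := h2
        _ ≤ C' * Real.exp (-x^2/(2*a)) :=
            mul_le_mul_of_nonneg_right (le_max_right _ _) (Real.exp_pos _).le
  have htail'' : ∀ k : ℕ, μ {ω | X ω > (k:ℝ)} ≤ ENNReal.ofReal (C' * Real.exp (-(k:ℝ)^2/(2*a))) := by
    intro k
    rw [ENNReal.le_ofReal_iff_toReal_le (measure_ne_top μ _) (by positivity)]
    exact htail' k (Nat.cast_nonneg k)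
  set K : ℝ := (1 - Real.exp (-1/(2*a)))⁻¹ with hKdef
  have hexp1 : Real.exp (-1/(2*a)) < 1 := by
    rw [← Real.exp_zero]
    apply Real.exp_lt_exp.mpr
    rw [neg_div]
    simp only [Left.neg_neg_iff]
    positivity
  have hK0 : 0 < K := by rw [hKdef]; exact inv_pos.mpr (by linarith)
  refine ⟨1 + C' * Real.exp (1/(2*a)) * K, by positivity, fun s hs => ?_⟩
  have hmeas : Measurable fun ω => Real.exp (s * X ω) := (hX.const_mul s).exp
  -- pointwise domination
  have hpoint : ∀ ω, ENNReal.ofReal (Real.exp (s * X ω)) ≤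
      1 + ∑' (k : ℕ), Set.indicator {ω' | X ω' > (k:ℝ)}
        (fun _ => ENNReal.ofReal (Real.exp (s * ((k:ℝ)+1)))) ω := by
    intro ω
    rcases le_or_gt (X ω) 0 with hneg | hpos
    · have h1 : Real.exp (s * X ω) ≤ 1 := by
        rw [← Real.exp_zero]
        exact Real.exp_le_exp.mpr (mul_nonpos_of_nonneg_of_nonpos hs hneg)
      calc ENNReal.ofReal (Real.exp (s * X ω)) ≤ 1 := by
            rw [← ENNReal.ofReal_one]; exact ENNReal.ofReal_le_ofReal h1
        _ ≤ _ := le_self_add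
    · set k : ℕ := ⌈X ω⌉₊ - 1 with hk
      have hck : 1 ≤ ⌈X ω⌉₊ := Nat.one_le_ceil_iff.mpr hpos
      have hk1 : (k:ℝ) + 1 = (⌈X ω⌉₊ : ℝ) := by
        rw [hk]
        push_cast [Nat.cast_sub hck]
        ring
      have hXk : (k:ℝ) < X ω := by
        have := Nat.ceil_lt_add_one hpos.le
        have h2 : (k:ℝ) = (⌈X ω⌉₊ : ℝ) - 1 := by rw [← hk1]; ring
        linarith
      have hXk1 : X ω ≤ (k:ℝ) + 1 := by rw [hk1]; exact Nat.le_ceil _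
      have hterm : ENNReal.ofReal (Real.exp (s * X ω)) ≤
          Set.indicator {ω' | X ω' > (k:ℝ)}
            (fun _ => ENNReal.ofReal (Real.exp (s * ((k:ℝ)+1)))) ω := by
        rw [Set.indicator_of_mem (by exact hXk)]
        exact ENNReal.ofReal_le_ofReal
          (Real.exp_le_exp.mpr (mul_le_mul_of_nonneg_left hXk1 hs))
      calc ENNReal.ofReal (Real.exp (s * X ω)) ≤ _ :=
            le_trans hterm (ENNReal.le_tsum k)
        _ ≤ _ := le_add_self
  -- integrate
  have hsets : ∀ k : ℕ, MeasurableSet {ω' | X ω' > (k:ℝ)} := fun k => hX measurableSet_Ioi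
  have hint : (∫⁻ ω, ENNReal.ofReal (Real.exp (s * X ω)) ∂μ) ≤
      1 + ∑' (k : ℕ), ENNReal.ofReal (Real.exp (s * ((k:ℝ)+1))) * μ {ω' | X ω' > (k:ℝ)} := by
    calc (∫⁻ ω, ENNReal.ofReal (Real.exp (s * X ω)) ∂μ)
        ≤ ∫⁻ ω, (1 + ∑' (k : ℕ), Set.indicator {ω' | X ω' > (k:ℝ)}
            (fun _ => ENNReal.ofReal (Real.exp (s * ((k:ℝ)+1)))) ω) ∂μ :=
          lintegral_mono hpoint
      _ = ∫⁻ _, (1:ℝ≥0∞) ∂μ + ∫⁻ ω, (∑' (k : ℕ), Set.indicator {ω' | X ω' > (k:ℝ)}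
            (fun _ => ENNReal.ofReal (Real.exp (s * ((k:ℝ)+1)))) ω) ∂μ :=
          lintegral_add_left measurable_const _
      _ = 1 + ∑' (k : ℕ), ∫⁻ ω, Set.indicator {ω' | X ω' > (k:ℝ)}
            (fun _ => ENNReal.ofReal (Real.exp (s * ((k:ℝ)+1)))) ω ∂μ := by
          rw [lintegral_one, measure_univ, lintegral_tsum]
          intro k
          exact (measurable_const.indicator (hsets k)).aemeasurable
      _ = 1 + ∑' (k : ℕ), ENNReal.ofReal (Real.exp (s * ((k:ℝ)+1))) * μ {ω' | X ω' > (k:ℝ)} := by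
          congr 1
          refine tsum_congr fun k => ?_
          rw [lintegral_indicator_const (hsets k)]
  -- bound the series
  have hseries : ∑' (k : ℕ), ENNReal.ofReal (Real.exp (s * ((k:ℝ)+1))) * μ {ω' | X ω' > (k:ℝ)}
      ≤ ENNReal.ofReal (C' * Real.exp (1/(2*a)) * Real.exp (2*s + a*s^2/2)) *
        ENNReal.ofReal K := by
    have hterm : ∀ k : ℕ, ENNReal.ofReal (Real.exp (s * ((k:ℝ)+1))) * μ {ω' | X ω' > (k:ℝ)}
        ≤ ENNReal.ofReal (C' * Real.exp (1/(2*a)) * Real.exp (2*s + a*s^2/2)) *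
          (ENNReal.ofReal (Real.exp (-1/(2*a))))^k := by
      intro k
      calc ENNReal.ofReal (Real.exp (s * ((k:ℝ)+1))) * μ {ω' | X ω' > (k:ℝ)}
          ≤ ENNReal.ofReal (Real.exp (s * ((k:ℝ)+1))) *
            ENNReal.ofReal (C' * Real.exp (-(k:ℝ)^2/(2*a))) :=
            mul_le_mul_right (htail'' k) _
        _ = ENNReal.ofReal (C' * Real.exp (s * ((k:ℝ)+1) + -(k:ℝ)^2/(2*a))) := by
            rw [← ENNReal.ofReal_mul (Real.exp_pos _).le, Real.exp_add]
            ring_nf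
        _ ≤ ENNReal.ofReal (C' * Real.exp (2*s + a*s^2/2 + 1/(2*a) + -(k:ℝ)/(2*a))) := by
            apply ENNReal.ofReal_le_ofReal
            apply mul_le_mul_of_nonneg_left _ hC'0.le
            apply Real.exp_le_exp.mpr
            have key : 2*a*(s*((k:ℝ)+1)) - (k:ℝ)^2 ≤ 2*a*(2*s + a*s^2/2) + 1 - (k:ℝ) := by
              nlinarith [sq_nonneg ((k:ℝ) - a*s - 1/2), mul_nonneg ha0.le hs]
            have h2a : (0:ℝ) < 2*a := by linarith
            calc s * ((k:ℝ)+1) + -(k:ℝ)^2/(2*a)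
                = (2*a*(s*((k:ℝ)+1)) - (k:ℝ)^2) / (2*a) := by field_simp; ring
              _ ≤ (2*a*(2*s + a*s^2/2) + 1 - (k:ℝ)) / (2*a) := by gcongr
              _ = 2*s + a*s^2/2 + 1/(2*a) + -(k:ℝ)/(2*a) := by field_simp; ring
        _ = ENNReal.ofReal (C' * Real.exp (1/(2*a)) * Real.exp (2*s + a*s^2/2)) *
            (ENNReal.ofReal (Real.exp (-1/(2*a))))^k := by
            have hE : Real.exp (1/(2*a)) * Real.exp (2*s + a*s^2/2) * Real.exp (-1/(2*a)) ^ k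
                = Real.exp (1/(2*a) + (2*s + a*s^2/2) + (k:ℝ)*(-1/(2*a))) := by
              rw [← Real.exp_nat_mul, ← Real.exp_add, ← Real.exp_add]
            rw [← ENNReal.ofReal_pow (Real.exp_pos _).le, ← ENNReal.ofReal_mul (by positivity)]
            congr 1
            rw [show C' * Real.exp (1/(2*a)) * Real.exp (2*s + a*s^2/2) * Real.exp (-1/(2*a)) ^ k
              = C' * (Real.exp (1/(2*a)) * Real.exp (2*s + a*s^2/2) * Real.exp (-1/(2*a)) ^ k) by
                ring, hE]
            congr 1
            ring
    calc ∑' (k : ℕ), ENNReal.ofReal (Real.exp (s * ((k:ℝ)+1))) * μ {ω' | X ω' > (k:ℝ)}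
        ≤ ∑' (k : ℕ), ENNReal.ofReal (C' * Real.exp (1/(2*a)) * Real.exp (2*s + a*s^2/2)) *
            (ENNReal.ofReal (Real.exp (-1/(2*a))))^k := ENNReal.tsum_le_tsum hterm
      _ = ENNReal.ofReal (C' * Real.exp (1/(2*a)) * Real.exp (2*s + a*s^2/2)) *
          ∑' (k : ℕ), (ENNReal.ofReal (Real.exp (-1/(2*a))))^k := ENNReal.tsum_mul_left
      _ = ENNReal.ofReal (C' * Real.exp (1/(2*a)) * Real.exp (2*s + a*s^2/2)) *
          ENNReal.ofReal K := by
          rw [ENNReal.tsum_geometric]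
          congr 1
          rw [hKdef, ← ENNReal.ofReal_one, ← ENNReal.ofReal_sub _ (Real.exp_pos _).le,
            ENNReal.ofReal_inv_of_pos (by linarith)]
  -- total bound
  have htotal : (∫⁻ ω, ENNReal.ofReal (Real.exp (s * X ω)) ∂μ) ≤
      ENNReal.ofReal ((1 + C' * Real.exp (1/(2*a)) * K) * Real.exp (2*s + a*s^2/2)) := by
    refine le_trans hint ?_
    have h1 : (1:ℝ≥0∞) ≤ ENNReal.ofReal (Real.exp (2*s + a*s^2/2)) := by
      rw [← ENNReal.ofReal_one]
      apply ENNReal.ofReal_le_ofReal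
      exact Real.one_le_exp (by positivity)
    calc 1 + ∑' (k : ℕ), ENNReal.ofReal (Real.exp (s * ((k:ℝ)+1))) * μ {ω' | X ω' > (k:ℝ)}
        ≤ ENNReal.ofReal (Real.exp (2*s + a*s^2/2)) +
          ENNReal.ofReal (C' * Real.exp (1/(2*a)) * Real.exp (2*s + a*s^2/2)) *
            ENNReal.ofReal K := add_le_add h1 hseries
      _ = ENNReal.ofReal ((1 + C' * Real.exp (1/(2*a)) * K) * Real.exp (2*s + a*s^2/2)) := by
          rw [← ENNReal.ofReal_mul (by positivity), ← ENNReal.ofReal_add (by positivity)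
            (by positivity)]
          congr 1
          ring
  have hintg : Integrable (fun ω => Real.exp (s * X ω)) μ := by
    refine ⟨hmeas.aestronglyMeasurable, ?_⟩
    rw [hasFiniteIntegral_iff_ofReal (Filter.Eventually.of_forall fun ω => (Real.exp_pos _).le)]
    exact lt_of_le_of_lt htotal ENNReal.ofReal_lt_top
  refine ⟨hintg, ?_⟩
  unfold mgf
  rw [integral_eq_lintegral_of_nonneg_ae (Filter.Eventually.of_forall fun ω => (Real.exp_pos _).le)
    hmeas.aestronglyMeasurable]
  exact ENNReal.toReal_le_of_le_ofReal (by positivity) htotal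

lemma weighted_sum_tail_upper {Ω : Type*} [MeasurableSpace Ω] (μ : Measure Ω)
    [IsProbabilityMeasure μ] {n : ℕ} (X : Fin n → Ω → ℝ) (hm : ∀ i, Measurable (X i))
    (hind : iIndepFun X μ)
    (c : Fin n → ℝ) (hc : ∀ i, 0 < c i) (hσ₁ : 0 < ∑ i, c i) (hσ₂ : 0 < ∑ i, (c i)^2)
    (a : ℝ) (ha : 1 < a) (B : Fin n → ℝ) (hB : ∀ i, 0 < B i)
    (hmgf : ∀ i, ∀ s, 0 ≤ s → Integrable (fun ω => Real.exp (s * X i ω)) μ ∧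
        mgf (X i) μ s ≤ B i * Real.exp (2*s + a*s^2/2)) :
    ∃ D v₀, 0 < D ∧ 0 < v₀ ∧ ∀ v, v₀ ≤ v →
      (μ {ω | v ≤ ∑ i, c i * X i ω}).toReal ≤
        D * Real.exp (-v^2/(2*a^2*(∑ i, (c i)^2))) := by
  have ha0 : (0:ℝ) < a := lt_trans one_pos ha
  set σ₁ : ℝ := ∑ i, c i with hσ₁def
  set σ₂ : ℝ := ∑ i, (c i)^2 with hσ₂def
  set Y : Fin n → Ω → ℝ := fun i ω => c i * X i ω with hYdef
  have hYm : ∀ i, Measurable (Y i) := fun i => (hm i).const_mul (c i)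
  have hYind : iIndepFun Y μ :=
    hind.comp (fun i x => c i * x) (fun i => measurable_id.const_mul (c i))
  have hv₀pos : (0:ℝ) < 4*a*σ₁/(a-1) :=
    div_pos (mul_pos (mul_pos (by norm_num) ha0) hσ₁) (by linarith)
  refine ⟨∏ i, B i, 4*a*σ₁/(a-1), Finset.prod_pos (fun i _ => hB i),
    hv₀pos, fun v hv => ?_⟩
  have hv0 : 0 < v := lt_of_lt_of_le hv₀pos hv
  set θ : ℝ := v/(a*σ₂) with hθdef
  have hθ0 : 0 ≤ θ := le_of_lt (div_pos hv0 (mul_pos ha0 hσ₂))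
  have hYint : ∀ i, Integrable (fun ω => Real.exp (θ * Y i ω)) μ := by
    intro i
    have h1 := (hmgf i (θ * c i) (mul_nonneg hθ0 (hc i).le)).1
    have heq : (fun ω => Real.exp (θ * c i * X i ω)) = (fun ω => Real.exp (θ * Y i ω)) := by
      funext ω
      show Real.exp (θ * c i * X i ω) = Real.exp (θ * (c i * X i ω))
      rw [mul_assoc]
    exact heq ▸ h1
  have hSint : Integrable (fun ω => Real.exp (θ * (∑ i, Y i) ω)) μ :=
    hYind.integrable_exp_mul_sum hYm (fun i _ => hYint i)
  have hset : {ω | v ≤ ∑ i, c i * X i ω} = {ω | v ≤ (∑ i, Y i) ω} := by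
    ext ω
    simp [hYdef, Finset.sum_apply]
  have hchern := measure_ge_le_exp_mul_mgf (μ := μ) (X := ∑ i, Y i) v hθ0 hSint
  rw [hYind.mgf_sum hYm] at hchern
  have hmgfY : ∀ i, mgf (Y i) μ θ ≤ B i * Real.exp (2*(θ*c i) + a*(θ*c i)^2/2) := by
    intro i
    have h2 := (hmgf i (θ * c i) (mul_nonneg hθ0 (hc i).le)).2
    have heq : mgf (Y i) μ θ = mgf (X i) μ (θ * c i) := by
      unfold mgf
      congr 1
      funext ω
      show Real.exp (θ * (c i * X i ω)) = Real.exp (θ * c i * X i ω)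
      rw [mul_assoc]
    rw [heq]
    exact h2
  have hprod : ∏ i, mgf (Y i) μ θ ≤ (∏ i, B i) * Real.exp (2*θ*σ₁ + a*θ^2*σ₂/2) := by
    have h1 : ∏ i, mgf (Y i) μ θ ≤ ∏ i, (B i * Real.exp (2*(θ*c i) + a*(θ*c i)^2/2)) := by
      apply Finset.prod_le_prod
      · intro i _
        exact mgf_nonneg
      · intro i _
        exact hmgfY i
    refine le_trans h1 (le_of_eq ?_)
    rw [Finset.prod_mul_distrib, ← Real.exp_sum]
    congr 2
    have h2 : ∀ i : Fin n, 2*(θ*c i) + a*(θ*c i)^2/2 = (2*θ)*(c i) + (a*θ^2/2)*(c i)^2 :=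
      fun i => by ring
    simp_rw [h2]
    rw [Finset.sum_add_distrib, ← Finset.mul_sum, ← Finset.mul_sum, ← hσ₁def, ← hσ₂def]
    ring
  have hσ₂0 : (0:ℝ) < 2*a^2*σ₂ := mul_pos (by positivity) hσ₂
  have hexp : Real.exp (-θ*v) * ((∏ i, B i) * Real.exp (2*θ*σ₁ + a*θ^2*σ₂/2)) ≤
      (∏ i, B i) * Real.exp (-v^2/(2*a^2*σ₂)) := by
    rw [show Real.exp (-θ*v) * ((∏ i, B i) * Real.exp (2*θ*σ₁ + a*θ^2*σ₂/2))
      = (∏ i, B i) * (Real.exp (-θ*v) * Real.exp (2*θ*σ₁ + a*θ^2*σ₂/2)) by ring,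
      ← Real.exp_add]
    apply mul_le_mul_of_nonneg_left _ (Finset.prod_pos (fun i _ => hB i)).le
    apply Real.exp_le_exp.mpr
    have hE : -θ*v + (2*θ*σ₁ + a*θ^2*σ₂/2) = (-2*a*v^2 + 4*a*σ₁*v + a*v^2)/(2*a^2*σ₂) := by
      rw [hθdef]
      field_simp
      ring
    have hv' : 4*a*σ₁ ≤ (a-1)*v := by
      rw [div_le_iff₀ (by linarith : (0:ℝ) < a-1)] at hv
      linarith [hv]
    have hnum : -2*a*v^2 + 4*a*σ₁*v + a*v^2 ≤ -v^2 := by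
      nlinarith [mul_le_mul_of_nonneg_right hv' hv0.le]
    rw [hE, show -v^2/(2*a^2*σ₂) = (-v^2)/(2*a^2*σ₂) by ring,
      div_le_div_iff₀ hσ₂0 hσ₂0]
    exact mul_le_mul_of_nonneg_right hnum hσ₂0.le
  calc (μ {ω | v ≤ ∑ i, c i * X i ω}).toReal
      = (μ {ω | v ≤ (∑ i, Y i) ω}).toReal := by rw [hset]
    _ ≤ Real.exp (-θ*v) * ∏ i, mgf (Y i) μ θ := hchern
    _ ≤ Real.exp (-θ*v) * ((∏ i, B i) * Real.exp (2*θ*σ₁ + a*θ^2*σ₂/2)) :=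
        mul_le_mul_of_nonneg_left hprod (Real.exp_pos _).le
    _ ≤ (∏ i, B i) * Real.exp (-v^2/(2*a^2*σ₂)) := hexp

lemma weighted_sum_tail_lower {Ω : Type*} [MeasurableSpace Ω] (μ : Measure Ω)
    [IsProbabilityMeasure μ] {n : ℕ} (hn : 0 < n) (X : Fin n → Ω → ℝ)
    (hm : ∀ i, Measurable (X i))
    (hind : iIndepFun X μ)
    (lam : Fin n → ℝ) (hlam : ∀ i, 0 < lam i) (hnorm : ∑ i, lam i ^ 2 = 1)
    (a : ℝ) (ha : 1 < a) (cc M : Fin n → ℝ) (hcc : ∀ i, 0 < cc i) (hMi : ∀ i, 1 ≤ M i)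
    (htail : ∀ i, ∀ x, M i ≤ x →
      cc i * Real.exp (-(a*x^2)/2) ≤ (μ {ω | X i ω > x}).toReal) :
    ∃ c' M', 0 < c' ∧ 1 ≤ M' ∧ ∀ v, M' ≤ v →
      c' * Real.exp (-(a^3*v^2)/2) ≤ (μ {ω | (∑ i, lam i * X i ω) > v}).toReal := by
  have ha0 : (0:ℝ) < a := lt_trans one_pos ha
  have hne : Nonempty (Fin n) := ⟨⟨0, hn⟩⟩
  have hM' : (1:ℝ) ≤ 1 + ∑ i, M i / (lam i * a) := by
    have h0 : 0 ≤ ∑ i, M i / (lam i * a) := Finset.sum_nonneg (fun i _ =>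
      div_nonneg (le_trans zero_le_one (hMi i)) (mul_nonneg (hlam i).le ha0.le))
    linarith
  refine ⟨∏ i, cc i, 1 + ∑ i, M i / (lam i * a), Finset.prod_pos (fun i _ => hcc i),
    hM', fun v hv => ?_⟩
  have hv1 : (1:ℝ) ≤ v := le_trans hM' hv
  have hxi : ∀ i, M i ≤ lam i * a * v := by
    intro i
    have h1 : M i / (lam i * a) ≤ ∑ j, M j / (lam j * a) := by
      apply Finset.single_le_sum (f := fun j => M j / (lam j * a)) _ (Finset.mem_univ i)
      intro j _
      exact div_nonneg (le_trans zero_le_one (hMi j)) (mul_nonneg (hlam j).le ha0.le)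
    have h2 : M i / (lam i * a) ≤ v := by linarith
    rw [div_le_iff₀ (mul_pos (hlam i) ha0)] at h2
    calc M i ≤ v * (lam i * a) := h2
      _ = lam i * a * v := by ring
  -- the intersection is contained in the tail event
  have hsub : (⋂ i, {ω | X i ω > lam i * a * v}) ⊆ {ω | (∑ i, lam i * X i ω) > v} := by
    intro ω hω
    simp only [Set.mem_iInter, Set.mem_setOf_eq] at hω ⊢
    have h1 : ∑ i, lam i * (lam i * a * v) < ∑ i, lam i * X i ω := by
      apply Finset.sum_lt_sum_of_nonempty Finset.univ_nonempty
      intro i _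
      exact mul_lt_mul_of_pos_left (hω i) (hlam i)
    have h2 : ∑ i, lam i * (lam i * a * v) = a * v := by
      have h3 : ∀ i : Fin n, lam i * (lam i * a * v) = (a*v) * (lam i)^2 := fun i => by ring
      simp_rw [h3]
      rw [← Finset.mul_sum, hnorm, mul_one]
    have : a * v < ∑ i, lam i * X i ω := by rw [← h2]; exact h1
    nlinarith
  have hprodmeas : μ (⋂ i, {ω | X i ω > lam i * a * v}) =
      ∏ i, μ {ω | X i ω > lam i * a * v} := by
    apply hind.meas_iInter
    intro i
    exact ⟨Set.Ioi (lam i * a * v), measurableSet_Ioi, rfl⟩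
  calc (∏ i, cc i) * Real.exp (-(a^3*v^2)/2)
      = ∏ i, (cc i * Real.exp (-(a*(lam i * a * v)^2)/2)) := by
        rw [Finset.prod_mul_distrib, ← Real.exp_sum]
        congr 2
        have h3 : ∀ i : Fin n, -(a*(lam i * a * v)^2)/2 = (-(a^3*v^2)/2) * (lam i)^2 :=
          fun i => by ring
        simp_rw [h3]
        rw [← Finset.mul_sum, hnorm, mul_one]
    _ ≤ ∏ i, (μ {ω | X i ω > lam i * a * v}).toReal := by
        apply Finset.prod_le_prod
        · intro i _
          exact mul_nonneg (hcc i).le (Real.exp_pos _).le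
        · intro i _
          exact htail i _ (hxi i)
    _ = (μ (⋂ i, {ω | X i ω > lam i * a * v})).toReal := by
        rw [hprodmeas, ENNReal.toReal_prod]
    _ ≤ (μ {ω | (∑ i, lam i * X i ω) > v}).toReal :=
        ENNReal.toReal_mono (measure_ne_top μ _) (measure_mono hsub)

lemma quantile_bounds {Ω : Type*} [MeasurableSpace Ω] (μ : Measure Ω) [IsProbabilityMeasure μ]
    (Q : Ω → ℝ) (hQ : Measurable Q) (a : ℝ) (ha : 1 < a)
    (D v₀ : ℝ) (hD : 0 < D) (hv₀ : 0 < v₀)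
    (hup : ∀ v, v₀ ≤ v → (μ {ω | v ≤ Q ω}).toReal ≤ D * Real.exp (-v^2/(2*a^2)))
    (c₀ M₀ : ℝ) (hc₀ : 0 < c₀) (hM₀ : 1 ≤ M₀)
    (hlow : ∀ v, M₀ ≤ v → c₀ * Real.exp (-(a^3*v^2)/2) ≤ (μ {ω | Q ω > v}).toReal)
    (t : ℝ → ℝ)
    (ht : ∀ u, t u = sInf {x : ℝ | 1 - 1/u ≤ (μ {ω | Q ω ≤ x}).toReal}) :
    ∀ᶠ u in atTop, Real.sqrt ((2*Real.log u + (2*Real.log c₀ - 1))/a^3) ≤ t u ∧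
      t u ≤ Real.sqrt (2*a^2*Real.log (D*u)) := by
  have ha0 : (0:ℝ) < a := lt_trans one_pos ha
  -- membership criterion
  have hF : ∀ (x u : ℝ), 0 < u →
      ((1 - 1/u ≤ (μ {ω | Q ω ≤ x}).toReal) ↔ (μ {ω | x < Q ω}).toReal ≤ 1/u) := by
    intro x u hu
    have hcompl : {ω | Q ω ≤ x} = {ω | x < Q ω}ᶜ := by
      ext ω; simp [not_lt]
    have hmeas : μ {ω | Q ω ≤ x} = 1 - μ {ω | x < Q ω} := by
      rw [hcompl, measure_compl (measurableSet_lt measurable_const hQ) (measure_ne_top μ _), measure_univ]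
    have htr : (μ {ω | Q ω ≤ x}).toReal = 1 - (μ {ω | x < Q ω}).toReal := by
      rw [hmeas, ENNReal.toReal_sub_of_le prob_le_one ENNReal.one_ne_top, ENNReal.toReal_one]
    rw [htr]
    constructor <;> intro h <;> linarith
  -- eventual conditions
  have hlog : Tendsto Real.log atTop atTop := Real.tendsto_log_atTop
  have hev1 : ∀ᶠ u : ℝ in atTop, (1:ℝ) ≤ u := eventually_ge_atTop 1
  have hev2 : ∀ᶠ u : ℝ in atTop, a^3*M₀^2 ≤ 2*Real.log u + (2*Real.log c₀ - 1) := by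
    have h1 := hlog.eventually_ge_atTop ((a^3*M₀^2 - (2*Real.log c₀ - 1))/2)
    filter_upwards [h1] with u hu
    linarith [hu]
  have hev3 : ∀ᶠ u : ℝ in atTop, v₀^2 ≤ 2*a^2*Real.log (D*u) ∧ 0 ≤ Real.log (D*u) := by
    have hDu : Tendsto (fun u : ℝ => D*u) atTop atTop :=
      (tendsto_id (α := ℝ)).const_mul_atTop hD
    have h1 := (hlog.comp hDu).eventually_ge_atTop (max 0 (v₀^2/(2*a^2)))
    filter_upwards [h1] with u hu
    have h2 : max 0 (v₀^2/(2*a^2)) ≤ Real.log (D*u) := hu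
    constructor
    · have h3 : v₀^2/(2*a^2) ≤ Real.log (D*u) := le_trans (le_max_right _ _) h2
      rw [div_le_iff₀ (by positivity)] at h3
      linarith [h3]
    · exact le_trans (le_max_left _ _) h2
  filter_upwards [hev1, hev2, hev3] with u hu1 hu2 hu3
  have hu0 : (0:ℝ) < u := lt_of_lt_of_le one_pos hu1
  set K₀ : ℝ := 2*Real.log c₀ - 1 with hK₀def
  set y : ℝ := Real.sqrt ((2*Real.log u + K₀)/a^3) with hydef
  set xb : ℝ := Real.sqrt (2*a^2*Real.log (D*u)) with hxbdef
  have hynum : 0 ≤ (2*Real.log u + K₀)/a^3 := by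
    apply div_nonneg _ (by positivity)
    nlinarith [hu2, sq_nonneg M₀, pow_pos ha0 3]
  have hysq : y^2 = (2*Real.log u + K₀)/a^3 := Real.sq_sqrt hynum
  have hyM₀ : M₀ ≤ y := by
    have h1 : M₀^2 ≤ y^2 := by
      rw [hysq, le_div_iff₀ (by positivity)]
      nlinarith [hu2]
    have h2 : (0:ℝ) ≤ M₀ := le_trans zero_le_one hM₀
    nlinarith [Real.sqrt_nonneg ((2*Real.log u + K₀)/a^3)]
  have hy0 : 0 ≤ y := Real.sqrt_nonneg _
  have hxbsq : xb^2 = 2*a^2*Real.log (D*u) := Real.sq_sqrt (by nlinarith [hu3.2])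
  have hxb0 : 0 ≤ xb := Real.sqrt_nonneg _
  have hxbv₀ : v₀ ≤ xb := by
    have h1 : v₀^2 ≤ xb^2 := by rw [hxbsq]; exact hu3.1
    nlinarith [hxb0, hv₀]
  -- the tail prob at y is > 1/u
  have hygt : 1/u < (μ {ω | Q ω > y}).toReal := by
    have h1 := hlow y hyM₀
    have h2 : -(a^3*y^2)/2 = -Real.log u + (-Real.log c₀ + 1/2) := by
      rw [hysq]
      field_simp
      ring
    have h3 : c₀ * Real.exp (-(a^3*y^2)/2) = Real.exp (1/2) * (1/u) := by
      rw [h2, show -Real.log u + (-Real.log c₀ + 1/2) =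
        (-Real.log u) + ((-Real.log c₀) + 1/2) by ring,
        Real.exp_add, Real.exp_add, Real.exp_neg, Real.exp_neg,
        Real.exp_log hu0, Real.exp_log hc₀]
      field_simp
    have h4 : 1/u < c₀ * Real.exp (-(a^3*y^2)/2) := by
      rw [h3]
      have h5 : 1 < Real.exp (1/2) := by
        rw [← Real.exp_zero]
        exact Real.exp_lt_exp.mpr (by norm_num)
      have h6 : 0 < 1/u := by positivity
      nlinarith
    linarith
  -- all elements of the quantile set are ≥ y
  have hSlb : ∀ x ∈ {x : ℝ | 1 - 1/u ≤ (μ {ω | Q ω ≤ x}).toReal}, y ≤ x := by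
    intro x hx
    rw [Set.mem_setOf_eq, hF x u hu0] at hx
    by_contra hcon
    push_neg at hcon
    have h1 : (μ {ω | Q ω > y}).toReal ≤ (μ {ω | x < Q ω}).toReal := by
      apply ENNReal.toReal_mono (measure_ne_top μ _)
      apply measure_mono
      intro ω hω
      exact lt_trans hcon hω
    linarith [hygt]
  -- xb is in the quantile set
  have hxbmem : xb ∈ {x : ℝ | 1 - 1/u ≤ (μ {ω | Q ω ≤ x}).toReal} := by
    rw [Set.mem_setOf_eq, hF xb u hu0]
    have h1 : (μ {ω | xb < Q ω}).toReal ≤ (μ {ω | xb ≤ Q ω}).toReal := by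
      apply ENNReal.toReal_mono (measure_ne_top μ _)
      exact measure_mono (fun ω (hω : xb < Q ω) => le_of_lt hω)
    have h2 := hup xb hxbv₀
    have h3 : D * Real.exp (-xb^2/(2*a^2)) = 1/u := by
      rw [hxbsq, show -(2*a^2*Real.log (D*u))/(2*a^2) = -Real.log (D*u) by field_simp,
        Real.exp_neg, Real.exp_log (by positivity)]
      field_simp
    linarith
  rw [ht u]
  constructor
  · exact le_csInf ⟨xb, hxbmem⟩ hSlb
  · exact csInf_le ⟨y, hSlb⟩ hxbmem
set_option maxHeartbeats 2000000 in
/-- Asymptotic independence of two proportional-reinsurance portfolios of independent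
Gaussian-like risks: P(Qₙ > tᵤ, Wₙ > tᵤ*) / P(Qₙ > tᵤ) → 0 as u → ∞. -/
theorem portfolios_asymptotic_independence {Ω : Type*} [MeasurableSpace Ω] (μ : Measure Ω)
    [IsProbabilityMeasure μ] (n : ℕ) (hn : 0 < n)
    (X : Fin n → Ω → ℝ) (hm : ∀ i, Measurable (X i))
    (hind : iIndepFun X μ)
    (L : Fin n → ℝ → ℝ) (α : Fin n → ℝ)
    (hLpos : ∀ i, ∀ u > 0, 0 < L i u)
    (hsv : ∀ i, ∀ t > 0, Tendsto (fun u => L i (t * u) / L i u) atTop (𝓝 1))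
    (htail : ∀ i, Tendsto (fun u : ℝ => (μ {ω | X i ω > u}).toReal /
        (L i u * u ^ (α i) * Real.exp (-u ^ 2 / 2))) atTop (𝓝 1))
    (lam lams : Fin n → ℝ) (hlam : ∀ i, 0 < lam i) (hlams : ∀ i, 0 < lams i)
    (hnorm : ∑ i, lam i ^ 2 = 1) (hnorms : ∑ i, lams i ^ 2 = 1)
    (ρ : ℝ) (hρ : ρ = ∑ i, lam i * lams i) (hρ0 : 0 ≤ ρ) (hρ1 : ρ < 1)
    (t ts : ℝ → ℝ)
    (ht : ∀ u, t u = sInf {x : ℝ | 1 - 1 / u ≤ (μ {ω | (∑ i, lam i * X i ω) ≤ x}).toReal})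
    (hts : ∀ u, ts u = sInf {x : ℝ | 1 - 1 / u ≤ (μ {ω | (∑ i, lams i * X i ω) ≤ x}).toReal}) :
    Tendsto (fun u : ℝ =>
        (μ {ω | (∑ i, lam i * X i ω) > t u ∧ (∑ i, lams i * X i ω) > ts u}).toReal /
          (μ {ω | (∑ i, lam i * X i ω) > t u}).toReal)
      atTop (𝓝 0) := by
  have hne : Nonempty (Fin n) := ⟨⟨0, hn⟩⟩
  have hρ2 : (0:ℝ) < 1 + ρ := by linarith
  -- choose the slack parameter a
  set r : ℝ := 2/(1+ρ) with hrdef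
  have hr1 : 1 < r := by rw [hrdef, lt_div_iff₀ hρ2]; linarith
  have hr0 : (0:ℝ) < r := lt_trans one_pos hr1
  set a : ℝ := r ^ ((1:ℝ)/20) with hadef
  have ha1 : 1 < a := by
    rw [hadef]
    exact Real.one_lt_rpow_iff_of_pos hr0 |>.mpr (Or.inl ⟨hr1, by norm_num⟩)
  have ha0 : (0:ℝ) < a := lt_trans one_pos ha1
  have ha10 : a^10 * (1+ρ) < 2 := by
    have h1 : a^10 = r ^ ((1:ℝ)/2) := by
      rw [hadef, ← Real.rpow_natCast (r ^ ((1:ℝ)/20)) 10, ← Real.rpow_mul hr0.le]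
      norm_num
    have h2 : r ^ ((1:ℝ)/2) < r := by
      nth_rewrite 2 [← Real.rpow_one r]
      exact Real.rpow_lt_rpow_of_exponent_lt hr1 (by norm_num)
    have h3 : a^10 < r := h1 ▸ h2
    calc a^10*(1+ρ) < r*(1+ρ) := by nlinarith
      _ = 2 := by rw [hrdef]; field_simp
  -- per-variable tail sandwich
  have hP0 : ∀ i, ∀ x : ℝ, 0 ≤ (μ {ω | X i ω > x}).toReal := fun i x => ENNReal.toReal_nonneg
  have hP1 : ∀ i, ∀ x : ℝ, (μ {ω | X i ω > x}).toReal ≤ 1 := by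
    intro i x
    rw [← ENNReal.toReal_one]
    exact ENNReal.toReal_mono ENNReal.one_ne_top prob_le_one
  have hPanti : ∀ i, Antitone (fun x => (μ {ω | X i ω > x}).toReal) := by
    intro i x y hxy
    apply ENNReal.toReal_mono (measure_ne_top μ _)
    exact measure_mono (fun ω hω => lt_of_le_of_lt hxy hω)
  have htails := fun i => gauss_tail_bounds (L i) (α i) (fun x => (μ {ω | X i ω > x}).toReal)
    (hLpos i) (hsv i 2 (by norm_num)) (htail i) (hP0 i) (hP1 i) (hPanti i) a ha1
  choose Mt cl Cl hprop using htails
  have hcl : ∀ i, 0 < cl i := fun i => (hprop i).1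
  have hCl : ∀ i, 0 < Cl i := fun i => (hprop i).2.1
  have hMt : ∀ i, 1 ≤ Mt i := fun i => (hprop i).2.2.1
  have hlowtail : ∀ i, ∀ x, Mt i ≤ x →
      cl i * Real.exp (-(a*x^2)/2) ≤ (μ {ω | X i ω > x}).toReal :=
    fun i x hx => ((hprop i).2.2.2 x hx).1
  have huptail : ∀ i, ∀ x, Mt i ≤ x →
      (μ {ω | X i ω > x}).toReal ≤ Cl i * Real.exp (-x^2/(2*a)) :=
    fun i x hx => ((hprop i).2.2.2 x hx).2
  -- mgf bounds
  have hmg := fun i => exp_lintegral_bound μ (X i) (hm i) a (Cl i) (Mt i) ha1 (hCl i)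
    (le_trans zero_le_one (hMt i)) (huptail i)
  choose B hB hBmgf using hmg
  -- Chernoff upper bounds
  obtain ⟨Dq, vq, hDq, hvq, hupQ⟩ := weighted_sum_tail_upper μ X hm hind lam hlam
    (Finset.sum_pos (fun i _ => hlam i) Finset.univ_nonempty)
    (by rw [hnorm]; exact one_pos) a ha1 B hB hBmgf
  simp only [hnorm, mul_one] at hupQ
  have hsum2 : ∑ i, (lam i + lams i)^2 = 2 + 2*ρ := by
    simp_rw [add_sq]
    rw [Finset.sum_add_distrib, Finset.sum_add_distrib, hnorm, hnorms]
    have h1 : ∀ i : Fin n, 2 * lam i * lams i = 2 * (lam i * lams i) := fun i => by ring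
    simp_rw [h1]
    rw [← Finset.mul_sum, ← hρ]
    ring
  obtain ⟨Ds, vs, hDs, hvs, hupS⟩ := weighted_sum_tail_upper μ X hm hind
    (fun i => lam i + lams i) (fun i => show 0 < lam i + lams i by linarith [hlam i, hlams i])
    (Finset.sum_pos (fun i _ => show 0 < lam i + lams i by linarith [hlam i, hlams i])
      Finset.univ_nonempty)
    (by show (0:ℝ) < ∑ i, (lam i + lams i)^2; rw [hsum2]; linarith) a ha1 B hB hBmgf
  simp only [hsum2] at hupS
  -- lower bounds
  obtain ⟨cq, Mq, hcq, hMq, hlowQ⟩ := weighted_sum_tail_lower μ hn X hm hind lam hlam hnorm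
    a ha1 cl Mt hcl hMt hlowtail
  obtain ⟨cw, Mw, hcw, hMw, hlowW⟩ := weighted_sum_tail_lower μ hn X hm hind lams hlams hnorms
    a ha1 cl Mt hcl hMt hlowtail
  set c₀ : ℝ := min cq cw with hc₀def
  set M₀ : ℝ := max Mq Mw with hM₀def
  have hc₀ : 0 < c₀ := lt_min hcq hcw
  have hM₀ : 1 ≤ M₀ := le_trans hMq (le_max_left _ _)
  have hlowQ' : ∀ v, M₀ ≤ v →
      c₀ * Real.exp (-(a^3*v^2)/2) ≤ (μ {ω | (∑ i, lam i * X i ω) > v}).toReal := by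
    intro v hv
    refine le_trans ?_ (hlowQ v (le_trans (le_max_left _ _) hv))
    exact mul_le_mul_of_nonneg_right (min_le_left _ _) (Real.exp_pos _).le
  have hlowW' : ∀ v, M₀ ≤ v →
      c₀ * Real.exp (-(a^3*v^2)/2) ≤ (μ {ω | (∑ i, lams i * X i ω) > v}).toReal := by
    intro v hv
    refine le_trans ?_ (hlowW v (le_trans (le_max_right _ _) hv))
    exact mul_le_mul_of_nonneg_right (min_le_right _ _) (Real.exp_pos _).le
  -- quantile bounds
  have hqt := quantile_bounds μ (fun ω => ∑ i, lam i * X i ω)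
    (by exact Finset.measurable_sum _ (fun i _ => (hm i).const_mul (lam i)))
    a ha1 Dq vq hDq hvq hupQ c₀ M₀ hc₀ hM₀ hlowQ' t ht
  -- for ts we need an upper bound on W tails as well
  obtain ⟨Dw, vw, hDw, hvw, hupW⟩ := weighted_sum_tail_upper μ X hm hind lams hlams
    (Finset.sum_pos (fun i _ => hlams i) Finset.univ_nonempty)
    (by rw [hnorms]; exact one_pos) a ha1 B hB hBmgf
  simp only [hnorms, mul_one] at hupW
  have hqts := quantile_bounds μ (fun ω => ∑ i, lams i * X i ω)
    (by exact Finset.measurable_sum _ (fun i _ => (hm i).const_mul (lams i)))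
    a ha1 Dw vw hDw hvw hupW c₀ M₀ hc₀ hM₀ hlowW' ts hts
  -- the growing lower quantile bound
  set K₀ : ℝ := 2*Real.log c₀ - 1 with hK₀def
  set Y : ℝ → ℝ := fun u => Real.sqrt ((2*Real.log u + K₀)/a^3) with hYdef
  have hgtend : Tendsto (fun u : ℝ => (2*Real.log u + K₀)/a^3) atTop atTop := by
    apply Tendsto.atTop_div_const (by positivity)
    apply tendsto_atTop_add_const_right
    exact Real.tendsto_log_atTop.const_mul_atTop (by norm_num)
  have hYtend : Tendsto Y atTop atTop := by
    rw [tendsto_atTop]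
    intro b
    filter_upwards [hgtend.eventually_ge_atTop (b^2)] with u hu
    calc b ≤ |b| := le_abs_self b
      _ = Real.sqrt (b^2) := (Real.sqrt_sq_eq_abs b).symm
      _ ≤ Y u := Real.sqrt_le_sqrt hu
  -- the decay exponent
  set ε : ℝ := 2/(a^5*(1+ρ)) - a^5 with hεdef
  have hε : 0 < ε := by
    rw [hεdef, sub_pos, lt_div_iff₀ (by positivity)]
    nlinarith [pow_pos ha0 5, pow_pos ha0 10]
  set C2 : ℝ := a^5*Real.log Dq - K₀/(a^5*(1+ρ)) with hC2def
  -- the dominating function tends to zero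
  have hGtend : Tendsto (fun u : ℝ => (Ds/c₀) * Real.exp (C2 - ε*Real.log u)) atTop (𝓝 0) := by
    have h1 : Tendsto (fun u : ℝ => ε * Real.log u) atTop atTop :=
      Real.tendsto_log_atTop.const_mul_atTop hε
    have h2 : Tendsto (fun u : ℝ => -(ε * Real.log u)) atTop atBot :=
      tendsto_neg_atTop_atBot.comp h1
    have h3 : Tendsto (fun u : ℝ => C2 + -(ε * Real.log u)) atTop atBot :=
      tendsto_atBot_add_const_left _ C2 h2
    have h4 : Tendsto (fun u : ℝ => Real.exp (C2 - ε*Real.log u)) atTop (𝓝 0) := by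
      have := Real.tendsto_exp_atBot.comp h3
      refine this.congr (fun u => by rw [Function.comp_apply, sub_eq_add_neg])
    have h5 := h4.const_mul (Ds/c₀)
    rwa [mul_zero] at h5
  -- final squeeze
  apply tendsto_of_tendsto_of_tendsto_of_le_of_le' tendsto_const_nhds hGtend
  · filter_upwards with u
    positivity
  · filter_upwards [hqt, hqts, hYtend.eventually_ge_atTop (max vs 1),
      hYtend.eventually_ge_atTop M₀, hgtend.eventually_ge_atTop 0,
      eventually_gt_atTop 0,
      ((Real.tendsto_log_atTop.comp ((tendsto_id (α := ℝ)).const_mul_atTop hDq)).comp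
        (tendsto_id (α := ℝ))).eventually_ge_atTop 0] with u hqtu hqtsu hYvs hYM₀ hg0 hu0 hlogq
    obtain ⟨hty, htx⟩ := hqtu
    obtain ⟨htsy, _⟩ := hqtsu
    have hYvs1 : vs ≤ Y u := le_trans (le_max_left _ _) hYvs
    have hY1 : (1:ℝ) ≤ Y u := le_trans (le_max_right _ _) hYvs
    have hY0 : (0:ℝ) ≤ Y u := le_trans zero_le_one hY1
    have hYsq : Y u ^ 2 = (2*Real.log u + K₀)/a^3 := Real.sq_sqrt hg0
    have hlogq' : (0:ℝ) ≤ Real.log (Dq * u) := hlogq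
    set tb : ℝ := Real.sqrt (2*a^2*Real.log (Dq*u)) with htbdef
    have htbsq : tb^2 = 2*a^2*Real.log (Dq*u) := Real.sq_sqrt (by positivity)
    -- numerator bound
    have hsumQW : ∀ ω, ∑ i, (lam i + lams i) * X i ω
        = (∑ i, lam i * X i ω) + (∑ i, lams i * X i ω) := by
      intro ω
      simp_rw [add_mul]
      rw [Finset.sum_add_distrib]
    have hnum : (μ {ω | (∑ i, lam i * X i ω) > t u ∧ (∑ i, lams i * X i ω) > ts u}).toReal
        ≤ Ds * Real.exp (-(2*Y u)^2/(2*a^2*(2+2*ρ))) := by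
      have hsub : {ω | (∑ i, lam i * X i ω) > t u ∧ (∑ i, lams i * X i ω) > ts u}
          ⊆ {ω | t u + ts u ≤ ∑ i, (lam i + lams i) * X i ω} := by
        intro ω hω
        obtain ⟨h1, h2⟩ := hω
        rw [Set.mem_setOf_eq, hsumQW ω]
        exact le_of_lt (add_lt_add h1 h2)
      have h1 : (μ {ω | (∑ i, lam i * X i ω) > t u ∧ (∑ i, lams i * X i ω) > ts u}).toReal
          ≤ (μ {ω | t u + ts u ≤ ∑ i, (lam i + lams i) * X i ω}).toReal :=
        ENNReal.toReal_mono (measure_ne_top μ _) (measure_mono hsub)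
      have h2y : 2 * Y u ≤ t u + ts u := by linarith only [hty, htsy, hY0]
      have h2 := hupS (t u + ts u) (by linarith only [hYvs1, hty, htsy, hY0])
      have h3 : Real.exp (-(t u + ts u)^2/(2*a^2*(2+2*ρ)))
          ≤ Real.exp (-(2*Y u)^2/(2*a^2*(2+2*ρ))) := by
        apply Real.exp_le_exp.mpr
        have h4 : (2*Y u)^2 ≤ (t u + ts u)^2 :=
          pow_le_pow_left₀ (by linarith only [hY0]) h2y 2
        have h5 : (0:ℝ) < 2*a^2*(2+2*ρ) := mul_pos (by positivity) (by linarith only [hρ0])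
        rw [div_le_div_iff₀ h5 h5]
        exact mul_le_mul_of_nonneg_right (neg_le_neg h4) h5.le
      calc (μ {ω | (∑ i, lam i * X i ω) > t u ∧ (∑ i, lams i * X i ω) > ts u}).toReal
          ≤ (μ {ω | t u + ts u ≤ ∑ i, (lam i + lams i) * X i ω}).toReal := h1
        _ ≤ Ds * Real.exp (-(t u + ts u)^2/(2*a^2*(2+2*ρ))) := h2
        _ ≤ Ds * Real.exp (-(2*Y u)^2/(2*a^2*(2+2*ρ))) :=
            mul_le_mul_of_nonneg_left h3 hDs.le
    -- denominator bound
    have hden : c₀ * Real.exp (-(a^3*tb^2)/2)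
        ≤ (μ {ω | (∑ i, lam i * X i ω) > t u}).toReal := by
      have h1 := hlowQ' (t u) (le_trans hYM₀ hty)
      have h2 : Real.exp (-(a^3*tb^2)/2) ≤ Real.exp (-(a^3*(t u)^2)/2) := by
        apply Real.exp_le_exp.mpr
        have h3 : (t u)^2 ≤ tb^2 := by
          have ht0 : 0 ≤ t u := le_trans hY0 hty
          exact pow_le_pow_left₀ ht0 htx 2
        have h6 : a^3*(t u)^2 ≤ a^3*tb^2 :=
          mul_le_mul_of_nonneg_left h3 (pow_pos ha0 3).le
        linarith only [h6]
      exact le_trans (mul_le_mul_of_nonneg_left h2 hc₀.le) h1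
    -- combine
    have hDBpos : 0 < c₀ * Real.exp (-(a^3*tb^2)/2) := mul_pos hc₀ (Real.exp_pos _)
    have hratio : (μ {ω | (∑ i, lam i * X i ω) > t u ∧ (∑ i, lams i * X i ω) > ts u}).toReal /
          (μ {ω | (∑ i, lam i * X i ω) > t u}).toReal
        ≤ (Ds * Real.exp (-(2*Y u)^2/(2*a^2*(2+2*ρ)))) / (c₀ * Real.exp (-(a^3*tb^2)/2)) :=
      div_le_div₀ (by positivity) hnum hDBpos hden
    refine le_trans hratio (le_of_eq ?_)
    rw [show Ds * Real.exp (-(2*Y u)^2/(2*a^2*(2+2*ρ))) / (c₀ * Real.exp (-(a^3*tb^2)/2))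
      = (Ds/c₀) * (Real.exp (-(2*Y u)^2/(2*a^2*(2+2*ρ))) / Real.exp (-(a^3*tb^2)/2)) by ring,
      ← Real.exp_sub]
    congr 1
    rw [show (-(2*Y u)^2/(2*a^2*(2+2*ρ)) : ℝ) = -(4*(Y u^2))/(2*a^2*(2+2*ρ)) by ring, hYsq,
      htbsq, Real.log_mul (ne_of_gt hDq) (ne_of_gt hu0), hC2def, hεdef, hK₀def]
    congr 1
    field_simp
    ring
end
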